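/- arXiv:1110.6585 — 7 statements merged into one kernel-verified Lean document; each statement's English description precedes it below -/
import Mathlib

section
/- Let Γ be an abelian group, E a Γ-graded division ring, δ̄ = (δ₁,…,δₙ) ∈ Γⁿ, and S = Mₙ(E)(δ̄). Then every homogeneous unit A ∈ S_h* has a unique strict Bruhat normal form A = T·U·P_π·V. Moreover, in this decomposition T, U·P_π, and V are homogeneous matrices with deg(T) = deg(V) = 0 and deg(U·P_π) = deg(A), and T is a product of homogeneous elementary matrices (all of degree 0). -/
/-- The degree-`lam` homogeneous component of the matrix ring `Mₙ(E)(δ̄)` over a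
`Γ`-graded ring `E`, with the grading shifted by `δ̄`: a matrix lies in it iff its
`(i,j)`-entry lies in `E_{lam + δⱼ - δᵢ}` for all `i, j`. -/
def MatrixGrade {Γ E : Type*} [AddCommGroup Γ] [Ring E] (𝒜 : Γ → AddSubgroup E)
    {ι : Type*} (δ : ι → Γ) (lam : Γ) : Set (Matrix ι ι E) :=
  {A | ∀ i j, A i j ∈ 𝒜 (lam + δ j - δ i)}

/-- A matrix is unipotent lower triangular if all entries above the diagonal vanish and
all diagonal entries equal `1`. -/
def UnipotentLower {R : Type*} [Zero R] [One R] {n : ℕ}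
    (T : Matrix (Fin n) (Fin n) R) : Prop :=
  (∀ i j : Fin n, i < j → T i j = 0) ∧ ∀ i, T i i = 1

/-- A matrix is unipotent upper triangular if all entries below the diagonal vanish and
all diagonal entries equal `1`. -/
def UnipotentUpper {R : Type*} [Zero R] [One R] {n : ℕ}
    (V : Matrix (Fin n) (Fin n) R) : Prop :=
  (∀ i j : Fin n, j < i → V i j = 0) ∧ ∀ i, V i i = 1

theorem Equiv.Perm.inv_apply_self {α : Type*} (f : Equiv.Perm α) (x : α) : f⁻¹ (f x) = x :=
  Equiv.symm_apply_apply f x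

theorem Equiv.Perm.apply_inv_self {α : Type*} (f : Equiv.Perm α) (x : α) : f (f⁻¹ x) = x :=
  Equiv.apply_symm_apply f x

namespace BruhatAux
open Matrix Finset

variable {Γ E : Type*} [AddCommGroup Γ] [DecidableEq Γ] [Ring E]

section NoGrading

lemma permMatrix_apply {n : ℕ} (π : Equiv.Perm (Fin n)) (i j : Fin n) :
    π.permMatrix E i j = if π i = j then 1 else 0 := by
  simp [Equiv.Perm.permMatrix, PEquiv.toMatrix_apply, Equiv.toPEquiv_apply]

lemma permMatrix_mul {n : ℕ} (π : Equiv.Perm (Fin n)) (X : Matrix (Fin n) (Fin n) E)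
    (i j : Fin n) : (π.permMatrix E * X) i j = X (π i) j := by
  rw [Matrix.mul_apply]
  rw [Finset.sum_eq_single (π i)]
  · rw [permMatrix_apply]; simp
  · intro k _ hk; rw [permMatrix_apply, if_neg (fun h => hk h.symm), zero_mul]
  · simp

lemma mul_permMatrix {n : ℕ} (X : Matrix (Fin n) (Fin n) E) (π : Equiv.Perm (Fin n))
    (i j : Fin n) : (X * π.permMatrix E) i j = X i (π⁻¹ j) := by
  rw [Matrix.mul_apply]
  rw [Finset.sum_eq_single (π⁻¹ j)]
  · rw [permMatrix_apply, if_pos (by simp), mul_one]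
  · intro k _ hk
    rw [permMatrix_apply, if_neg (fun h => hk (by rw [← h]; simp)), mul_zero]
  · simp

lemma permMatrix_conj {n : ℕ} (π : Equiv.Perm (Fin n)) (V : Matrix (Fin n) (Fin n) E)
    (i j : Fin n) : (π.permMatrix E * V * (π⁻¹).permMatrix E) i j = V (π i) (π j) := by
  rw [mul_permMatrix, permMatrix_mul, inv_inv]

lemma unipLower_mul {n : ℕ} {X Y : Matrix (Fin n) (Fin n) E}
    (hX : UnipotentLower X) (hY : UnipotentLower Y) : UnipotentLower (X * Y) := by
  constructor
  · intro i j hij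
    rw [Matrix.mul_apply]
    apply Finset.sum_eq_zero
    intro k _
    rcases lt_or_ge i k with h | h
    · rw [hX.1 i k h, zero_mul]
    · rw [hY.1 k j (lt_of_le_of_lt h hij), mul_zero]
  · intro i
    rw [Matrix.mul_apply, Finset.sum_eq_single i]
    · rw [hX.2, hY.2, one_mul]
    · intro k _ hk
      rcases lt_or_gt_of_ne hk with h | h
      · rw [hY.1 k i h, mul_zero]
      · rw [hX.1 i k h, zero_mul]
    · simp

lemma unipUpper_mul {n : ℕ} {X Y : Matrix (Fin n) (Fin n) E}
    (hX : UnipotentUpper X) (hY : UnipotentUpper Y) : UnipotentUpper (X * Y) := by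
  constructor
  · intro i j hij
    rw [Matrix.mul_apply]
    apply Finset.sum_eq_zero
    intro k _
    rcases lt_or_ge k i with h | h
    · rw [hX.1 i k h, zero_mul]
    · rw [hY.1 k j (lt_of_lt_of_le hij h), mul_zero]
  · intro i
    rw [Matrix.mul_apply, Finset.sum_eq_single i]
    · rw [hX.2, hY.2, one_mul]
    · intro k _ hk
      rcases lt_or_gt_of_ne hk with h | h
      · rw [hX.1 i k h, zero_mul]
      · rw [hY.1 k i h, mul_zero]
    · simp

lemma pow_eq_zero_of_strict {m : ℕ} (N : Matrix (Fin m) (Fin m) E) (f : Fin m → ℕ)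
    (hf : ∀ i, f i < m) (h : ∀ i j, N i j ≠ 0 → f i + 1 ≤ f j) : N ^ m = 0 := by
  have key : ∀ k (i j : Fin m), (N ^ k) i j ≠ 0 → f i + k ≤ f j := by
    intro k
    induction k with
    | zero =>
      intro i j hij
      rw [pow_zero] at hij
      by_cases hij' : i = j
      · subst hij'; omega
      · exact absurd (Matrix.one_apply_ne hij') hij
    | succ k ih =>
      intro i j hij
      rw [pow_succ, Matrix.mul_apply] at hij
      obtain ⟨l, -, hl⟩ := Finset.exists_ne_zero_of_sum_ne_zero hij
      have h1 := ih i l (left_ne_zero_of_mul hl)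
      have h2 := h l j (right_ne_zero_of_mul hl)
      omega
  ext i j
  simp only [Matrix.zero_apply]
  by_contra hij
  have := key m i j hij
  have := hf j
  omega

lemma strict_pow_support {m : ℕ} (N : Matrix (Fin m) (Fin m) E)
    (r : Fin m → Fin m → Prop) (htrans : ∀ {a b c}, r a b → r b c → r a c)
    (hsupp : ∀ i j, N i j ≠ 0 → r i j) :
    ∀ k, 1 ≤ k → ∀ i j, (N ^ k) i j ≠ 0 → r i j := by
  intro k
  induction k with
  | zero => omega
  | succ k ih =>
    intro _ i j hij
    rcases Nat.eq_or_lt_of_le (Nat.one_le_iff_ne_zero.mpr (Nat.succ_ne_zero k)) with hk | hk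
    · rw [pow_succ] at hij
      rcases Nat.eq_zero_or_pos k with h0 | h0
      · subst h0; rw [pow_zero, one_mul] at hij; exact hsupp i j hij
      · rw [Matrix.mul_apply] at hij
        obtain ⟨l, -, hl⟩ := Finset.exists_ne_zero_of_sum_ne_zero hij
        exact htrans (ih h0 i l (left_ne_zero_of_mul hl)) (hsupp l j (right_ne_zero_of_mul hl))
    · rw [pow_succ] at hij
      rcases Nat.eq_zero_or_pos k with h0 | h0
      · subst h0; rw [pow_zero, one_mul] at hij; exact hsupp i j hij
      · rw [Matrix.mul_apply] at hij
        obtain ⟨l, -, hl⟩ := Finset.exists_ne_zero_of_sum_ne_zero hij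
        exact htrans (ih h0 i l (left_ne_zero_of_mul hl)) (hsupp l j (right_ne_zero_of_mul hl))

lemma geom_inv {m : ℕ} (N : Matrix (Fin m) (Fin m) E) (hN : N ^ m = 0) :
    (1 + N) * (∑ k ∈ Finset.range m, (-N) ^ k) = 1 ∧
      (∑ k ∈ Finset.range m, (-N) ^ k) * (1 + N) = 1 := by
  have hNm : (-N) ^ m = 0 := by
    rw [neg_pow, hN, mul_zero]
  constructor
  · have := mul_geom_sum (-N) m
    rw [hNm, zero_sub] at this
    have h2 : (1 : Matrix (Fin m) (Fin m) E) + N = -(-N - 1) := by rw [neg_sub, sub_neg_eq_add]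
    rw [h2, neg_mul, this, neg_neg]
  · have := geom_sum_mul (-N) m
    rw [hNm, zero_sub] at this
    have h2 : (1 : Matrix (Fin m) (Fin m) E) + N = -(-N - 1) := by rw [neg_sub, sub_neg_eq_add]
    rw [h2, mul_neg, this, neg_neg]


def expand {m : ℕ} (p q : Fin (m + 1)) (u : E) (X : Matrix (Fin m) (Fin m) E) :
    Matrix (Fin (m + 1)) (Fin (m + 1)) E :=
  Matrix.of fun i j => match finSuccEquiv' p i, finSuccEquiv' q j with
    | none, none => u
    | some a, some b => X a b
    | _, _ => 0

lemma expand_pivot {m : ℕ} (p q : Fin (m + 1)) (u : E) (X : Matrix (Fin m) (Fin m) E) :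
    expand p q u X p q = u := by
  show (match finSuccEquiv' p p, finSuccEquiv' q q with
    | none, none => u
    | some a, some b => X a b
    | _, _ => 0) = u
  rw [finSuccEquiv'_at, finSuccEquiv'_at]

lemma expand_sub {m : ℕ} (p q : Fin (m + 1)) (u : E) (X : Matrix (Fin m) (Fin m) E)
    (a b : Fin m) : expand p q u X (p.succAbove a) (q.succAbove b) = X a b := by
  show (match finSuccEquiv' p (p.succAbove a), finSuccEquiv' q (q.succAbove b) with
    | none, none => u
    | some a, some b => X a b
    | _, _ => 0) = X a b
  rw [finSuccEquiv'_succAbove, finSuccEquiv'_succAbove]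

lemma expand_row {m : ℕ} (p q : Fin (m + 1)) (u : E) (X : Matrix (Fin m) (Fin m) E)
    (b : Fin m) : expand p q u X p (q.succAbove b) = 0 := by
  show (match finSuccEquiv' p p, finSuccEquiv' q (q.succAbove b) with
    | none, none => u
    | some a, some b => X a b
    | _, _ => (0 : E)) = (0 : E)
  rw [finSuccEquiv'_at, finSuccEquiv'_succAbove]

lemma expand_col {m : ℕ} (p q : Fin (m + 1)) (u : E) (X : Matrix (Fin m) (Fin m) E)
    (a : Fin m) : expand p q u X (p.succAbove a) q = 0 := by
  show (match finSuccEquiv' p (p.succAbove a), finSuccEquiv' q q with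
    | none, none => u
    | some a, some b => X a b
    | _, _ => (0 : E)) = (0 : E)
  rw [finSuccEquiv'_succAbove, finSuccEquiv'_at]

lemma expand_mul {m : ℕ} (p q r : Fin (m + 1)) (u v : E)
    (X Y : Matrix (Fin m) (Fin m) E) :
    expand p q u X * expand q r v Y = expand p r (u * v) (X * Y) := by
  ext i j
  rw [Matrix.mul_apply, Fin.sum_univ_succAbove _ q]
  rcases eq_or_ne i p with hi | hi
  · rcases eq_or_ne j r with hj | hj
    · rw [hi, hj, expand_pivot p q, expand_pivot q r, expand_pivot p r,
        Finset.sum_eq_zero (fun c _ => by rw [expand_row p q, zero_mul]), add_zero]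
    · obtain ⟨b, hb⟩ := Fin.exists_succAbove_eq hj
      rw [hi, ← hb, expand_pivot p q, expand_row q r, mul_zero, expand_row p r,
        Finset.sum_eq_zero (fun c _ => by rw [expand_row p q, zero_mul]), add_zero]
  · obtain ⟨a, ha⟩ := Fin.exists_succAbove_eq hi
    rcases eq_or_ne j r with hj | hj
    · rw [← ha, hj, expand_col p q, zero_mul, expand_col p r,
        Finset.sum_eq_zero (fun c _ => by rw [expand_col q r, mul_zero]), add_zero]
    · obtain ⟨b, hb⟩ := Fin.exists_succAbove_eq hj
      rw [← ha, ← hb, expand_col p q, zero_mul, expand_sub p r, Matrix.mul_apply,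
        Finset.sum_congr rfl (fun c _ => by rw [expand_sub p q, expand_sub q r]), zero_add]

lemma unipLower_inv {m : ℕ} {T : Matrix (Fin m) (Fin m) E} (hT : UnipotentLower T) :
    ∃ S, UnipotentLower S ∧ T * S = 1 ∧ S * T = 1 := by
  set N : Matrix (Fin m) (Fin m) E := T - 1 with hNdef
  have hsupp : ∀ i j, N i j ≠ 0 → j < i := by
    intro i j hij
    by_contra hc
    push_neg at hc
    rcases eq_or_lt_of_le hc with h | h
    · apply hij
      simp only [hNdef, Matrix.sub_apply]
      rw [← h, hT.2, Matrix.one_apply_eq, sub_self]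
    · apply hij
      simp only [hNdef, Matrix.sub_apply]
      rw [hT.1 i j h, Matrix.one_apply_ne (ne_of_lt h), sub_zero]
  have hpow : N ^ m = 0 := by
    apply pow_eq_zero_of_strict N (fun i => m - 1 - (i : ℕ))
    · intro i; have := i.2; omega
    · intro i j hij
      have := hsupp i j hij
      have h1 := i.2
      have h2 := j.2
      have : (j : ℕ) < (i : ℕ) := this
      omega
  have hTN : T = 1 + N := by rw [hNdef]; abel
  set S : Matrix (Fin m) (Fin m) E := ∑ k ∈ Finset.range m, (-N) ^ k with hSdef
  have hgi := geom_inv N hpow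
  refine ⟨S, ?_, by rw [hTN]; exact hgi.1, by rw [hTN]; exact hgi.2⟩
  have hpowsupp := strict_pow_support (-N) (fun a b => (b : Fin m) < a)
    (fun hab hbc => lt_trans hbc hab)
    (fun i j hij => hsupp i j (by simpa using hij))
  constructor
  · intro i j hij
    rw [hSdef, Matrix.sum_apply]
    apply Finset.sum_eq_zero
    intro k hk
    rcases Nat.eq_zero_or_pos k with h0 | h0
    · subst h0; rw [pow_zero]; exact Matrix.one_apply_ne (ne_of_lt hij)
    · by_contra hc
      exact absurd (hpowsupp k h0 i j hc) (not_lt.mpr (le_of_lt hij))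
  · intro i
    rw [hSdef, Matrix.sum_apply, Finset.sum_eq_single 0]
    · rw [pow_zero, Matrix.one_apply_eq]
    · intro k hk h0
      by_contra hc
      exact absurd (hpowsupp k (Nat.pos_of_ne_zero h0) i i hc) (lt_irrefl i)
    · intro h; exact absurd (Finset.mem_range.mpr i.pos) h

lemma unipUpper_inv {m : ℕ} {V : Matrix (Fin m) (Fin m) E}
    (hV : UnipotentUpper V) :
    ∃ S, UnipotentUpper S ∧ V * S = 1 ∧ S * V = 1 := by
  set N : Matrix (Fin m) (Fin m) E := V - 1 with hNdef
  have hsupp : ∀ i j, N i j ≠ 0 → i < j := by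
    intro i j hij
    by_contra hc
    push_neg at hc
    rcases eq_or_lt_of_le hc with h | h
    · apply hij
      simp only [hNdef, Matrix.sub_apply]
      rw [h, hV.2, Matrix.one_apply_eq, sub_self]
    · apply hij
      simp only [hNdef, Matrix.sub_apply]
      rw [hV.1 i j h, Matrix.one_apply_ne (ne_of_gt h), sub_zero]
  have hpow : N ^ m = 0 := by
    apply pow_eq_zero_of_strict N (fun i => (i : ℕ))
    · intro i; exact i.2
    · intro i j hij; exact hsupp i j hij
  have hTN : V = 1 + N := by rw [hNdef]; abel
  set S : Matrix (Fin m) (Fin m) E := ∑ k ∈ Finset.range m, (-N) ^ k with hSdef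
  have hgi := geom_inv N hpow
  refine ⟨S, ?_, by rw [hTN]; exact hgi.1, by rw [hTN]; exact hgi.2⟩
  have hpowsupp := strict_pow_support (-N) (fun a b => (a : Fin m) < b)
    (fun hab hbc => lt_trans hab hbc)
    (fun i j hij => hsupp i j (by simpa using hij))
  constructor
  · intro i j hij
    rw [hSdef, Matrix.sum_apply]
    apply Finset.sum_eq_zero
    intro k hk
    rcases Nat.eq_zero_or_pos k with h0 | h0
    · subst h0; rw [pow_zero]; exact Matrix.one_apply_ne (ne_of_gt hij)
    · by_contra hc
      exact absurd (hpowsupp k h0 i j hc) (not_lt.mpr (le_of_lt hij))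
  · intro i
    rw [hSdef, Matrix.sum_apply, Finset.sum_eq_single 0]
    · rw [pow_zero, Matrix.one_apply_eq]
    · intro k hk h0
      by_contra hc
      exact absurd (hpowsupp k (Nat.pos_of_ne_zero h0) i i hc) (lt_irrefl i)
    · intro h; exact absurd (Finset.mem_range.mpr i.pos) h

lemma diag_entries_isUnit {m : ℕ} {U : Matrix (Fin m) (Fin m) E}
    (hd : U.IsDiag) (hU : IsUnit U) : ∀ i, IsUnit (U i i) := by
  intro i
  obtain ⟨u, hu⟩ := hU
  set W : Matrix (Fin m) (Fin m) E := Units.val u⁻¹ with hW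
  have h1 : (U * W) i i = 1 := by
    rw [hW, ← hu, Units.mul_inv, Matrix.one_apply_eq]
  have h2 : (W * U) i i = 1 := by
    rw [hW, ← hu, Units.inv_mul, Matrix.one_apply_eq]
  rw [Matrix.mul_apply, Finset.sum_eq_single i] at h1
  · rw [Matrix.mul_apply, Finset.sum_eq_single i] at h2
    · exact ⟨⟨U i i, W i i, h1, h2⟩, rfl⟩
    · intro k _ hk; rw [hd hk, mul_zero]
    · simp
  · intro k _ hk; rw [hd (Ne.symm hk), zero_mul]
  · simp

lemma isUnit_of_isDiag {m : ℕ} {U : Matrix (Fin m) (Fin m) E}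
    (hd : U.IsDiag) (h : ∀ i, IsUnit (U i i)) : IsUnit U := by
  have hU : U = Matrix.diagonal (fun i => U i i) := hd.diagonal_diag.symm
  set W : Matrix (Fin m) (Fin m) E := Matrix.diagonal (fun i => (((h i).unit⁻¹ : Eˣ) : E)) with hW
  refine ⟨⟨U, W, ?_, ?_⟩, rfl⟩
  · rw [hU, hW, Matrix.diagonal_mul_diagonal, ← Matrix.diagonal_one,
      Matrix.diagonal_eq_diagonal_iff]
    intro i
    exact (h i).mul_val_inv
  · rw [hU, hW, Matrix.diagonal_mul_diagonal, ← Matrix.diagonal_one,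
      Matrix.diagonal_eq_diagonal_iff]
    intro i
    exact (h i).val_inv_mul


lemma unipLower_one {m : ℕ} : UnipotentLower (1 : Matrix (Fin m) (Fin m) E) :=
  ⟨fun i j hij => Matrix.one_apply_ne (ne_of_lt hij), fun i => Matrix.one_apply_eq i⟩

lemma unipUpper_one {m : ℕ} : UnipotentUpper (1 : Matrix (Fin m) (Fin m) E) :=
  ⟨fun i j hij => Matrix.one_apply_ne (ne_of_gt hij), fun i => Matrix.one_apply_eq i⟩

lemma expand_unipLower {m : ℕ} {p : Fin (m + 1)} {T' : Matrix (Fin m) (Fin m) E}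
    (h : UnipotentLower T') : UnipotentLower (expand p p 1 T') := by
  constructor
  · intro i j hij
    rcases eq_or_ne i p with hi | hi
    · rcases eq_or_ne j p with hj | hj
      · rw [hi, hj] at hij; exact absurd hij (lt_irrefl p)
      · obtain ⟨b, hb⟩ := Fin.exists_succAbove_eq hj
        rw [hi, ← hb, expand_row]
    · obtain ⟨a, ha⟩ := Fin.exists_succAbove_eq hi
      rcases eq_or_ne j p with hj | hj
      · rw [← ha, hj, expand_col]
      · obtain ⟨b, hb⟩ := Fin.exists_succAbove_eq hj
        rw [← ha, ← hb, expand_sub]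
        apply h.1
        rw [← ha, ← hb] at hij
        exact Fin.succAbove_lt_succAbove_iff.mp hij
  · intro i
    rcases eq_or_ne i p with hi | hi
    · rw [hi, expand_pivot]
    · obtain ⟨a, ha⟩ := Fin.exists_succAbove_eq hi
      rw [← ha, expand_sub]
      exact h.2 a

lemma expand_unipUpper {m : ℕ} {p : Fin (m + 1)} {V' : Matrix (Fin m) (Fin m) E}
    (h : UnipotentUpper V') : UnipotentUpper (expand p p 1 V') := by
  constructor
  · intro i j hij
    rcases eq_or_ne i p with hi | hi
    · rcases eq_or_ne j p with hj | hj
      · rw [hi, hj] at hij; exact absurd hij (lt_irrefl p)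
      · obtain ⟨b, hb⟩ := Fin.exists_succAbove_eq hj
        rw [hi, ← hb, expand_row]
    · obtain ⟨a, ha⟩ := Fin.exists_succAbove_eq hi
      rcases eq_or_ne j p with hj | hj
      · rw [← ha, hj, expand_col]
      · obtain ⟨b, hb⟩ := Fin.exists_succAbove_eq hj
        rw [← ha, ← hb, expand_sub]
        apply h.1
        rw [← ha, ← hb] at hij
        exact Fin.succAbove_lt_succAbove_iff.mp hij
  · intro i
    rcases eq_or_ne i p with hi | hi
    · rw [hi, expand_pivot]
    · obtain ⟨a, ha⟩ := Fin.exists_succAbove_eq hi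
      rw [← ha, expand_sub]
      exact h.2 a

lemma expand_isDiag {m : ℕ} {p : Fin (m + 1)} {u : E} {U' : Matrix (Fin m) (Fin m) E}
    (h : U'.IsDiag) : (expand p p u U').IsDiag := by
  intro i j hij
  rcases eq_or_ne i p with hi | hi
  · rcases eq_or_ne j p with hj | hj
    · exact absurd (hi.trans hj.symm) hij
    · obtain ⟨b, hb⟩ := Fin.exists_succAbove_eq hj
      rw [hi, ← hb, expand_row]
  · obtain ⟨a, ha⟩ := Fin.exists_succAbove_eq hi
    rcases eq_or_ne j p with hj | hj
    · rw [← ha, hj, expand_col]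
    · obtain ⟨b, hb⟩ := Fin.exists_succAbove_eq hj
      rw [← ha, ← hb, expand_sub]
      exact h (fun hab => hij (by rw [← ha, ← hb, hab]))

def liftPerm {m : ℕ} (p q : Fin (m + 1)) (π' : Equiv.Perm (Fin m)) :
    Equiv.Perm (Fin (m + 1)) :=
  (finSuccEquiv' p).trans ((π'.optionCongr).trans (finSuccEquiv' q).symm)

lemma liftPerm_pivot {m : ℕ} (p q : Fin (m + 1)) (π' : Equiv.Perm (Fin m)) :
    liftPerm p q π' p = q := by
  simp [liftPerm, finSuccEquiv'_at, finSuccEquiv'_symm_none]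

lemma liftPerm_sub {m : ℕ} (p q : Fin (m + 1)) (π' : Equiv.Perm (Fin m)) (a : Fin m) :
    liftPerm p q π' (p.succAbove a) = q.succAbove (π' a) := by
  simp [liftPerm, finSuccEquiv'_succAbove, finSuccEquiv'_symm_some]

lemma liftPerm_permMatrix {m : ℕ} (p q : Fin (m + 1)) (π' : Equiv.Perm (Fin m)) :
    (liftPerm p q π').permMatrix E = expand p q 1 (π'.permMatrix E) := by
  ext i j
  rw [permMatrix_apply]
  rcases eq_or_ne i p with hi | hi
  · rcases eq_or_ne j q with hj | hj
    · rw [hi, hj, expand_pivot, liftPerm_pivot, if_pos rfl]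
    · obtain ⟨b, hb⟩ := Fin.exists_succAbove_eq hj
      rw [hi, ← hb, expand_row, liftPerm_pivot, if_neg (fun h => (Fin.succAbove_ne q b) h.symm)]
  · obtain ⟨a, ha⟩ := Fin.exists_succAbove_eq hi
    rcases eq_or_ne j q with hj | hj
    · rw [← ha, hj, expand_col, liftPerm_sub, if_neg (Fin.succAbove_ne q (π' a))]
    · obtain ⟨b, hb⟩ := Fin.exists_succAbove_eq hj
      rw [← ha, ← hb, expand_sub, liftPerm_sub, permMatrix_apply]
      by_cases hab : π' a = b
      · rw [if_pos (by rw [hab]), if_pos hab]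
      · rw [if_neg (fun h => hab (Fin.succAbove_right_injective h)), if_neg hab]


def SuppU {m : ℕ} (r : Fin m → Fin m → Prop) (X : Matrix (Fin m) (Fin m) E) : Prop :=
  (∀ i, X i i = 1) ∧ ∀ i j, i ≠ j → X i j ≠ 0 → r i j

lemma suppU_one {m : ℕ} (r : Fin m → Fin m → Prop) :
    SuppU r (1 : Matrix (Fin m) (Fin m) E) :=
  ⟨fun i => Matrix.one_apply_eq i, fun i j hij h0 => absurd (Matrix.one_apply_ne hij) h0⟩

lemma suppU_mul {m : ℕ} {r : Fin m → Fin m → Prop}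
    (hlt : ∀ {i j}, r i j → i < j) (htrans : ∀ {a b c}, r a b → r b c → r a c)
    {X Y : Matrix (Fin m) (Fin m) E} (hX : SuppU r X) (hY : SuppU r Y) :
    SuppU r (X * Y) := by
  have hXup : ∀ i j, ¬ i < j → i ≠ j → X i j = 0 := by
    intro i j h hne
    by_contra h0
    exact h (hlt (hX.2 i j hne h0))
  have hYup : ∀ i j, ¬ i < j → i ≠ j → Y i j = 0 := by
    intro i j h hne
    by_contra h0
    exact h (hlt (hY.2 i j hne h0))
  constructor
  · intro i
    rw [Matrix.mul_apply, Finset.sum_eq_single i]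
    · rw [hX.1, hY.1, one_mul]
    · intro k _ hk
      rcases lt_or_gt_of_ne hk with h | h
      · rw [hXup i k (not_lt.mpr (le_of_lt h)) (ne_of_gt h), zero_mul]
      · rw [hYup k i (not_lt.mpr (le_of_lt h)) (ne_of_gt h), mul_zero]
    · simp
  · intro i j hij h0
    by_contra hr
    apply h0
    rw [Matrix.mul_apply]
    apply Finset.sum_eq_zero
    intro k _
    by_cases hki : k = i
    · subst hki
      by_cases hkj : k = j
      · exact absurd hkj hij
      · have : Y k j = 0 := by
          by_contra hy
          exact hr (hY.2 k j hkj hy)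
        rw [this, mul_zero]
    · by_cases hkj : k = j
      · subst hkj
        have : X i k = 0 := by
          by_contra hx
          exact hr (hX.2 i k (fun h => hij h) hx)
        rw [this, zero_mul]
      · by_cases hx : X i k = 0
        · rw [hx, zero_mul]
        · by_cases hy : Y k j = 0
          · rw [hy, mul_zero]
          · exact absurd (htrans (hX.2 i k (fun h => hki h.symm) hx) (hY.2 k j hkj hy)) hr

lemma permMatrix_trans {m : ℕ} (π σ : Equiv.Perm (Fin m)) :
    π.permMatrix E * σ.permMatrix E = (σ * π).permMatrix E := by
  ext i j
  rw [mul_permMatrix, permMatrix_apply, permMatrix_apply]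
  by_cases h : σ (π i) = j
  · rw [if_pos (by rw [← h, Equiv.Perm.inv_apply_self]),
      if_pos (by rw [Equiv.Perm.mul_apply]; exact h)]
  · rw [if_neg (fun hh => h (by rw [hh, Equiv.Perm.apply_inv_self])),
      if_neg (fun hh => h (by rw [← Equiv.Perm.mul_apply]; exact hh))]

lemma permMatrix_one {m : ℕ} :
    ((1 : Equiv.Perm (Fin m)).permMatrix E) = 1 := by
  ext i j
  rw [permMatrix_apply, Matrix.one_apply]
  rfl

lemma permMatrix_mul_inv {m : ℕ} (π : Equiv.Perm (Fin m)) :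
    π.permMatrix E * (π⁻¹).permMatrix E = 1 := by
  rw [permMatrix_trans, inv_mul_cancel, permMatrix_one]

lemma inv_permMatrix_mul {m : ℕ} (π : Equiv.Perm (Fin m)) :
    (π⁻¹).permMatrix E * π.permMatrix E = 1 := by
  rw [permMatrix_trans, mul_inv_cancel, permMatrix_one]

lemma diag_mul_permMatrix {m : ℕ} {U : Matrix (Fin m) (Fin m) E} (hU : U.IsDiag)
    (π : Equiv.Perm (Fin m)) (i j : Fin m) :
    (U * π.permMatrix E) i j = if π i = j then U i i else 0 := by
  rw [Matrix.mul_apply, Finset.sum_eq_single i]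
  · rw [permMatrix_apply, mul_ite, mul_one, mul_zero]
  · intro k _ hk
    rw [hU (Ne.symm hk), zero_mul]
  · simp

lemma mul_eq_zero_of_unit_right {u a : E} (hu : IsUnit u) (h : a * u = 0) : a = 0 := by
  calc a = a * (u * (Units.val hu.unit⁻¹)) := by rw [hu.mul_val_inv, mul_one]
    _ = (a * u) * (Units.val hu.unit⁻¹) := by rw [mul_assoc]
    _ = 0 := by rw [h, zero_mul]

lemma mul_eq_zero_of_unit_left {u a : E} (hu : IsUnit u) (h : u * a = 0) : a = 0 := by
  calc a = ((Units.val hu.unit⁻¹) * u) * a := by rw [hu.val_inv_mul, one_mul]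
    _ = (Units.val hu.unit⁻¹) * (u * a) := by rw [mul_assoc]
    _ = 0 := by rw [h, mul_zero]

lemma bruhat_unique [Nontrivial E] {m : ℕ}
    {T U V T' U' V' : Matrix (Fin m) (Fin m) E} {π π' : Equiv.Perm (Fin m)}
    (hT : UnipotentLower T) (hUd : U.IsDiag) (hUu : IsUnit U) (hVu : UnipotentUpper V)
    (hVs : UnipotentUpper (π.permMatrix E * V * (π⁻¹).permMatrix E))
    (hT' : UnipotentLower T') (hU'd : U'.IsDiag) (hU'u : IsUnit U')
    (hV'u : UnipotentUpper V')
    (hV's : UnipotentUpper (π'.permMatrix E * V' * (π'⁻¹).permMatrix E))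
    (heq : T * U * π.permMatrix E * V = T' * U' * π'.permMatrix E * V') :
    T' = T ∧ U' = U ∧ π' = π ∧ V' = V := by
  obtain ⟨Ti', hTi'u, hTi'1, hTi'2⟩ := unipLower_inv hT'
  obtain ⟨Vi, hViu, hVi1, hVi2⟩ := unipUpper_inv hVu
  set L : Matrix (Fin m) (Fin m) E := Ti' * T with hL
  set W : Matrix (Fin m) (Fin m) E := V' * Vi with hW
  have hLu : UnipotentLower L := unipLower_mul hTi'u hT
  have hWu : UnipotentUpper W := unipUpper_mul hV'u hViu
  have key : L * (U * π.permMatrix E) = (U' * π'.permMatrix E) * W := by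
    rw [hL, hW]
    have e0 : T * U * π.permMatrix E * V * Vi = T * U * π.permMatrix E := by
      rw [Matrix.mul_assoc (T * U * π.permMatrix E), hVi1, Matrix.mul_one]
    have e1 : Ti' * T * (U * π.permMatrix E) = Ti' * (T * U * π.permMatrix E * V * Vi) := by
      rw [e0]
      simp only [Matrix.mul_assoc]
    have e2 : Ti' * (T' * U' * π'.permMatrix E * V' * Vi)
        = (U' * π'.permMatrix E) * (V' * Vi) := by
      rw [show T' * U' * π'.permMatrix E * V' * Vi
          = T' * ((U' * π'.permMatrix E) * (V' * Vi)) by simp only [Matrix.mul_assoc],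
        ← Matrix.mul_assoc Ti', hTi'2, Matrix.one_mul]
    rw [e1, heq, e2]
  have hUiu : ∀ i, IsUnit (U i i) := diag_entries_isUnit hUd hUu
  have hU'iu : ∀ i, IsUnit (U' i i) := diag_entries_isUnit hU'd hU'u
  have hkey : ∀ i j, L i (π⁻¹ j) * U (π⁻¹ j) (π⁻¹ j) = U' i i * W (π' i) j := by
    intro i j
    have h1 : (L * (U * π.permMatrix E)) i j = L i (π⁻¹ j) * U (π⁻¹ j) (π⁻¹ j) := by
      rw [Matrix.mul_apply, Finset.sum_eq_single (π⁻¹ j)]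
      · rw [diag_mul_permMatrix hUd, if_pos (Equiv.Perm.apply_inv_self π j)]
      · intro k _ hk
        rw [diag_mul_permMatrix hUd,
          if_neg (fun h => hk (by rw [← h, Equiv.Perm.inv_apply_self])), mul_zero]
      · simp
    have h2 : ((U' * π'.permMatrix E) * W) i j = U' i i * W (π' i) j := by
      rw [Matrix.mul_apply, Finset.sum_eq_single (π' i)]
      · rw [diag_mul_permMatrix hU'd, if_pos rfl]
      · intro k _ hk
        rw [diag_mul_permMatrix hU'd, if_neg (fun h => hk h.symm), zero_mul]
      · simp
    rw [← h1, ← h2, key]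
  have hle : ∀ i, π' i ≤ π i := by
    intro i
    have h := hkey i (π i)
    rw [Equiv.Perm.inv_apply_self, hLu.2, one_mul] at h
    by_contra hc
    push_neg at hc
    rw [hWu.1 (π' i) (π i) hc, mul_zero] at h
    exact (hUiu i).ne_zero h
  have hππ : π' = π := by
    have hsum : ∑ i : Fin m, ((π' i : ℕ)) = ∑ i : Fin m, ((π i : ℕ)) := by
      rw [Equiv.sum_comp π' (fun a : Fin m => (a : ℕ)),
        Equiv.sum_comp π (fun a : Fin m => (a : ℕ))]
    have hpt := (Finset.sum_eq_sum_iff_of_le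
      (fun i _ => (by exact_mod_cast hle i : ((π' i : ℕ)) ≤ (π i : ℕ)))).mp hsum
    apply Equiv.ext
    intro x
    exact Fin.ext (hpt x (Finset.mem_univ x))
  subst hππ
  obtain ⟨S, hSu, hS1, hS2⟩ := unipUpper_inv hVs
  have hXY : (π'.permMatrix E * V * (π'⁻¹).permMatrix E)
      * (π'.permMatrix E * Vi * (π'⁻¹).permMatrix E) = 1 := by
    have e : π'.permMatrix E * V * (π'⁻¹).permMatrix E
        * (π'.permMatrix E * Vi * (π'⁻¹).permMatrix E)
        = π'.permMatrix E * (V * (((π'⁻¹).permMatrix E * π'.permMatrix E)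
          * (Vi * (π'⁻¹).permMatrix E))) := by
      simp only [Matrix.mul_assoc]
    rw [e, inv_permMatrix_mul, Matrix.one_mul, ← Matrix.mul_assoc V, hVi1, Matrix.one_mul,
      permMatrix_mul_inv]
  have hYS : π'.permMatrix E * Vi * (π'⁻¹).permMatrix E = S := by
    calc π'.permMatrix E * Vi * (π'⁻¹).permMatrix E
        = (S * (π'.permMatrix E * V * (π'⁻¹).permMatrix E))
          * (π'.permMatrix E * Vi * (π'⁻¹).permMatrix E) := by rw [hS2, Matrix.one_mul]
      _ = S * ((π'.permMatrix E * V * (π'⁻¹).permMatrix E)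
          * (π'.permMatrix E * Vi * (π'⁻¹).permMatrix E)) := by rw [Matrix.mul_assoc]
      _ = S := by rw [hXY, Matrix.mul_one]
  have hYu : UnipotentUpper (π'.permMatrix E * Vi * (π'⁻¹).permMatrix E) := by
    rw [hYS]; exact hSu
  have hWconj : UnipotentUpper (π'.permMatrix E * W * (π'⁻¹).permMatrix E) := by
    have hsplit : π'.permMatrix E * W * (π'⁻¹).permMatrix E
        = (π'.permMatrix E * V' * (π'⁻¹).permMatrix E)
          * (π'.permMatrix E * Vi * (π'⁻¹).permMatrix E) := by
      rw [hW]
      have e : (π'.permMatrix E * V' * (π'⁻¹).permMatrix E)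
          * (π'.permMatrix E * Vi * (π'⁻¹).permMatrix E)
          = π'.permMatrix E * (V' * (((π'⁻¹).permMatrix E * π'.permMatrix E)
            * (Vi * (π'⁻¹).permMatrix E))) := by
        simp only [Matrix.mul_assoc]
      rw [e, inv_permMatrix_mul, Matrix.one_mul]
      simp only [Matrix.mul_assoc]
    rw [hsplit]
    exact unipUpper_mul hV's hYu
  have hWentry : ∀ i b, b < i → W (π' i) (π' b) = 0 := by
    intro i b hb
    have h := hWconj.1 i b hb
    rwa [permMatrix_conj] at h
  have hL1 : L = 1 := by
    ext i b
    rcases lt_trichotomy i b with h | h | h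
    · rw [hLu.1 i b h, Matrix.one_apply_ne (ne_of_lt h)]
    · rw [h, hLu.2, Matrix.one_apply_eq]
    · have hk := hkey i (π' b)
      rw [Equiv.Perm.inv_apply_self] at hk
      rw [hWentry i b h, mul_zero] at hk
      rw [mul_eq_zero_of_unit_right (hUiu b) hk, Matrix.one_apply_ne (ne_of_gt h)]
  have h1 : Ti' * T = 1 := by rw [← hL]; exact hL1
  have hTT : T' = T := by
    calc T' = T' * (Ti' * T) := by rw [h1, Matrix.mul_one]
      _ = (T' * Ti') * T := by rw [Matrix.mul_assoc]
      _ = T := by rw [hTi'1, Matrix.one_mul]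
  have hkey2 : ∀ i b, (1 : Matrix (Fin m) (Fin m) E) i b * U b b
      = U' i i * W (π' i) (π' b) := by
    intro i b
    have hk := hkey i (π' b)
    rw [Equiv.Perm.inv_apply_self, hL1] at hk
    exact hk
  have hUU : U' = U := by
    ext i b
    rcases eq_or_ne i b with h | h
    · have hk := hkey2 i i
      rw [Matrix.one_apply_eq, one_mul, hWu.2, mul_one] at hk
      rw [h] at hk ⊢
      exact hk.symm
    · rw [hU'd h, hUd h]
  have hW1 : W = 1 := by
    ext a c
    rcases eq_or_ne a c with h | h
    · rw [h, hWu.2, Matrix.one_apply_eq]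
    · have hπne : π'⁻¹ a ≠ π'⁻¹ c := fun hh => h (π'⁻¹.injective hh)
      have hk := hkey2 (π'⁻¹ a) (π'⁻¹ c)
      rw [Matrix.one_apply_ne hπne, zero_mul, Equiv.Perm.apply_inv_self,
        Equiv.Perm.apply_inv_self] at hk
      rw [mul_eq_zero_of_unit_left (hU'iu (π'⁻¹ a)) hk.symm, Matrix.one_apply_ne h]
  have hVV : V' = V := by
    have h2 : V' * Vi = 1 := by rw [← hW]; exact hW1
    calc V' = V' * (Vi * V) := by rw [hVi2, Matrix.mul_one]
      _ = (V' * Vi) * V := by rw [Matrix.mul_assoc]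
      _ = V := by rw [h2, Matrix.one_mul]
  exact ⟨hTT, hUU, rfl, hVV⟩

end NoGrading

section Graded
variable (𝒜 : Γ → AddSubgroup E) [GradedRing 𝒜]

lemma inv_mem_neg (γ : Γ) (x y : E) (hx : x ∈ 𝒜 γ) (hxy : x * y = 1) (hyx : y * x = 1) :
    y ∈ 𝒜 (-γ) := by
  classical
  have hxinj : ∀ a : E, x * a = 0 → a = 0 := by
    intro a ha
    have : y * (x * a) = 0 := by rw [ha, mul_zero]
    rwa [← mul_assoc, hyx, one_mul] at this
  have hy : ∀ τ : Γ, τ ≠ -γ → ((DirectSum.decompose 𝒜 y τ : 𝒜 τ) : E) = 0 := by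
    intro τ hτ
    set ϕ : E →+ E :=
      ((𝒜 (γ + τ)).subtype.comp ((DFinsupp.evalAddMonoidHom (γ + τ)).comp
        (DirectSum.decomposeAddEquiv 𝒜).toAddMonoidHom)) with hϕ
    have hϕ_apply : ∀ z : E, ϕ z = ((DirectSum.decompose 𝒜 z (γ + τ) : 𝒜 (γ + τ)) : E) := by
      intro z; rfl
    have hsum : x * y = ∑ σ ∈ DFinsupp.support (DirectSum.decompose 𝒜 y),
        x * ((DirectSum.decompose 𝒜 y σ : 𝒜 σ) : E) := by
      rw [← Finset.mul_sum, DirectSum.sum_support_decompose]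
    have hϕ1 : ϕ 1 = 0 := by
      rw [hϕ_apply]
      exact DirectSum.decompose_of_mem_ne 𝒜 (SetLike.one_mem_graded 𝒜)
        (fun h => hτ ((neg_eq_of_add_eq_zero_right h.symm).symm))
    have hterm : ∀ σ : Γ, ϕ (x * ((DirectSum.decompose 𝒜 y σ : 𝒜 σ) : E)) =
        if σ = τ then x * ((DirectSum.decompose 𝒜 y σ : 𝒜 σ) : E) else 0 := by
      intro σ
      have hmem : x * ((DirectSum.decompose 𝒜 y σ : 𝒜 σ) : E) ∈ 𝒜 (γ + σ) :=
        SetLike.mul_mem_graded hx (SetLike.coe_mem _)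
      by_cases hστ : σ = τ
      · subst hστ
        rw [if_pos rfl, hϕ_apply]
        exact DirectSum.decompose_of_mem_same 𝒜 hmem
      · rw [if_neg hστ, hϕ_apply]
        exact DirectSum.decompose_of_mem_ne 𝒜 hmem (fun h => hστ (by
          have := add_left_cancel h; exact this))
    have hmain : x * ((DirectSum.decompose 𝒜 y τ : 𝒜 τ) : E) = 0 := by
      have h0 : ϕ (x * y) = 0 := by rw [hxy, hϕ1]
      rw [hsum, map_sum] at h0
      simp only [hterm] at h0
      rw [Finset.sum_ite_eq' _ τ] at h0
      by_cases hτsupp : τ ∈ DFinsupp.support (DirectSum.decompose 𝒜 y)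
      · rwa [if_pos hτsupp] at h0
      · rw [DFinsupp.notMem_support_iff.mp hτsupp]
        simp
    exact hxinj _ hmain
  have := DirectSum.sum_support_decompose 𝒜 y
  rw [← this]
  apply AddSubgroup.sum_mem
  intro σ hσ
  by_cases hστ : σ = -γ
  · subst hστ; exact SetLike.coe_mem _
  · rw [hy σ hστ]; exact zero_mem _

def GP {m : ℕ} (f g : Fin m → Γ) (X : Matrix (Fin m) (Fin m) E) : Prop :=
  ∀ i j, X i j ∈ 𝒜 (g j - f i)

lemma GP.mul {m : ℕ} {f g h : Fin m → Γ} {X Y : Matrix (Fin m) (Fin m) E}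
    (hX : GP 𝒜 f g X) (hY : GP 𝒜 g h Y) : GP 𝒜 f h (X * Y) := by
  intro i j
  rw [Matrix.mul_apply]
  apply AddSubgroup.sum_mem
  intro k _
  have hm := SetLike.mul_mem_graded (hX i k) (hY k j)
  have he : (g k - f i) + (h j - g k) = h j - f i := by abel
  rwa [he] at hm

lemma GP.one {m : ℕ} (f : Fin m → Γ) : GP 𝒜 f f (1 : Matrix (Fin m) (Fin m) E) := by
  intro i j
  by_cases hij : i = j
  · subst hij
    rw [Matrix.one_apply_eq, sub_self]
    exact SetLike.one_mem_graded 𝒜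
  · rw [Matrix.one_apply_ne hij]
    exact zero_mem _


lemma unipLower_mem_closure {m : ℕ} (δ : Fin m → Γ) {T : Matrix (Fin m) (Fin m) E}
    (hT : UnipotentLower T) (hhom : GP 𝒜 δ δ T) :
    T ∈ Submonoid.closure {e : Matrix (Fin m) (Fin m) E |
      ∃ (i j : Fin m) (x : E), i ≠ j ∧ x ∈ 𝒜 (δ j - δ i) ∧
        e = 1 + Matrix.single i j x} := by
  classical
  set Gen : Set (Matrix (Fin m) (Fin m) E) := {e : Matrix (Fin m) (Fin m) E |
      ∃ (i j : Fin m) (x : E), i ≠ j ∧ x ∈ 𝒜 (δ j - δ i) ∧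
        e = 1 + Matrix.single i j x} with hGen
  suffices haux : ∀ (d k : ℕ), m ≤ k + d → ∀ T : Matrix (Fin m) (Fin m) E,
      UnipotentLower T → GP 𝒜 δ δ T →
      (∀ i j : Fin m, (j : ℕ) < k → T i j = (1 : Matrix (Fin m) (Fin m) E) i j) →
      T ∈ Submonoid.closure Gen by
    exact haux m 0 (by omega) T hT hhom (fun i j hj => absurd hj (by omega))
  intro d
  induction d with
  | zero =>
    intro k hk T hT hhom hcols
    have : T = 1 := by
      ext i j
      exact hcols i j (by have := j.2; omega)
    rw [this]
    exact one_mem _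
  | succ d ih =>
    intro k hk T hT hhom hcols
    by_cases hmk : m ≤ k + d
    · exact ih k hmk T hT hhom hcols
    · have hkm : k < m := by omega
      set κ : Fin m := ⟨k, hkm⟩ with hκ
      set N : Matrix (Fin m) (Fin m) E :=
        Matrix.of fun i j => if j = κ ∧ κ < i then T i κ else 0 with hN
      have hNapp : ∀ i j, N i j = if j = κ ∧ κ < i then T i κ else 0 := fun i j => rfl
      have hN2 : N * N = 0 := by
        ext i j
        rw [Matrix.mul_apply, Matrix.zero_apply]
        apply Finset.sum_eq_zero
        intro l _
        by_cases hl : l = κ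
        · subst hl
          rw [hNapp κ j, if_neg (fun h => lt_irrefl κ h.2), mul_zero]
        · rw [hNapp i l, if_neg (fun h => hl h.1), zero_mul]
      have hNT : ∀ i j, (N * T) i j = if κ < i then T i κ * T κ j else 0 := by
        intro i j
        rw [Matrix.mul_apply, Finset.sum_eq_single κ]
        · rw [hNapp i κ]
          by_cases hi : κ < i
          · rw [if_pos ⟨rfl, hi⟩, if_pos hi]
          · rw [if_neg (fun h => hi h.2), if_neg hi, zero_mul]
        · intro l _ hl; rw [hNapp i l, if_neg (fun h => hl h.1), zero_mul]
        · simp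
      set T' : Matrix (Fin m) (Fin m) E := (1 - N) * T with hT'
      have hT'app : ∀ i j, T' i j = T i j - (if κ < i then T i κ * T κ j else 0) := by
        intro i j
        rw [hT', Matrix.sub_mul, Matrix.one_mul, Matrix.sub_apply, hNT]
      have hTfac : T = (1 + N) * T' := by
        rw [hT', ← Matrix.mul_assoc]
        have : (1 + N) * (1 - N) = 1 - N * N := by noncomm_ring
        rw [this, hN2, sub_zero, Matrix.one_mul]
      have hT'unip : UnipotentLower T' := by
        constructor
        · intro i j hij
          rw [hT'app, hT.1 i j hij]
          by_cases hi : κ < i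
          · rw [if_pos hi, hT.1 κ j (lt_trans hi hij), mul_zero, sub_zero]
          · rw [if_neg hi, sub_zero]
        · intro i
          rw [hT'app, hT.2]
          by_cases hi : κ < i
          · rw [if_pos hi, hT.1 κ i hi, mul_zero, sub_zero]
          · rw [if_neg hi, sub_zero]
      have hT'hom : GP 𝒜 δ δ T' := by
        intro i j
        rw [hT'app]
        apply sub_mem (hhom i j)
        by_cases hi : κ < i
        · rw [if_pos hi]
          have hm := SetLike.mul_mem_graded (hhom i κ) (hhom κ j)
          have he : (δ κ - δ i) + (δ j - δ κ) = δ j - δ i := by abel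
          rwa [he] at hm
        · rw [if_neg hi]; exact zero_mem _
      have hT'cols : ∀ i j : Fin m, (j : ℕ) < k + 1 → T' i j = (1 : Matrix (Fin m) (Fin m) E) i j := by
        intro i j hj
        by_cases hjk : (j : ℕ) < k
        · have hκj : κ ≠ j := by
            intro h; rw [← h] at hjk; simp [hκ] at hjk
          rw [hT'app, hcols i j hjk]
          by_cases hi : κ < i
          · rw [if_pos hi, hcols κ j hjk, Matrix.one_apply_ne hκj, mul_zero, sub_zero]
          · rw [if_neg hi, sub_zero]
        · have hjκ : j = κ := by
            apply Fin.ext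
            simp only [hκ]
            omega
          subst hjκ
          rw [hT'app]
          rcases lt_trichotomy κ i with hi | hi | hi
          · rw [if_pos hi, hT.2, mul_one, sub_self, Matrix.one_apply_ne (ne_of_lt hi).symm]
          · rw [← hi, hT.2, Matrix.one_apply_eq, if_neg (lt_irrefl κ), sub_zero]
          · rw [if_neg (not_lt.mpr (le_of_lt hi)), sub_zero, hT.1 i κ hi,
              Matrix.one_apply_ne (ne_of_lt hi)]
      -- 1 + N is in the closure
      have hLmem : ∀ s : Finset (Fin m), (∀ i ∈ s, κ < i) →
          (1 + Matrix.of fun i j => if j = κ ∧ i ∈ s then T i κ else 0) ∈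
            Submonoid.closure Gen := by
        intro s
        induction s using Finset.induction with
        | empty =>
          intro _
          have : (Matrix.of fun i j => if j = κ ∧ i ∈ (∅ : Finset (Fin m)) then T i κ else 0) =
              (0 : Matrix (Fin m) (Fin m) E) := by
            ext i j; simp
          rw [this, add_zero]
          exact one_mem _
        | @insert a s ha ihs =>
          intro hmem
          have hκa : κ < a := hmem a (Finset.mem_insert_self a s)
          set B : Matrix (Fin m) (Fin m) E := Matrix.single a κ (T a κ) with hB
          set Ms : Matrix (Fin m) (Fin m) E :=
            Matrix.of fun i j => if j = κ ∧ i ∈ s then T i κ else 0 with hMs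
          have hBMs : B * Ms = 0 := by
            ext i j
            rw [Matrix.mul_apply, Matrix.zero_apply]
            apply Finset.sum_eq_zero
            intro l _
            by_cases hl : l = κ
            · subst hl
              have hz : Ms κ j = 0 := by
                show (if j = κ ∧ κ ∈ s then T κ κ else 0) = 0
                rw [if_neg]
                rintro ⟨-, hls⟩
                exact lt_irrefl κ (hmem κ (Finset.mem_insert_of_mem hls))
              rw [hz, mul_zero]
            · have hz : B i l = 0 := by
                show (if a = i ∧ κ = l then T a κ else 0) = 0
                rw [if_neg (fun h => hl h.2.symm)]
              rw [hz, zero_mul]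
          have hsplit : (Matrix.of fun i j => if j = κ ∧ i ∈ insert a s then T i κ else 0) =
              Ms + B := by
            ext i j
            show (if j = κ ∧ i ∈ insert a s then T i κ else 0) =
              (if j = κ ∧ i ∈ s then T i κ else 0) + (if a = i ∧ κ = j then T a κ else 0)
            by_cases hjκ : j = κ
            · subst hjκ
              by_cases hia : i = a
              · subst hia
                simp [ha]
              · have hai : ¬(a = i) := fun h => hia h.symm
                simp [Finset.mem_insert, hia, hai]
            · have hκj : ¬(κ = j) := fun h => hjκ h.symm
              simp [hjκ, hκj]
          have hprod : (1 : Matrix (Fin m) (Fin m) E) + (Ms + B) = (1 + B) * (1 + Ms) := by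
            have : (1 + B) * (1 + Ms) = 1 + Ms + B + B * Ms := by noncomm_ring
            rw [this, hBMs, add_zero, add_assoc]
          rw [hsplit, hprod]
          apply mul_mem
          · apply Submonoid.subset_closure
            exact ⟨a, κ, T a κ, ne_of_gt hκa, hhom a κ, rfl⟩
          · exact ihs (fun i hi => hmem i (Finset.mem_insert_of_mem hi))
      have hNeq : N = Matrix.of fun i j =>
          if j = κ ∧ i ∈ Finset.univ.filter (fun i => κ < i) then T i κ else 0 := by
        ext i j
        rw [hNapp]
        show _ = (if j = κ ∧ i ∈ Finset.univ.filter (fun i => κ < i) then T i κ else 0)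
        simp only [Finset.mem_filter, Finset.mem_univ, true_and]
      rw [hTfac]
      apply mul_mem
      · rw [hNeq]
        exact hLmem _ (fun i hi => (Finset.mem_filter.mp hi).2)
      · exact ih (k + 1) (by omega) T' hT'unip hT'hom hT'cols

lemma expand_GP {m : ℕ} {δr δc : Fin (m + 1) → Γ} {p q : Fin (m + 1)} {u : E}
    {X : Matrix (Fin m) (Fin m) E} (hu : u ∈ 𝒜 (δc q - δr p))
    (hX : GP 𝒜 (δr ∘ p.succAbove) (δc ∘ q.succAbove) X) :
    GP 𝒜 δr δc (expand p q u X) := by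
  intro i j
  rcases eq_or_ne i p with hi | hi
  · rcases eq_or_ne j q with hj | hj
    · rw [hi, hj, expand_pivot]; exact hu
    · obtain ⟨b, hb⟩ := Fin.exists_succAbove_eq hj
      rw [hi, ← hb, expand_row]; exact zero_mem _
  · obtain ⟨a, ha⟩ := Fin.exists_succAbove_eq hi
    rcases eq_or_ne j q with hj | hj
    · rw [← ha, hj, expand_col]; exact zero_mem _
    · obtain ⟨b, hb⟩ := Fin.exists_succAbove_eq hj
      rw [← ha, ← hb, expand_sub]
      exact hX a b

lemma exists_dec [Nontrivial E]
    (hdiv : ∀ (γ : Γ) (x : E), x ∈ 𝒜 γ → x ≠ 0 → IsUnit x) :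
    ∀ {m : ℕ} (δr δc : Fin m → Γ) (A : Matrix (Fin m) (Fin m) E),
      IsUnit A → (∀ i j, A i j ∈ 𝒜 (δc j - δr i)) →
      ∃ (T U : Matrix (Fin m) (Fin m) E) (π : Equiv.Perm (Fin m))
        (V : Matrix (Fin m) (Fin m) E),
        UnipotentLower T ∧ GP 𝒜 δr δr T ∧ U.IsDiag ∧ (∀ i, IsUnit (U i i)) ∧
        (∀ i, U i i ∈ 𝒜 (δc (π i) - δr i)) ∧ UnipotentUpper V ∧ GP 𝒜 δc δc V ∧
        A = T * U * π.permMatrix E * V := by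
  intro m
  induction m with
  | zero =>
    intro δr δc A hA hAhom
    refine ⟨1, 1, 1, 1, unipLower_one, GP.one 𝒜 δr, Matrix.isDiag_one,
      fun i => i.elim0, fun i => i.elim0, unipUpper_one, GP.one 𝒜 δc, ?_⟩
    ext i j
    exact i.elim0
  | succ m ih =>
    intro δr δc A hA hAhom
    classical
    obtain ⟨uA, huA⟩ := hA
    set Ainv : Matrix (Fin (m + 1)) (Fin (m + 1)) E := Units.val uA⁻¹ with hAinv
    have hA1 : A * Ainv = 1 := by rw [hAinv, ← huA]; exact uA.mul_inv
    have hA2 : Ainv * A = 1 := by rw [hAinv, ← huA]; exact uA.inv_mul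
    set z : Fin (m + 1) := 0 with hz
    have hcol : ∃ i, A i z ≠ 0 := by
      by_contra hc
      push_neg at hc
      have h0 : (Ainv * A) z z = 0 := by
        rw [Matrix.mul_apply]
        exact Finset.sum_eq_zero fun k _ => by rw [hc k, mul_zero]
      rw [hA2, Matrix.one_apply_eq] at h0
      exact one_ne_zero h0
    set S : Finset (Fin (m + 1)) := Finset.univ.filter (fun i => A i z ≠ 0) with hS
    have hSne : S.Nonempty := by
      obtain ⟨i, hi⟩ := hcol
      exact ⟨i, by simp [hS, hi]⟩
    set i₀ : Fin (m + 1) := S.min' hSne with hi₀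
    have hpiv : A i₀ z ≠ 0 := (Finset.mem_filter.mp (S.min'_mem hSne)).2
    have hmin : ∀ i, i < i₀ → A i z = 0 := by
      intro i hi
      by_contra hne
      exact absurd (S.min'_le i (Finset.mem_filter.mpr ⟨Finset.mem_univ i, hne⟩))
        (not_le.mpr hi)
    set u : E := A i₀ z with hu_def
    have humem : u ∈ 𝒜 (δc z - δr i₀) := hAhom i₀ z
    have hu : IsUnit u := hdiv _ u humem hpiv
    set uinv : E := Units.val hu.unit⁻¹ with huinv
    have huu : u * uinv = 1 := hu.mul_val_inv
    have huu' : uinv * u = 1 := hu.val_inv_mul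
    have huinvmem : uinv ∈ 𝒜 (-(δc z - δr i₀)) := inv_mem_neg 𝒜 _ u uinv humem huu huu'
    set N : Matrix (Fin (m + 1)) (Fin (m + 1)) E :=
      Matrix.of (fun i j => if j = i₀ ∧ i ≠ i₀ then A i z * uinv else 0) with hN
    have hNapp : ∀ i j, N i j = if j = i₀ ∧ i ≠ i₀ then A i z * uinv else 0 := fun _ _ => rfl
    have hNN : N * N = 0 := by
      ext i j
      rw [Matrix.mul_apply, Matrix.zero_apply]
      apply Finset.sum_eq_zero
      intro l _
      by_cases hl : l = i₀
      · rw [hNapp l j, if_neg (fun h => h.2 hl), mul_zero]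
      · rw [hNapp i l, if_neg (fun h => hl h.1), zero_mul]
    have hfacNS : (1 + N) * (1 - N) = 1 := by
      have h : (1 + N) * (1 - N) = 1 - N * N := by noncomm_ring
      rw [h, hNN, sub_zero]
    have hfacNS' : (1 - N) * (1 + N) = 1 := by
      have h : (1 - N) * (1 + N) = 1 - N * N := by noncomm_ring
      rw [h, hNN, sub_zero]
    set B : Matrix (Fin (m + 1)) (Fin (m + 1)) E := (1 - N) * A with hB
    have hNA : ∀ i j, (N * A) i j = if i ≠ i₀ then A i z * uinv * A i₀ j else 0 := by
      intro i j
      rw [Matrix.mul_apply, Finset.sum_eq_single i₀]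
      · rw [hNapp i i₀]
        by_cases hi : i ≠ i₀
        · rw [if_pos ⟨rfl, hi⟩, if_pos hi]
        · rw [if_neg (fun h => hi h.2), if_neg hi, zero_mul]
      · intro l _ hl; rw [hNapp i l, if_neg (fun h => hl h.1), zero_mul]
      · simp
    have hBapp : ∀ i j, B i j = A i j - (if i ≠ i₀ then A i z * uinv * A i₀ j else 0) := by
      intro i j
      rw [hB, Matrix.sub_mul, Matrix.one_mul, Matrix.sub_apply, hNA]
    have hBcol : ∀ i, B i z = if i = i₀ then u else 0 := by
      intro i
      rw [hBapp]
      by_cases hi : i = i₀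
      · rw [if_neg (fun h => h hi), sub_zero, if_pos hi, hi]
      · rw [if_pos hi, if_neg hi, mul_assoc, ← hu_def, huu', mul_one, sub_self]
    have hBrow : ∀ j, B i₀ j = A i₀ j := by
      intro j; rw [hBapp, if_neg (fun h => h rfl), sub_zero]
    set M : Matrix (Fin (m + 1)) (Fin (m + 1)) E :=
      Matrix.of (fun i j => if i = z ∧ j ≠ z then uinv * B i₀ j else 0) with hM
    have hMapp : ∀ i j, M i j = if i = z ∧ j ≠ z then uinv * B i₀ j else 0 := fun _ _ => rfl
    have hMM : M * M = 0 := by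
      ext i j
      rw [Matrix.mul_apply, Matrix.zero_apply]
      apply Finset.sum_eq_zero
      intro l _
      by_cases hl : l = z
      · rw [hMapp i l, if_neg (fun h => h.2 hl), zero_mul]
      · rw [hMapp l j, if_neg (fun h => hl h.1), mul_zero]
    have hfacMS : (1 - M) * (1 + M) = 1 := by
      have h : (1 - M) * (1 + M) = 1 - M * M := by noncomm_ring
      rw [h, hMM, sub_zero]
    have hfacMS' : (1 + M) * (1 - M) = 1 := by
      have h : (1 + M) * (1 - M) = 1 - M * M := by noncomm_ring
      rw [h, hMM, sub_zero]
    set C : Matrix (Fin (m + 1)) (Fin (m + 1)) E := B * (1 - M) with hC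
    have hBM : ∀ i j, (B * M) i j = if j ≠ z then B i z * (uinv * B i₀ j) else 0 := by
      intro i j
      rw [Matrix.mul_apply, Finset.sum_eq_single z]
      · rw [hMapp z j]
        by_cases hj : j ≠ z
        · rw [if_pos ⟨rfl, hj⟩, if_pos hj]
        · rw [if_neg (fun h => hj h.2), if_neg hj, mul_zero]
      · intro l _ hl; rw [hMapp l j, if_neg (fun h => hl h.1), mul_zero]
      · simp
    have hCapp : ∀ i j, C i j = B i j - (if j ≠ z then B i z * (uinv * B i₀ j) else 0) := by
      intro i j
      rw [hC, Matrix.mul_sub, Matrix.mul_one, Matrix.sub_apply, hBM]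
    have hCcol : ∀ i, C i z = if i = i₀ then u else 0 := by
      intro i
      rw [hCapp, if_neg (fun h => h rfl), sub_zero, hBcol]
    have hCrow : ∀ j, C i₀ j = if j = z then u else 0 := by
      intro j
      rw [hCapp]
      by_cases hj : j = z
      · rw [if_neg (fun h => h hj), sub_zero, if_pos hj, hj, hBcol, if_pos rfl]
      · rw [if_pos hj, if_neg hj, hBcol, if_pos rfl, ← mul_assoc, huu, one_mul, sub_self]
    have hAfac : A = (1 + N) * C * (1 + M) := by
      rw [hC, hB]
      have hassoc : (1 + N) * ((1 - N) * A * (1 - M)) * (1 + M)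
          = (1 + N) * (1 - N) * A * ((1 - M) * (1 + M)) := by
        simp only [Matrix.mul_assoc]
      rw [hassoc, hfacNS, hfacMS, one_mul, mul_one]
    have hNGP : GP 𝒜 δr δr N := by
      intro i j
      rw [hNapp]
      by_cases h : j = i₀ ∧ i ≠ i₀
      · rw [if_pos h, h.1]
        have hm := SetLike.mul_mem_graded (hAhom i z) huinvmem
        have he : (δc z - δr i) + -(δc z - δr i₀) = δr i₀ - δr i := by abel
        rwa [he] at hm
      · rw [if_neg h]; exact zero_mem _
    have hMGP : GP 𝒜 δc δc M := by
      intro i j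
      rw [hMapp]
      by_cases h : i = z ∧ j ≠ z
      · rw [if_pos h, h.1, hBrow]
        have hm := SetLike.mul_mem_graded huinvmem (hAhom i₀ j)
        have he : -(δc z - δr i₀) + (δc j - δr i₀) = δc j - δc z := by abel
        rwa [he] at hm
      · rw [if_neg h]; exact zero_mem _
    have hCGP : GP 𝒜 δr δc C := by
      have h1 : GP 𝒜 δr δr (1 - N : Matrix (Fin (m + 1)) (Fin (m + 1)) E) :=
        fun i j => sub_mem (GP.one 𝒜 δr i j) (hNGP i j)
      have h2 : GP 𝒜 δc δc (1 - M : Matrix (Fin (m + 1)) (Fin (m + 1)) E) :=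
        fun i j => sub_mem (GP.one 𝒜 δc i j) (hMGP i j)
      rw [hC, hB]
      exact GP.mul 𝒜 (GP.mul 𝒜 h1 hAhom) h2
    set Cinv : Matrix (Fin (m + 1)) (Fin (m + 1)) E := (1 + M) * Ainv * (1 + N) with hCinv
    have hCC : C * Cinv = 1 := by
      rw [hC, hB, hCinv]
      have hassoc : (1 - N) * A * (1 - M) * ((1 + M) * Ainv * (1 + N))
          = (1 - N) * (A * ((1 - M) * ((1 + M) * (Ainv * (1 + N))))) := by
        simp only [Matrix.mul_assoc]
      rw [hassoc, ← Matrix.mul_assoc (1 - M), hfacMS, one_mul,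
        ← Matrix.mul_assoc A, hA1, one_mul, hfacNS']
    have hCC' : Cinv * C = 1 := by
      rw [hC, hB, hCinv]
      have hassoc : (1 + M) * Ainv * (1 + N) * ((1 - N) * A * (1 - M))
          = (1 + M) * (Ainv * ((1 + N) * ((1 - N) * (A * (1 - M))))) := by
        simp only [Matrix.mul_assoc]
      rw [hassoc, ← Matrix.mul_assoc (1 + N), hfacNS, one_mul,
        ← Matrix.mul_assoc Ainv, hA2, one_mul, hfacMS']
    set D : Matrix (Fin m) (Fin m) E :=
      Matrix.of (fun a b => C (i₀.succAbove a) (z.succAbove b)) with hD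
    set D' : Matrix (Fin m) (Fin m) E :=
      Matrix.of (fun a b => Cinv (z.succAbove a) (i₀.succAbove b)) with hD'
    have hone : ∀ (p : Fin (m + 1)) (a b : Fin m),
        (1 : Matrix (Fin (m + 1)) (Fin (m + 1)) E) (p.succAbove a) (p.succAbove b)
          = (1 : Matrix (Fin m) (Fin m) E) a b := by
      intro p a b
      by_cases hab : a = b
      · rw [hab, Matrix.one_apply_eq, Matrix.one_apply_eq]
      · rw [Matrix.one_apply_ne (fun h => hab (Fin.succAbove_right_injective h)),
          Matrix.one_apply_ne hab]
    have hDD' : D * D' = 1 := by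
      ext a b
      have h1 : (C * Cinv) (i₀.succAbove a) (i₀.succAbove b)
          = (1 : Matrix (Fin (m + 1)) (Fin (m + 1)) E) (i₀.succAbove a) (i₀.succAbove b) := by
        rw [hCC]
      rw [Matrix.mul_apply, Fin.sum_univ_succAbove _ z] at h1
      have h2 : C (i₀.succAbove a) z = 0 := by
        rw [hCcol, if_neg (Fin.succAbove_ne i₀ a)]
      rw [h2, zero_mul, zero_add, hone] at h1
      rw [Matrix.mul_apply, ← h1]
      exact Finset.sum_congr rfl (fun c _ => rfl)
    have hD'D : D' * D = 1 := by
      ext a b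
      have h1 : (Cinv * C) (z.succAbove a) (z.succAbove b)
          = (1 : Matrix (Fin (m + 1)) (Fin (m + 1)) E) (z.succAbove a) (z.succAbove b) := by
        rw [hCC']
      rw [Matrix.mul_apply, Fin.sum_univ_succAbove _ i₀] at h1
      have h2 : C i₀ (z.succAbove b) = 0 := by
        rw [hCrow, if_neg (Fin.succAbove_ne z b)]
      rw [h2, mul_zero, zero_add, hone] at h1
      rw [Matrix.mul_apply, ← h1]
      exact Finset.sum_congr rfl (fun c _ => rfl)
    have hDunit : IsUnit D := ⟨⟨D, D', hDD', hD'D⟩, rfl⟩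
    have hDGP : ∀ a b, D a b ∈ 𝒜 ((δc ∘ z.succAbove) b - (δr ∘ i₀.succAbove) a) :=
      fun a b => hCGP _ _
    obtain ⟨T', U', π', V', hT'u, hT'g, hU'd, hU'units, hU'g, hV'u, hV'g, hfac'⟩ :=
      ih (δr ∘ i₀.succAbove) (δc ∘ z.succAbove) D hDunit hDGP
    set π : Equiv.Perm (Fin (m + 1)) := liftPerm i₀ z π' with hπ
    have hCfac : C = expand i₀ i₀ 1 T' * expand i₀ i₀ u U' * π.permMatrix E
        * expand z z 1 V' := by
      rw [hπ, liftPerm_permMatrix, expand_mul, expand_mul, expand_mul, one_mul, mul_one,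
        mul_one, ← hfac']
      ext i j
      rcases eq_or_ne i i₀ with hi | hi
      · rcases eq_or_ne j z with hj | hj
        · rw [hi, hj, expand_pivot, hCrow, if_pos rfl]
        · obtain ⟨b, hb⟩ := Fin.exists_succAbove_eq hj
          rw [hi, ← hb, expand_row, hCrow, if_neg (Fin.succAbove_ne z b)]
      · obtain ⟨a, ha⟩ := Fin.exists_succAbove_eq hi
        rcases eq_or_ne j z with hj | hj
        · rw [← ha, hj, expand_col, hCcol, if_neg (Fin.succAbove_ne i₀ a)]
        · obtain ⟨b, hb⟩ := Fin.exists_succAbove_eq hj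
          rw [← ha, ← hb, expand_sub]
          rfl
    have hNunip : UnipotentLower (1 + N : Matrix (Fin (m + 1)) (Fin (m + 1)) E) := by
      constructor
      · intro i j hij
        rw [Matrix.add_apply, Matrix.one_apply_ne (ne_of_lt hij), hNapp]
        by_cases h : j = i₀ ∧ i ≠ i₀
        · rw [if_pos h, hmin i (h.1 ▸ hij), zero_mul, add_zero]
        · rw [if_neg h, add_zero]
      · intro i
        rw [Matrix.add_apply, Matrix.one_apply_eq, hNapp,
          if_neg (fun h => h.2 h.1), add_zero]
    have hMunip : UnipotentUpper (1 + M : Matrix (Fin (m + 1)) (Fin (m + 1)) E) := by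
      constructor
      · intro i j hij
        rw [Matrix.add_apply, Matrix.one_apply_ne (ne_of_gt hij), hMapp]
        rw [if_neg (fun h => (ne_of_gt (lt_of_le_of_lt (hz ▸ Fin.zero_le j) hij)) h.1),
          add_zero]
      · intro i
        rw [Matrix.add_apply, Matrix.one_apply_eq, hMapp,
          if_neg (fun h => h.2 h.1), add_zero]
    refine ⟨(1 + N) * expand i₀ i₀ 1 T', expand i₀ i₀ u U', π,
      expand z z 1 V' * (1 + M), ?_, ?_, ?_, ?_, ?_, ?_, ?_, ?_⟩
    · exact unipLower_mul hNunip (expand_unipLower hT'u)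
    · apply GP.mul 𝒜 (fun i j => add_mem (GP.one 𝒜 δr i j) (hNGP i j))
      apply expand_GP 𝒜 (by rw [sub_self]; exact SetLike.one_mem_graded 𝒜) hT'g
    · exact expand_isDiag hU'd
    · intro i
      rcases eq_or_ne i i₀ with hi | hi
      · rw [hi, expand_pivot]; exact hu
      · obtain ⟨a, ha⟩ := Fin.exists_succAbove_eq hi
        rw [← ha, expand_sub]; exact hU'units a
    · intro i
      rcases eq_or_ne i i₀ with hi | hi
      · rw [hi, expand_pivot, hπ, liftPerm_pivot]; exact humem
      · obtain ⟨a, ha⟩ := Fin.exists_succAbove_eq hi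
        rw [← ha, expand_sub, hπ, liftPerm_sub]
        exact hU'g a
    · exact unipUpper_mul (expand_unipUpper hV'u) hMunip
    · apply GP.mul 𝒜
      · apply expand_GP 𝒜 (by rw [sub_self]; exact SetLike.one_mem_graded 𝒜) hV'g
      · exact fun i j => add_mem (GP.one 𝒜 δc i j) (hMGP i j)
    · rw [hAfac, hCfac]
      simp only [Matrix.mul_assoc]

lemma GP.pow {m : ℕ} {g : Fin m → Γ} {X : Matrix (Fin m) (Fin m) E}
    (hX : GP 𝒜 g g X) : ∀ k, GP 𝒜 g g (X ^ k) := by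
  intro k
  induction k with
  | zero => rw [pow_zero]; exact GP.one 𝒜 g
  | succ k ihk => rw [pow_succ]; exact GP.mul 𝒜 ihk hX

lemma suppU_inv {m : ℕ} {r : Fin m → Fin m → Prop}
    (hlt : ∀ {i j}, r i j → i < j) (htrans : ∀ {a b c}, r a b → r b c → r a c)
    {g : Fin m → Γ} {X : Matrix (Fin m) (Fin m) E}
    (hX : SuppU r X) (hg : GP 𝒜 g g X) :
    ∃ X', SuppU r X' ∧ GP 𝒜 g g X' ∧ X * X' = 1 ∧ X' * X = 1 := by
  set N : Matrix (Fin m) (Fin m) E := X - 1 with hNdef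
  have hsupp : ∀ i j, N i j ≠ 0 → r i j := by
    intro i j hij
    by_cases h : i = j
    · exact absurd (by rw [hNdef, Matrix.sub_apply, h, hX.1, Matrix.one_apply_eq, sub_self]) hij
    · apply hX.2 i j h
      intro h0
      exact hij (by rw [hNdef, Matrix.sub_apply, h0, Matrix.one_apply_ne h, sub_zero])
  have hpow : N ^ m = 0 := by
    apply pow_eq_zero_of_strict N (fun i => (i : ℕ)) (fun i => i.2)
    intro i j hij
    exact hlt (hsupp i j hij)
  have hXN : X = 1 + N := by rw [hNdef]; abel
  have hgi := geom_inv N hpow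
  have hpowsupp := strict_pow_support (-N) r htrans
    (fun i j hij => hsupp i j (by simpa using hij))
  refine ⟨∑ k ∈ Finset.range m, (-N) ^ k, ⟨?_, ?_⟩, ?_, by rw [hXN]; exact hgi.1,
    by rw [hXN]; exact hgi.2⟩
  · intro i
    rw [Matrix.sum_apply, Finset.sum_eq_single 0]
    · rw [pow_zero, Matrix.one_apply_eq]
    · intro k _ h0
      by_contra hc
      exact absurd (hlt (hpowsupp k (Nat.pos_of_ne_zero h0) i i hc)) (lt_irrefl i)
    · intro h; exact absurd (Finset.mem_range.mpr i.pos) h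
  · intro i j hij h0
    by_contra hr
    apply h0
    rw [Matrix.sum_apply]
    apply Finset.sum_eq_zero
    intro k hk
    rcases Nat.eq_zero_or_pos k with hk0 | hk0
    · subst hk0; rw [pow_zero]; exact Matrix.one_apply_ne hij
    · by_contra hc
      exact hr (hpowsupp k hk0 i j hc)
  · intro i j
    rw [Matrix.sum_apply]
    apply AddSubgroup.sum_mem
    intro k _
    have hNg : GP 𝒜 g g (-N) := by
      intro a b
      have hab : (-N) a b = -(X a b - (1 : Matrix (Fin m) (Fin m) E) a b) := by
        rw [hNdef]; rfl
      rw [hab]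
      exact neg_mem (sub_mem (hg a b) (GP.one 𝒜 g a b))
    exact GP.pow 𝒜 hNg k i j

lemma strictify {m : ℕ} (g : Fin m → Γ) (π : Equiv.Perm (Fin m))
    {V : Matrix (Fin m) (Fin m) E} (hV : UnipotentUpper V) (hg : GP 𝒜 g g V) :
    ∃ W V₂ : Matrix (Fin m) (Fin m) E,
      V = W * V₂ ∧ SuppU (fun i j => i < j ∧ π⁻¹ j < π⁻¹ i) W ∧
      SuppU (fun i j => i < j ∧ π⁻¹ i < π⁻¹ j) V₂ ∧ GP 𝒜 g g W ∧ GP 𝒜 g g V₂ := by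
  classical
  have hBlt : ∀ {i j : Fin m}, (i < j ∧ π⁻¹ j < π⁻¹ i) → i < j := fun h => h.1
  have hBtr : ∀ {a b c : Fin m}, (a < b ∧ π⁻¹ b < π⁻¹ a) → (b < c ∧ π⁻¹ c < π⁻¹ b) →
      (a < c ∧ π⁻¹ c < π⁻¹ a) := fun h1 h2 => ⟨lt_trans h1.1 h2.1, lt_trans h2.2 h1.2⟩
  have hGlt : ∀ {i j : Fin m}, (i < j ∧ π⁻¹ i < π⁻¹ j) → i < j := fun h => h.1
  have hGtr : ∀ {a b c : Fin m}, (a < b ∧ π⁻¹ a < π⁻¹ b) → (b < c ∧ π⁻¹ b < π⁻¹ c) →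
      (a < c ∧ π⁻¹ a < π⁻¹ c) := fun h1 h2 => ⟨lt_trans h1.1 h2.1, lt_trans h1.2 h2.2⟩
  suffices haux : ∀ (t d : ℕ), m ≤ d + t → ∀ V : Matrix (Fin m) (Fin m) E,
      UnipotentUpper V → GP 𝒜 g g V →
      (∀ i j : Fin m, i ≠ j → (j : ℕ) < (i : ℕ) + d → V i j = 0) →
      ∃ W V₂ : Matrix (Fin m) (Fin m) E,
        V = W * V₂ ∧ SuppU (fun i j => i < j ∧ π⁻¹ j < π⁻¹ i) W ∧
        SuppU (fun i j => i < j ∧ π⁻¹ i < π⁻¹ j) V₂ ∧ GP 𝒜 g g W ∧ GP 𝒜 g g V₂ by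
    apply haux m 0 (by omega) V hV hg
    intro i j hij hj
    exact hV.1 i j (by rw [Fin.lt_def]; omega)
  intro t
  induction t with
  | zero =>
    intro d hd V hVu hVg hsmall
    refine ⟨1, V, by rw [one_mul], suppU_one _, ⟨hVu.2, ?_⟩, GP.one 𝒜 g, hVg⟩
    intro i j hij h0
    exact absurd (hsmall i j hij (by have := j.2; omega)) h0
  | succ t ih =>
    intro d hd V hVu hVg hsmall
    by_cases hdt : m ≤ d + t
    · exact ih d hdt V hVu hVg hsmall
    · rcases Nat.eq_zero_or_pos d with hd0 | hd1
      · subst hd0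
        apply ih 1 (by omega) V hVu hVg
        intro i j hij hj
        exact hVu.1 i j (by rw [Fin.lt_def]; omega)
      · set NX : Matrix (Fin m) (Fin m) E := Matrix.of (fun i j =>
          if (j : ℕ) = (i : ℕ) + d ∧ π⁻¹ j < π⁻¹ i then -(V i j) else 0) with hNX
        set NY : Matrix (Fin m) (Fin m) E := Matrix.of (fun i j =>
          if (j : ℕ) = (i : ℕ) + d ∧ π⁻¹ i < π⁻¹ j then -(V i j) else 0) with hNY
        have hNXapp : ∀ i j, NX i j =
            if (j : ℕ) = (i : ℕ) + d ∧ π⁻¹ j < π⁻¹ i then -(V i j) else 0 := fun _ _ => rfl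
        have hNYapp : ∀ i j, NY i j =
            if (j : ℕ) = (i : ℕ) + d ∧ π⁻¹ i < π⁻¹ j then -(V i j) else 0 := fun _ _ => rfl
        set V' : Matrix (Fin m) (Fin m) E := (1 + NX) * V * (1 + NY) with hV'
        have hexp : V' = V + NX * V + V * NY + NX * (V * NY) := by
          rw [hV']; noncomm_ring
        have hV'small : ∀ i j : Fin m, i ≠ j → (j : ℕ) < (i : ℕ) + (d + 1) → V' i j = 0 := by
          intro i j hij hj
          rw [hexp, Matrix.add_apply, Matrix.add_apply, Matrix.add_apply]
          rcases Nat.lt_or_ge (j : ℕ) ((i : ℕ) + d) with hlt | hge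
          · have h1 : V i j = 0 := hsmall i j hij hlt
            have h2 : (NX * V) i j = 0 := by
              rw [Matrix.mul_apply]
              apply Finset.sum_eq_zero
              intro k _
              by_cases hk : (k : ℕ) = (i : ℕ) + d
              · rw [hVu.1 k j (by rw [Fin.lt_def]; omega), mul_zero]
              · rw [hNXapp, if_neg (fun h => hk h.1), zero_mul]
            have h3 : (V * NY) i j = 0 := by
              rw [Matrix.mul_apply]
              apply Finset.sum_eq_zero
              intro k _
              by_cases hk : (j : ℕ) = (k : ℕ) + d
              · rw [hVu.1 i k (by rw [Fin.lt_def]; omega), zero_mul]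
              · rw [hNYapp, if_neg (fun h => hk h.1), mul_zero]
            have h4 : (NX * (V * NY)) i j = 0 := by
              rw [Matrix.mul_apply]
              apply Finset.sum_eq_zero
              intro k _
              by_cases hk : (k : ℕ) = (i : ℕ) + d
              · have hin : (V * NY) k j = 0 := by
                  rw [Matrix.mul_apply]
                  apply Finset.sum_eq_zero
                  intro l _
                  by_cases hl : (j : ℕ) = (l : ℕ) + d
                  · rw [hVu.1 k l (by rw [Fin.lt_def]; omega), zero_mul]
                  · rw [hNYapp, if_neg (fun h => hl h.1), mul_zero]
                rw [hin, mul_zero]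
              · rw [hNXapp, if_neg (fun h => hk h.1), zero_mul]
            rw [h1, h2, h3, h4, add_zero, add_zero, add_zero]
          · have hjd : (j : ℕ) = (i : ℕ) + d := by omega
            have h2 : (NX * V) i j = NX i j := by
              rw [Matrix.mul_apply, Finset.sum_eq_single j]
              · rw [hVu.2, mul_one]
              · intro k _ hk
                rw [hNXapp, if_neg (fun h => hk (Fin.ext (by omega))), zero_mul]
              · simp
            have h3 : (V * NY) i j = NY i j := by
              rw [Matrix.mul_apply, Finset.sum_eq_single i]
              · rw [hVu.2, one_mul]
              · intro k _ hk
                rw [hNYapp, if_neg (fun h => hk (Fin.ext (by omega))), mul_zero]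
              · simp
            have h4 : (NX * (V * NY)) i j = 0 := by
              rw [Matrix.mul_apply]
              apply Finset.sum_eq_zero
              intro k _
              by_cases hk : k = j
              · have hin : (V * NY) j j = 0 := by
                  rw [Matrix.mul_apply]
                  apply Finset.sum_eq_zero
                  intro l _
                  by_cases hl : (j : ℕ) = (l : ℕ) + d
                  · rw [hVu.1 j l (by rw [Fin.lt_def]; omega), zero_mul]
                  · rw [hNYapp, if_neg (fun h => hl h.1), mul_zero]
                rw [hk, hin, mul_zero]
              · rw [hNXapp, if_neg (fun h => hk (Fin.ext (by omega))), zero_mul]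
            rw [h2, h3, h4, add_zero, hNXapp, hNYapp]
            have hπ : π⁻¹ i ≠ π⁻¹ j := fun h => hij (π⁻¹.injective h)
            rcases lt_or_gt_of_ne hπ with hπlt | hπlt
            · rw [if_neg (fun h => absurd h.2 (not_lt.mpr (le_of_lt hπlt))),
                if_pos ⟨hjd, hπlt⟩, add_zero]
              abel
            · rw [if_pos ⟨hjd, hπlt⟩, if_neg (fun h => absurd h.2 (not_lt.mpr (le_of_lt hπlt)))]
              abel
        have hXu : UnipotentUpper (1 + NX : Matrix (Fin m) (Fin m) E) := by
          constructor
          · intro i j hij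
            rw [Matrix.add_apply, Matrix.one_apply_ne (ne_of_gt hij), hNXapp,
              if_neg (fun h => by rw [Fin.lt_def] at hij; omega), add_zero]
          · intro i
            rw [Matrix.add_apply, Matrix.one_apply_eq, hNXapp,
              if_neg (fun h => by omega), add_zero]
        have hYu : UnipotentUpper (1 + NY : Matrix (Fin m) (Fin m) E) := by
          constructor
          · intro i j hij
            rw [Matrix.add_apply, Matrix.one_apply_ne (ne_of_gt hij), hNYapp,
              if_neg (fun h => by rw [Fin.lt_def] at hij; omega), add_zero]
          · intro i
            rw [Matrix.add_apply, Matrix.one_apply_eq, hNYapp,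
              if_neg (fun h => by omega), add_zero]
        have hXg : GP 𝒜 g g (1 + NX : Matrix (Fin m) (Fin m) E) := by
          intro i j
          apply add_mem (GP.one 𝒜 g i j)
          rw [hNXapp]
          by_cases h : (j : ℕ) = (i : ℕ) + d ∧ π⁻¹ j < π⁻¹ i
          · rw [if_pos h]; exact neg_mem (hVg i j)
          · rw [if_neg h]; exact zero_mem _
        have hYg : GP 𝒜 g g (1 + NY : Matrix (Fin m) (Fin m) E) := by
          intro i j
          apply add_mem (GP.one 𝒜 g i j)
          rw [hNYapp]
          by_cases h : (j : ℕ) = (i : ℕ) + d ∧ π⁻¹ i < π⁻¹ j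
          · rw [if_pos h]; exact neg_mem (hVg i j)
          · rw [if_neg h]; exact zero_mem _
        have hXs : SuppU (fun i j => i < j ∧ π⁻¹ j < π⁻¹ i) (1 + NX : Matrix (Fin m) (Fin m) E) := by
          constructor
          · intro i
            rw [Matrix.add_apply, Matrix.one_apply_eq, hNXapp,
              if_neg (fun h => by omega), add_zero]
          · intro i j hij h0
            rw [Matrix.add_apply, Matrix.one_apply_ne hij, zero_add, hNXapp] at h0
            by_cases h : (j : ℕ) = (i : ℕ) + d ∧ π⁻¹ j < π⁻¹ i
            · exact ⟨by rw [Fin.lt_def]; omega, h.2⟩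
            · rw [if_neg h] at h0; exact absurd rfl h0
        have hYs : SuppU (fun i j => i < j ∧ π⁻¹ i < π⁻¹ j) (1 + NY : Matrix (Fin m) (Fin m) E) := by
          constructor
          · intro i
            rw [Matrix.add_apply, Matrix.one_apply_eq, hNYapp,
              if_neg (fun h => by omega), add_zero]
          · intro i j hij h0
            rw [Matrix.add_apply, Matrix.one_apply_ne hij, zero_add, hNYapp] at h0
            by_cases h : (j : ℕ) = (i : ℕ) + d ∧ π⁻¹ i < π⁻¹ j
            · exact ⟨by rw [Fin.lt_def]; omega, h.2⟩
            · rw [if_neg h] at h0; exact absurd rfl h0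
        have hV'u : UnipotentUpper V' := by
          rw [hV']
          exact unipUpper_mul (unipUpper_mul hXu hVu) hYu
        have hV'g : GP 𝒜 g g V' := by
          rw [hV']
          exact GP.mul 𝒜 (GP.mul 𝒜 hXg hVg) hYg
        obtain ⟨W', V₂', hfac, hW's, hV₂'s, hW'g, hV₂'g⟩ :=
          ih (d + 1) (by omega) V' hV'u hV'g hV'small
        obtain ⟨Xi, hXis, hXig, hXi1, hXi2⟩ := suppU_inv 𝒜 hBlt hBtr hXs hXg
        obtain ⟨Yi, hYis, hYig, hYi1, hYi2⟩ := suppU_inv 𝒜 hGlt hGtr hYs hYg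
        refine ⟨Xi * W', V₂' * Yi, ?_, suppU_mul hBlt hBtr hXis hW's,
          suppU_mul hGlt hGtr hV₂'s hYis, GP.mul 𝒜 hXig hW'g, GP.mul 𝒜 hV₂'g hYig⟩
        have hVeq : V = Xi * V' * Yi := by
          rw [hV']
          have h1 : Xi * ((1 + NX) * V * (1 + NY)) * Yi
              = (Xi * (1 + NX)) * V * ((1 + NY) * Yi) := by
            simp only [Matrix.mul_assoc]
          rw [h1, hXi2, hYi1, one_mul, mul_one]
        rw [hVeq, hfac]
        simp only [Matrix.mul_assoc]

end Graded

end BruhatAux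

open BruhatAux in
/-- Bruhat normal form.  Let `E` be a `Γ`-graded division ring
(`Γ` abelian), `δ̄ ∈ Γⁿ`, and `S = Mₙ(E)(δ̄)`.  Every homogeneous unit `A` of `S`
has a unique strict Bruhat normal form `A = T * U * P_π * V`; moreover `T`, `U * P_π`
and `V` are homogeneous with `deg T = deg V = 0`, `deg (U * P_π) = deg A`, and `T` is a
product of homogeneous elementary matrices (of degree `0`). -/
theorem bruhat_normal_form {Γ E : Type*} [AddCommGroup Γ] [DecidableEq Γ]
    [Ring E] [Nontrivial E] (𝒜 : Γ → AddSubgroup E) [GradedRing 𝒜]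
    (hdiv : ∀ (γ : Γ) (x : E), x ∈ 𝒜 γ → x ≠ 0 → IsUnit x)
    {n : ℕ} (δ : Fin n → Γ)
    (A : Matrix (Fin n) (Fin n) E) (hA : IsUnit A)
    (lam : Γ) (hAhom : A ∈ MatrixGrade 𝒜 δ lam) :
    ∃ (T U : Matrix (Fin n) (Fin n) E) (π : Equiv.Perm (Fin n))
      (V : Matrix (Fin n) (Fin n) E),
      -- strict Bruhat normal form
      (UnipotentLower T ∧ U.IsDiag ∧ IsUnit U ∧ UnipotentUpper V ∧
        UnipotentUpper (π.permMatrix E * V * (π⁻¹).permMatrix E) ∧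
        A = T * U * π.permMatrix E * V) ∧
      -- homogeneity of the factors
      (T ∈ MatrixGrade 𝒜 δ 0 ∧ V ∈ MatrixGrade 𝒜 δ 0 ∧
        U * π.permMatrix E ∈ MatrixGrade 𝒜 δ lam ∧
        T ∈ Submonoid.closure {e : Matrix (Fin n) (Fin n) E |
          ∃ (i j : Fin n) (x : E), i ≠ j ∧ x ∈ 𝒜 (δ j - δ i) ∧
            e = 1 + Matrix.single i j x}) ∧
      -- uniqueness of the strict Bruhat normal form
      ∀ (T' U' : Matrix (Fin n) (Fin n) E) (π' : Equiv.Perm (Fin n))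
        (V' : Matrix (Fin n) (Fin n) E),
        UnipotentLower T' → U'.IsDiag → IsUnit U' → UnipotentUpper V' →
        UnipotentUpper (π'.permMatrix E * V' * (π'⁻¹).permMatrix E) →
        A = T' * U' * π'.permMatrix E * V' →
        T' = T ∧ U' = U ∧ π' = π ∧ V' = V := by
  classical
  obtain ⟨T₀, U, π, V₀, hT₀u, hT₀g, hUd, hUunits, hUg, hV₀u, hV₀g, hfac⟩ :=
    exists_dec 𝒜 hdiv δ (fun j => lam + δ j) A hA hAhom
  have hV₀g' : GP 𝒜 δ δ V₀ := by
    intro i j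
    have h : V₀ i j ∈ 𝒜 ((lam + δ j) - (lam + δ i)) := hV₀g i j
    have he : (lam + δ j) - (lam + δ i) = δ j - δ i := by abel
    rwa [he] at h
  obtain ⟨W, V₂, hVfac, hWs, hV₂s, hWg, hV₂g⟩ := strictify 𝒜 δ π hV₀u hV₀g'
  set L : Matrix (Fin n) (Fin n) E := Matrix.of (fun a b =>
    U a a * W (π a) (π b) * (Units.val (hUunits b).unit⁻¹)) with hLdef
  have hLapp : ∀ a b, L a b = U a a * W (π a) (π b) * (Units.val (hUunits b).unit⁻¹) :=
    fun _ _ => rfl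
  have hLu : UnipotentLower L := by
    constructor
    · intro i j hij
      rw [hLapp]
      have hW0 : W (π i) (π j) = 0 := by
        by_contra h0
        by_cases hpp : π i = π j
        · exact absurd (π.injective hpp) (ne_of_lt hij)
        · have hb : π i < π j ∧ π⁻¹ (π j) < π⁻¹ (π i) := hWs.2 (π i) (π j) hpp h0
          rw [Equiv.Perm.inv_apply_self, Equiv.Perm.inv_apply_self] at hb
          exact absurd hb.2 (not_lt.mpr (le_of_lt hij))
      rw [hW0, mul_zero, zero_mul]
    · intro i
      rw [hLapp, hWs.1 (π i), mul_one, (hUunits i).mul_val_inv]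
  have hLg : GP 𝒜 δ δ L := by
    intro a b
    rw [hLapp]
    have h1 : U a a ∈ 𝒜 ((lam + δ (π a)) - δ a) := hUg a
    have h2 : W (π a) (π b) ∈ 𝒜 (δ (π b) - δ (π a)) := hWg (π a) (π b)
    have h3 : Units.val (hUunits b).unit⁻¹ ∈ 𝒜 (-((lam + δ (π b)) - δ b)) :=
      inv_mem_neg 𝒜 _ (U b b) _ (hUg b) (hUunits b).mul_val_inv (hUunits b).val_inv_mul
    have hm := SetLike.mul_mem_graded (SetLike.mul_mem_graded h1 h2) h3
    have he : (((lam + δ (π a)) - δ a) + (δ (π b) - δ (π a))) + -((lam + δ (π b)) - δ b)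
        = δ b - δ a := by abel
    rwa [he] at hm
  have h1 : ∀ i j, (L * (U * π.permMatrix E)) i j
      = L i (π⁻¹ j) * U (π⁻¹ j) (π⁻¹ j) := by
    intro i j
    rw [Matrix.mul_apply, Finset.sum_eq_single (π⁻¹ j)]
    · rw [diag_mul_permMatrix hUd, if_pos (Equiv.Perm.apply_inv_self π j)]
    · intro k _ hk
      rw [diag_mul_permMatrix hUd,
        if_neg (fun h => hk (by rw [← h, Equiv.Perm.inv_apply_self])), mul_zero]
    · simp
  have h2 : ∀ i j, ((U * π.permMatrix E) * W) i j = U i i * W (π i) j := by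
    intro i j
    rw [Matrix.mul_apply, Finset.sum_eq_single (π i)]
    · rw [diag_mul_permMatrix hUd, if_pos rfl]
    · intro k _ hk
      rw [diag_mul_permMatrix hUd, if_neg (fun h => hk h.symm), zero_mul]
    · simp
  have hcomm : L * (U * π.permMatrix E) = (U * π.permMatrix E) * W := by
    ext i j
    rw [h1, h2, hLapp, Equiv.Perm.apply_inv_self, mul_assoc,
      (hUunits (π⁻¹ j)).val_inv_mul, mul_one]
  set Tfin : Matrix (Fin n) (Fin n) E := T₀ * L with hTfin
  have hAeq : A = Tfin * U * π.permMatrix E * V₂ := by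
    rw [hfac, hVfac, hTfin]
    calc T₀ * U * π.permMatrix E * (W * V₂)
        = T₀ * ((U * π.permMatrix E) * W) * V₂ := by simp only [Matrix.mul_assoc]
      _ = T₀ * (L * (U * π.permMatrix E)) * V₂ := by rw [hcomm]
      _ = T₀ * L * U * π.permMatrix E * V₂ := by simp only [Matrix.mul_assoc]
  have hTfinu : UnipotentLower Tfin := unipLower_mul hT₀u hLu
  have hTfing : GP 𝒜 δ δ Tfin := GP.mul 𝒜 hT₀g hLg
  have hV₂u : UnipotentUpper V₂ := by
    constructor
    · intro i j hij
      by_contra h0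
      exact absurd (hV₂s.2 i j (ne_of_gt hij) h0).1 (not_lt.mpr (le_of_lt hij))
    · exact hV₂s.1
  have hstrict : UnipotentUpper (π.permMatrix E * V₂ * (π⁻¹).permMatrix E) := by
    constructor
    · intro i j hij
      rw [permMatrix_conj]
      by_contra h0
      by_cases hpp : π i = π j
      · exact absurd (π.injective hpp) (ne_of_gt hij)
      · have hb : π i < π j ∧ π⁻¹ (π i) < π⁻¹ (π j) := hV₂s.2 (π i) (π j) hpp h0
        rw [Equiv.Perm.inv_apply_self, Equiv.Perm.inv_apply_self] at hb
        exact absurd hb.2 (not_lt.mpr (le_of_lt hij))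
    · intro i
      rw [permMatrix_conj]
      exact hV₂s.1 (π i)
  have hUunit : IsUnit U := isUnit_of_isDiag hUd hUunits
  refine ⟨Tfin, U, π, V₂, ⟨hTfinu, hUd, hUunit, hV₂u, hstrict, hAeq⟩, ⟨?_, ?_, ?_, ?_⟩, ?_⟩
  · intro i j
    have he : (0 : Γ) + δ j - δ i = δ j - δ i := by abel
    rw [he]
    exact hTfing i j
  · intro i j
    have he : (0 : Γ) + δ j - δ i = δ j - δ i := by abel
    rw [he]
    exact hV₂g i j
  · intro i j
    rw [diag_mul_permMatrix hUd]
    by_cases h : π i = j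
    · rw [if_pos h, ← h]
      exact hUg i
    · rw [if_neg h]
      exact zero_mem _
  · exact unipLower_mem_closure 𝒜 δ hTfinu hTfing
  · intro T' U' π' V' hT' hU'd hU'u hV' hV's heq'
    exact bruhat_unique hTfinu hUd hUunit hV₂u hstrict hT' hU'd hU'u hV' hV's
      (hAeq.symm.trans heq')
end

section
/- Let R be any ring with 1 and n ≥ 1. Suppose a matrix in Mₙ(R) admits two strict Bruhat normal forms T₁·U₁·P_{π₁}·V₁ = T₂·U₂·P_{π₂}·V₂ (each Tᵢ unipotent lower triangular, each Uᵢ an invertible diagonal matrix, each P_{πᵢ} a permutation matrix, each Vᵢ unipotent upper triangular with P_{πᵢ}·Vᵢ·P_{πᵢ}^{-1} unipotent upper triangular). Then T₁ = T₂, U₁ = U₂, π₁ = π₂, and V₁ = V₂. -/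
section Helpers

variable {R : Type*} [Ring R] {n : ℕ}

private lemma strict_lower_pow (N : Matrix (Fin n) (Fin n) R)
    (hN : ∀ i j : Fin n, i ≤ j → N i j = 0) :
    ∀ m (i j : Fin n), (i : ℕ) < (j : ℕ) + m → (N ^ m) i j = 0 := by
  intro m
  induction m with
  | zero =>
    intro i j hij
    rw [pow_zero]
    exact Matrix.one_apply_ne (fun h => by subst h; omega)
  | succ m IH =>
    intro i j hij
    rw [pow_succ, Matrix.mul_apply]
    apply Finset.sum_eq_zero
    intro k _
    by_cases hk : (j : ℕ) < (k : ℕ)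
    · rw [IH i k (by omega), zero_mul]
    · rw [hN k j (Fin.le_def.mpr (by omega)), mul_zero]

private lemma strict_upper_pow (N : Matrix (Fin n) (Fin n) R)
    (hN : ∀ i j : Fin n, j ≤ i → N i j = 0) :
    ∀ m (i j : Fin n), (j : ℕ) < (i : ℕ) + m → (N ^ m) i j = 0 := by
  intro m
  induction m with
  | zero =>
    intro i j hij
    rw [pow_zero]
    exact Matrix.one_apply_ne (fun h => by subst h; omega)
  | succ m IH =>
    intro i j hij
    rw [pow_succ, Matrix.mul_apply]
    apply Finset.sum_eq_zero
    intro k _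
    by_cases hk : (k : ℕ) < (j : ℕ)
    · rw [IH i k (by omega), zero_mul]
    · rw [hN k j (Fin.le_def.mpr (by omega)), mul_zero]

private lemma unipLower_isUnit {T : Matrix (Fin n) (Fin n) R}
    (hT : UnipotentLower T) : IsUnit T := by
  have hN : ∀ i j : Fin n, i ≤ j → (T - 1) i j = 0 := by
    intro i j hij
    rcases eq_or_lt_of_le hij with rfl | h
    · simp [Matrix.sub_apply, hT.2, Matrix.one_apply_eq]
    · simp [Matrix.sub_apply, hT.1 i j h, Matrix.one_apply_ne (ne_of_lt h)]
  have hnil : IsNilpotent (T - 1) := ⟨n, by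
    ext i j
    rw [strict_lower_pow _ hN n i j (by have := i.isLt; omega)]
    exact (Matrix.zero_apply _ _).symm⟩
  have h := hnil.isUnit_one_add
  rwa [show (1 : Matrix (Fin n) (Fin n) R) + (T - 1) = T by abel] at h

private lemma unipUpper_isUnit {V : Matrix (Fin n) (Fin n) R}
    (hV : UnipotentUpper V) : IsUnit V := by
  have hN : ∀ i j : Fin n, j ≤ i → (V - 1) i j = 0 := by
    intro i j hij
    rcases eq_or_lt_of_le hij with rfl | h
    · simp [Matrix.sub_apply, hV.2, Matrix.one_apply_eq]
    · simp [Matrix.sub_apply, hV.1 i j h, Matrix.one_apply_ne (ne_of_gt h)]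
  have hnil : IsNilpotent (V - 1) := ⟨n, by
    ext i j
    rw [strict_upper_pow _ hN n i j (by have := j.isLt; omega)]
    exact (Matrix.zero_apply _ _).symm⟩
  have h := hnil.isUnit_one_add
  rwa [show (1 : Matrix (Fin n) (Fin n) R) + (V - 1) = V by abel] at h

private lemma unipLower_mul {A B : Matrix (Fin n) (Fin n) R}
    (hA : UnipotentLower A) (hB : UnipotentLower B) : UnipotentLower (A * B) := by
  constructor
  · intro i j hij
    rw [Matrix.mul_apply]
    apply Finset.sum_eq_zero
    intro k _
    by_cases hk : i < k
    · rw [hA.1 i k hk, zero_mul]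
    · rw [hB.1 k j (lt_of_le_of_lt (not_lt.mp hk) hij), mul_zero]
  · intro i
    rw [Matrix.mul_apply, Finset.sum_eq_single i]
    · rw [hA.2, hB.2, one_mul]
    · intro k _ hk
      rcases lt_or_gt_of_ne hk with h | h
      · rw [hB.1 k i h, mul_zero]
      · rw [hA.1 i k h, zero_mul]
    · simp

private lemma unipUpper_mul {A B : Matrix (Fin n) (Fin n) R}
    (hA : UnipotentUpper A) (hB : UnipotentUpper B) : UnipotentUpper (A * B) := by
  constructor
  · intro i j hij
    rw [Matrix.mul_apply]
    apply Finset.sum_eq_zero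
    intro k _
    by_cases hk : k < i
    · rw [hA.1 i k hk, zero_mul]
    · rw [hB.1 k j (lt_of_lt_of_le hij (not_lt.mp hk)), mul_zero]
  · intro i
    rw [Matrix.mul_apply, Finset.sum_eq_single i]
    · rw [hA.2, hB.2, one_mul]
    · intro k _ hk
      rcases lt_or_gt_of_ne hk with h | h
      · rw [hA.1 i k h, zero_mul]
      · rw [hB.1 k i h, mul_zero]
    · simp

private lemma unipLower_inv {T B : Matrix (Fin n) (Fin n) R}
    (hT : UnipotentLower T) (h : T * B = 1) : UnipotentLower B := by
  have key : ∀ m : ℕ, ∀ i : Fin n, (i : ℕ) = m →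
      (∀ j, i < j → B i j = 0) ∧ B i i = 1 := by
    intro m
    induction m using Nat.strong_induction_on with
    | _ m IH =>
      intro i him
      have hrow : ∀ j : Fin n, i ≤ j → B i j = (1 : Matrix (Fin n) (Fin n) R) i j := by
        intro j hij
        have he : ∑ k, T i k * B k j = (1 : Matrix (Fin n) (Fin n) R) i j := by
          rw [← Matrix.mul_apply, h]
        rw [Finset.sum_eq_single i] at he
        · rwa [hT.2 i, one_mul] at he
        · intro k _ hk
          rcases lt_or_gt_of_ne hk with hlt | hgt
          · have hk' : (k : ℕ) < m := by
              have h2 : (k : ℕ) < (i : ℕ) := hlt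
              omega
            rw [(IH (k : ℕ) hk' k rfl).1 j (lt_of_lt_of_le hlt hij), mul_zero]
          · rw [hT.1 i k hgt, zero_mul]
        · simp
      constructor
      · intro j hij
        have h3 := hrow j hij.le
        rwa [Matrix.one_apply_ne (ne_of_lt hij)] at h3
      · have h3 := hrow i le_rfl
        rwa [Matrix.one_apply_eq] at h3
  exact ⟨fun i j hij => (key i i rfl).1 j hij, fun i => (key i i rfl).2⟩

private lemma unipUpper_inv {V B : Matrix (Fin n) (Fin n) R}
    (hV : UnipotentUpper V) (h : B * V = 1) : UnipotentUpper B := by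
  have key : ∀ m : ℕ, ∀ j : Fin n, (j : ℕ) = m →
      (∀ i, j < i → B i j = 0) ∧ B j j = 1 := by
    intro m
    induction m using Nat.strong_induction_on with
    | _ m IH =>
      intro j hjm
      have hcol : ∀ i : Fin n, j ≤ i → B i j = (1 : Matrix (Fin n) (Fin n) R) i j := by
        intro i hij
        have he : ∑ k, B i k * V k j = (1 : Matrix (Fin n) (Fin n) R) i j := by
          rw [← Matrix.mul_apply, h]
        rw [Finset.sum_eq_single j] at he
        · rwa [hV.2 j, mul_one] at he
        · intro k _ hk
          rcases lt_or_gt_of_ne hk with hlt | hgt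
          · have hk' : (k : ℕ) < m := by
              have h2 : (k : ℕ) < (j : ℕ) := hlt
              omega
            rw [(IH (k : ℕ) hk' k rfl).1 i (lt_of_lt_of_le hlt hij), zero_mul]
          · rw [hV.1 k j hgt, mul_zero]
        · simp
      constructor
      · intro i hij
        have h3 := hcol i hij.le
        rwa [Matrix.one_apply_ne (ne_of_gt hij)] at h3
      · have h3 := hcol j le_rfl
        rwa [Matrix.one_apply_eq] at h3
  exact ⟨fun i j hij => (key j j rfl).1 i hij, fun j => (key j j rfl).2⟩

private lemma diag_units {U : Matrix (Fin n) (Fin n) R} (hd : U.IsDiag) (hu : IsUnit U) :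
    ∀ i, ∃ w : Rˣ, (w : R) = U i i := by
  obtain ⟨B, h1, h2⟩ : ∃ B, U * B = 1 ∧ B * U = 1 := by
    obtain ⟨u, hu⟩ := hu
    exact ⟨(u⁻¹ : (Matrix (Fin n) (Fin n) R)ˣ).val, by rw [← hu]; exact u.mul_inv, by rw [← hu]; exact u.inv_mul⟩
  intro i
  have e1 : (U * B) i i = 1 := by rw [h1]; exact Matrix.one_apply_eq i
  have e2 : (B * U) i i = 1 := by rw [h2]; exact Matrix.one_apply_eq i
  rw [Matrix.mul_apply, Finset.sum_eq_single i] at e1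
  rotate_left
  · intro k _ hk
    rw [hd (Ne.symm hk), zero_mul]
  · simp
  rw [Matrix.mul_apply, Finset.sum_eq_single i] at e2
  rotate_left
  · intro k _ hk
    rw [hd hk, mul_zero]
  · simp
  exact ⟨⟨U i i, B i i, e1, e2⟩, rfl⟩

private lemma perm_mul_perm_inv (σ : Equiv.Perm (Fin n)) :
    σ.permMatrix R * (σ⁻¹).permMatrix R = 1 := by
  show (σ.toPEquiv.toMatrix : Matrix (Fin n) (Fin n) R) * (σ⁻¹).toPEquiv.toMatrix = 1
  rw [← PEquiv.toMatrix_trans, ← Equiv.toPEquiv_trans]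
  simp [Equiv.Perm.inv_def]

end Helpers

/-- over any ring `R` with `1` (so `1 ≠ 0`) and `n ≥ 1`, the strict
Bruhat normal form of a matrix is unique: if
`T₁ * U₁ * P_{π₁} * V₁ = T₂ * U₂ * P_{π₂} * V₂` are two strict Bruhat normal forms,
then `T₁ = T₂`, `U₁ = U₂`, `π₁ = π₂` and `V₁ = V₂`. -/
theorem strict_bruhat_unique {R : Type*} [Ring R] [Nontrivial R] {n : ℕ} (hn : 1 ≤ n)
    (T₁ T₂ U₁ U₂ V₁ V₂ : Matrix (Fin n) (Fin n) R) (π₁ π₂ : Equiv.Perm (Fin n))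
    (hT₁ : UnipotentLower T₁) (hT₂ : UnipotentLower T₂)
    (hU₁ : U₁.IsDiag) (hU₁u : IsUnit U₁) (hU₂ : U₂.IsDiag) (hU₂u : IsUnit U₂)
    (hV₁ : UnipotentUpper V₁) (hV₂ : UnipotentUpper V₂)
    (hstrict₁ : UnipotentUpper (π₁.permMatrix R * V₁ * (π₁⁻¹).permMatrix R))
    (hstrict₂ : UnipotentUpper (π₂.permMatrix R * V₂ * (π₂⁻¹).permMatrix R))
    (heq : T₁ * U₁ * π₁.permMatrix R * V₁ = T₂ * U₂ * π₂.permMatrix R * V₂) :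
    T₁ = T₂ ∧ U₁ = U₂ ∧ π₁ = π₂ ∧ V₁ = V₂ := by
  classical
  -- entry formulas for permutation matrices
  have hPmul : ∀ (M : Matrix (Fin n) (Fin n) R) (σ : Equiv.Perm (Fin n)) (i j : Fin n),
      (σ.permMatrix R * M) i j = M (σ i) j := by
    intro M σ i j
    rw [show σ.permMatrix R * M = M.submatrix σ id from PEquiv.toMatrix_toPEquiv_mul σ M]
    rfl
  have hmulP : ∀ (M : Matrix (Fin n) (Fin n) R) (σ : Equiv.Perm (Fin n)) (i j : Fin n),
      (M * σ.permMatrix R) i j = M i (σ⁻¹ j) := by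
    intro M σ i j
    rw [show M * σ.permMatrix R = M.submatrix id σ.symm from PEquiv.mul_toMatrix_toPEquiv M σ]
    rfl
  -- inverses of T₂ and V₁
  obtain ⟨BT, hTBT, hBTT⟩ : ∃ B, T₂ * B = 1 ∧ B * T₂ = 1 := by
    obtain ⟨t, ht⟩ := unipLower_isUnit hT₂
    exact ⟨(t⁻¹ : (Matrix (Fin n) (Fin n) R)ˣ).val, by rw [← ht]; exact t.mul_inv, by rw [← ht]; exact t.inv_mul⟩
  obtain ⟨BV, hVBV, hBVV⟩ : ∃ B, V₁ * B = 1 ∧ B * V₁ = 1 := by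
    obtain ⟨v, hv⟩ := unipUpper_isUnit hV₁
    exact ⟨(v⁻¹ : (Matrix (Fin n) (Fin n) R)ˣ).val, by rw [← hv]; exact v.mul_inv, by rw [← hv]; exact v.inv_mul⟩
  have hBTl : UnipotentLower BT := unipLower_inv hT₂ hTBT
  have hBVu : UnipotentUpper BV := unipUpper_inv hV₁ hBVV
  set L : Matrix (Fin n) (Fin n) R := BT * T₁ with hLdef
  set W : Matrix (Fin n) (Fin n) R := V₂ * BV with hWdef
  have hL : UnipotentLower L := unipLower_mul hBTl hT₁
  have hW : UnipotentUpper W := unipUpper_mul hV₂ hBVu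
  have heq2 : L * U₁ * π₁.permMatrix R = U₂ * π₂.permMatrix R * W := by
    have e1 : L * U₁ * π₁.permMatrix R
        = BT * (T₁ * U₁ * π₁.permMatrix R * V₁) * BV := by
      rw [hLdef]
      simp only [Matrix.mul_assoc]
      rw [hVBV, Matrix.mul_one]
    have e2 : U₂ * π₂.permMatrix R * W
        = BT * (T₂ * U₂ * π₂.permMatrix R * V₂) * BV := by
      rw [hWdef]
      simp only [Matrix.mul_assoc]
      rw [← Matrix.mul_assoc BT T₂, hBTT, Matrix.one_mul]
    rw [e1, heq, ← e2]
  -- diagonal entries are units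
  have hu₁ : ∀ a, ∃ w : Rˣ, (w : R) = U₁ a a := diag_units hU₁ hU₁u
  have hu₂ : ∀ a, ∃ w : Rˣ, (w : R) = U₂ a a := diag_units hU₂ hU₂u
  -- the key entrywise equation
  have hU₁d : Matrix.diagonal U₁.diag = U₁ := hU₁.diagonal_diag
  have hU₂d : Matrix.diagonal U₂.diag = U₂ := hU₂.diagonal_diag
  have key : ∀ i a : Fin n, L i a * U₁ a a = U₂ i i * W (π₂ i) (π₁ a) := by
    intro i a
    have h := congrFun (congrFun heq2 i) (π₁ a)
    rw [hmulP (L * U₁) π₁ i (π₁ a), show π₁⁻¹ (π₁ a) = a from π₁.symm_apply_apply a] at h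
    rw [Matrix.mul_assoc U₂ _ W] at h
    rw [← hU₁d, Matrix.mul_diagonal] at h
    rw [← hU₂d, Matrix.diagonal_mul] at h
    rw [hPmul W π₂ i (π₁ a)] at h
    exact h
  -- π₁ = π₂
  have hle : ∀ a, π₂ a ≤ π₁ a := by
    intro a
    by_contra hcon
    push_neg at hcon
    have h0 : W (π₂ a) (π₁ a) = 0 := hW.1 _ _ hcon
    have h := key a a
    rw [hL.2 a, one_mul, h0, mul_zero] at h
    obtain ⟨w, hw⟩ := hu₁ a
    exact w.ne_zero (by rw [hw, h])
  have hπ : π₁ = π₂ := by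
    have hsum : ∑ a : Fin n, ((π₂ a : ℕ)) = ∑ a : Fin n, ((π₁ a : ℕ)) := by
      rw [Equiv.sum_comp π₂ (fun x : Fin n => (x : ℕ)),
        Equiv.sum_comp π₁ (fun x : Fin n => (x : ℕ))]
    have hall := (Finset.sum_eq_sum_iff_of_le
      (fun a _ => Fin.le_def.mp (hle a))).1 hsum
    ext a
    exact (hall a (Finset.mem_univ a)).symm
  obtain rfl := hπ
  -- U₁ = U₂
  have hdiag : ∀ a, U₁ a a = U₂ a a := by
    intro a
    have h := key a a
    rwa [hL.2 a, one_mul, hW.2 (π₁ a), mul_one] at h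
  have hU : U₁ = U₂ := by
    ext i j
    by_cases hij : i = j
    · subst hij; exact hdiag i
    · rw [hU₁ hij, hU₂ hij]
  -- strictness of W
  have hP1 : π₁.permMatrix R * (π₁⁻¹).permMatrix R = 1 := perm_mul_perm_inv π₁
  have hP2 : (π₁⁻¹).permMatrix R * π₁.permMatrix R = 1 := by
    have h := perm_mul_perm_inv (R := R) π₁⁻¹
    rwa [inv_inv] at h
  have hBVstrict : UnipotentUpper (π₁.permMatrix R * BV * (π₁⁻¹).permMatrix R) := by
    apply unipUpper_inv hstrict₁
    simp only [Matrix.mul_assoc]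
    rw [← Matrix.mul_assoc ((π₁⁻¹).permMatrix R) (π₁.permMatrix R)
      (V₁ * (π₁⁻¹).permMatrix R), hP2, Matrix.one_mul,
      ← Matrix.mul_assoc BV V₁ ((π₁⁻¹).permMatrix R), hBVV, Matrix.one_mul, hP1]
  have hWstrictU : UnipotentUpper (π₁.permMatrix R * W * (π₁⁻¹).permMatrix R) := by
    have hsplit : π₁.permMatrix R * W * (π₁⁻¹).permMatrix R
        = (π₁.permMatrix R * V₂ * (π₁⁻¹).permMatrix R)
          * (π₁.permMatrix R * BV * (π₁⁻¹).permMatrix R) := by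
      rw [hWdef]
      simp only [Matrix.mul_assoc]
      rw [← Matrix.mul_assoc ((π₁⁻¹).permMatrix R) (π₁.permMatrix R)
        (BV * (π₁⁻¹).permMatrix R), hP2, Matrix.one_mul]
    rw [hsplit]
    exact unipUpper_mul hstrict₂ hBVstrict
  have hWstrict : ∀ i a : Fin n, a < i → W (π₁ i) (π₁ a) = 0 := by
    intro i a hai
    have h := hWstrictU.1 i a hai
    rwa [hmulP (π₁.permMatrix R * W) π₁⁻¹ i a, inv_inv, hPmul W π₁ i (π₁ a)] at h
  -- L = 1
  have hLone : L = 1 := by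
    ext i a
    rcases lt_trichotomy i a with h | h | h
    · rw [hL.1 i a h, Matrix.one_apply_ne (ne_of_lt h)]
    · subst h; rw [hL.2, Matrix.one_apply_eq]
    · have hk := key i a
      rw [hWstrict i a h, mul_zero] at hk
      obtain ⟨w, hw⟩ := hu₁ a
      have h2 : L i a * (w : R) = 0 := by rw [hw]; exact hk
      have h0 : L i a = 0 := by
        calc L i a = L i a * ↑w * ↑w⁻¹ := (Units.mul_inv_cancel_right _ _).symm
        _ = 0 := by rw [h2, zero_mul]
      rw [h0, Matrix.one_apply_ne (ne_of_gt h)]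
  have hT : T₁ = T₂ := by
    have h := hLdef
    rw [hLone] at h
    have h2 : T₂ * 1 = T₂ * (BT * T₁) := by rw [← h]
    rw [Matrix.mul_one, ← Matrix.mul_assoc, hTBT, Matrix.one_mul] at h2
    exact h2.symm
  -- W = 1
  have hWone : W = 1 := by
    ext b c
    obtain ⟨i, rfl⟩ : ∃ i, π₁ i = b := ⟨π₁⁻¹ b, π₁.apply_symm_apply b⟩
    obtain ⟨a, rfl⟩ : ∃ a, π₁ a = c := ⟨π₁⁻¹ c, π₁.apply_symm_apply c⟩
    have hk := key i a
    rw [hLone] at hk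
    obtain ⟨w, hw⟩ := hu₂ i
    by_cases hia : i = a
    · subst hia
      rw [Matrix.one_apply_eq, one_mul, hdiag i] at hk
      have h2 : (w : R) * W (π₁ i) (π₁ i) = (w : R) := by rw [hw, ← hk]
      have h3 : W (π₁ i) (π₁ i) = 1 := by
        calc W (π₁ i) (π₁ i) = ↑w⁻¹ * (↑w * W (π₁ i) (π₁ i)) := by
              rw [← mul_assoc, w.inv_mul, one_mul]
        _ = 1 := by rw [h2, w.inv_mul]
      rw [h3, Matrix.one_apply_eq]
    · rw [Matrix.one_apply_ne hia, zero_mul] at hk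
      have h2 : (w : R) * W (π₁ i) (π₁ a) = 0 := by rw [hw, ← hk]
      have h0 : W (π₁ i) (π₁ a) = 0 := by
        calc W (π₁ i) (π₁ a) = ↑w⁻¹ * (↑w * W (π₁ i) (π₁ a)) := by
              rw [← mul_assoc, w.inv_mul, one_mul]
        _ = 0 := by rw [h2, mul_zero]
      rw [h0, Matrix.one_apply_ne (fun hcc => hia (π₁.injective hcc))]
  have hV : V₁ = V₂ := by
    have h : W * V₁ = V₂ := by
      rw [hWdef, Matrix.mul_assoc, hBVV, Matrix.mul_one]
    rw [hWone, Matrix.one_mul] at h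
    exact h
  exact ⟨hT, hU, rfl, hV⟩
end

section
/- Let Γ be an abelian group, E a Γ-graded division ring, δ̄ ∈ Γⁿ, and S = Mₙ(E)(δ̄). The set M^h of homogeneous monomial matrices in S is a subgroup of S_h*, and the map Δ : M^h → E_h*/[E_h*,E_h*] defined by Δ(U·P_π) = sgn(π)·u₁⋯uₙ mod [E_h*,E_h*], where U = diag(u₁,…,uₙ), is a well-defined group homomorphism. -/
set_option maxHeartbeats 1000000

lemma permMatrix_entry {E : Type*} [Ring E] {n : ℕ} (π : Equiv.Perm (Fin n)) (i j : Fin n) :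
    (π.permMatrix E) i j = if π i = j then 1 else 0 := by
  rw [Equiv.Perm.permMatrix, PEquiv.toMatrix_apply, Equiv.toPEquiv_apply]
  simp

lemma permMatrix_one {E : Type*} [Ring E] {n : ℕ} :
    ((1 : Equiv.Perm (Fin n)).permMatrix E) = 1 := by
  ext i j
  rw [permMatrix_entry]
  simp [Matrix.one_apply]
  split_ifs with h <;> simp [h]

lemma mono_entry {E : Type*} [Ring E] {n : ℕ} (u : Fin n → E) (π : Equiv.Perm (Fin n)) (i j : Fin n) :
    (Matrix.diagonal u * π.permMatrix E) i j = if π i = j then u i else 0 := by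
  rw [Matrix.diagonal_mul, permMatrix_entry]
  simp [mul_ite]

lemma mono_mul {E : Type*} [Ring E] {n : ℕ} (u v : Fin n → E) (π σ : Equiv.Perm (Fin n)) :
    (Matrix.diagonal u * π.permMatrix E) * (Matrix.diagonal v * σ.permMatrix E)
      = Matrix.diagonal (fun i => u i * v (π i)) * (σ * π).permMatrix E := by
  ext i j
  rw [Matrix.mul_apply, mono_entry]
  simp only [mono_entry, Equiv.Perm.mul_apply, ite_mul, zero_mul, mul_ite, mul_zero]
  rw [Finset.sum_eq_single (π i)]
  · simp
    split_ifs with h <;> simp [h]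
  · intro b _ hb
    simp [show ¬ π i = b from fun h => hb h.symm]
  · intro h
    exact absurd (Finset.mem_univ _) h

lemma mono_unique {E : Type*} [Ring E] [Nontrivial E] {n : ℕ} {u v : Fin n → E}
    {π σ : Equiv.Perm (Fin n)} (hu : ∀ i, IsUnit (u i))
    (h : Matrix.diagonal u * π.permMatrix E = Matrix.diagonal v * σ.permMatrix E) :
    π = σ ∧ u = v := by
  have hπσ : π = σ := Equiv.ext fun i => by
    by_contra hne
    have h2 := congrFun (congrFun h i) (π i)
    rw [mono_entry, mono_entry, if_pos rfl, if_neg (fun hc => hne hc.symm)] at h2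
    exact (hu i).ne_zero h2
  subst hπσ
  refine ⟨rfl, funext fun i => ?_⟩
  have h2 := congrFun (congrFun h i) (π i)
  rwa [mono_entry, mono_entry, if_pos rfl, if_pos rfl] at h2

lemma mono_inv {E : Type*} [Ring E] {n : ℕ} (M : (Matrix (Fin n) (Fin n) E)ˣ)
    (u : Fin n → E) (π : Equiv.Perm (Fin n)) (hu : ∀ i, IsUnit (u i))
    (hM : M.val = Matrix.diagonal u * π.permMatrix E) :
    (M⁻¹ : (Matrix (Fin n) (Fin n) E)ˣ).val
      = Matrix.diagonal (fun j => (((hu (π.symm j)).unit⁻¹ : Eˣ) : E)) * (π⁻¹).permMatrix E := by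
  refine Units.inv_eq_of_mul_eq_one_right ?_
  rw [hM, mono_mul]
  have h1 : (fun i => u i * (((hu (π.symm (π i))).unit⁻¹ : Eˣ) : E)) = fun _ => (1 : E) := by
    funext i
    simp only [Equiv.symm_apply_apply]
    exact (hu i).mul_val_inv
  rw [h1, inv_mul_cancel, permMatrix_one, Matrix.diagonal_one, one_mul]

/-- the set `M^h` of homogeneous monomial matrices of
`S = Mₙ(E)(δ̄)` is a subgroup of `S_h*`, and
`Δ(U ⬝ P_π) = sgn(π) · u₁ ⋯ uₙ mod [E_h*, E_h*]` (with `U = diag(u₁, …, uₙ)`) is a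
well-defined group homomorphism `Δ : M^h → E_h*/[E_h*, E_h*]`. -/
theorem monomial_delta_hom {Γ E : Type*} [AddCommGroup Γ] [DecidableEq Γ]
    [Ring E] [Nontrivial E] (𝒜 : Γ → AddSubgroup E) [GradedRing 𝒜]
    (hdiv : ∀ (γ : Γ) (x : E), x ∈ 𝒜 γ → x ≠ 0 → IsUnit x)
    {n : ℕ} (δ : Fin n → Γ)
    (Eh : Subgroup Eˣ) (hEh : ∀ u : Eˣ, u ∈ Eh ↔ ∃ γ, u.val ∈ 𝒜 γ)
    (Sh : Subgroup (Matrix (Fin n) (Fin n) E)ˣ)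
    (hSh : ∀ A : (Matrix (Fin n) (Fin n) E)ˣ,
      A ∈ Sh ↔ ∃ lam, A.val ∈ MatrixGrade 𝒜 δ lam) :
    ∃ Mh : Subgroup (Matrix (Fin n) (Fin n) E)ˣ,
      -- `Mh` is exactly the set of homogeneous monomial matrices …
      (∀ M : (Matrix (Fin n) (Fin n) E)ˣ, M ∈ Mh ↔
        ((∃ (u : Fin n → E) (π : Equiv.Perm (Fin n)), (∀ i, IsUnit (u i)) ∧
          M.val = Matrix.diagonal u * π.permMatrix E) ∧
         ∃ lam, M.val ∈ MatrixGrade 𝒜 δ lam)) ∧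
      -- … it is contained in the group of homogeneous units …
      Mh ≤ Sh ∧
      -- … and `Δ` is a well-defined group homomorphism on it.
      ∃ Δ : ↥Mh →* Abelianization ↥Eh,
        ∀ (M : ↥Mh) (u : Fin n → E) (π : Equiv.Perm (Fin n)),
          (∀ i, IsUnit (u i)) →
          M.val.val = Matrix.diagonal u * π.permMatrix E →
          ∀ w : ↥Eh,
            w.val.val = ((Equiv.Perm.sign π : ℤ) : E) * (List.ofFn u).prod →
            Δ M = Abelianization.of w := by
  classical
  let Mh : Subgroup (Matrix (Fin n) (Fin n) E)ˣ :=
    { carrier := {M | (∃ (u : Fin n → E) (π : Equiv.Perm (Fin n)), (∀ i, IsUnit (u i)) ∧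
          M.val = Matrix.diagonal u * π.permMatrix E) ∧ M ∈ Sh}
      one_mem' := ⟨⟨fun _ => 1, 1, fun _ => isUnit_one, by
        rw [permMatrix_one, Matrix.diagonal_one, one_mul, Units.val_one]⟩, Sh.one_mem⟩
      mul_mem' := by
        rintro M N ⟨⟨u, π, hu, hM⟩, hMS⟩ ⟨⟨v, σ, hv, hN⟩, hNS⟩
        refine ⟨⟨fun i => u i * v (π i), σ * π, fun i => (hu i).mul (hv (π i)), ?_⟩,
          Sh.mul_mem hMS hNS⟩
        rw [Units.val_mul, hM, hN, mono_mul]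
      inv_mem' := by
        rintro M ⟨⟨u, π, hu, hM⟩, hMS⟩
        exact ⟨⟨_, π⁻¹, fun j => ((hu (π.symm j)).unit⁻¹).isUnit, mono_inv M u π hu hM⟩,
          Sh.inv_mem hMS⟩ }
  have hMhmem : ∀ M : (Matrix (Fin n) (Fin n) E)ˣ, M ∈ Mh ↔
      ((∃ (u : Fin n → E) (π : Equiv.Perm (Fin n)), (∀ i, IsUnit (u i)) ∧
        M.val = Matrix.diagonal u * π.permMatrix E) ∧ M ∈ Sh) := fun _ => Iff.rfl
  have hMhSh : Mh ≤ Sh := fun M hM => ((hMhmem M).1 hM).2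
  refine ⟨Mh, ?_, hMhSh, ?_⟩
  · intro M
    rw [hMhmem]
    exact and_congr_right fun _ => hSh M
  -- decompositions
  have hdec : ∀ M : ↥Mh, ∃ (u : Fin n → E) (π : Equiv.Perm (Fin n)),
      (∀ i, IsUnit (u i)) ∧
      M.1.val = Matrix.diagonal u * π.permMatrix E :=
    fun M => ((hMhmem M.1).1 M.2).1
  choose uF πF huF hMF using hdec
  have hlam : ∀ M : ↥Mh, ∃ lam,
      M.1.val ∈ MatrixGrade 𝒜 δ lam :=
    fun M => (hSh M.1).1 (hMhSh M.2)
  choose lamF hlamF using hlam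
  -- the homogeneous unit entries
  have hUmem : ∀ (M : ↥Mh) (i : Fin n), ((huF M i).unit : Eˣ) ∈ Eh := by
    intro M i
    refine (hEh _).2 ⟨lamF M + δ (πF M i) - δ i, ?_⟩
    have h2 : M.1.val i (πF M i) = uF M i := by
      rw [hMF M, mono_entry, if_pos rfl]
    rw [(huF M i).unit_spec, ← h2]
    exact hlamF M i (πF M i)
  let UF : ↥Mh → Fin n → ↥Eh := fun M i => ⟨(huF M i).unit, hUmem M i⟩
  -- the sign element
  let sgnU : Equiv.Perm (Fin n) → Eˣ :=
    fun π => Units.map (Int.castRingHom E).toMonoidHom (Equiv.Perm.sign π)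
  have hsgnval : ∀ π : Equiv.Perm (Fin n),
      (sgnU π).val = ((Equiv.Perm.sign π : ℤ) : E) := fun π => rfl
  have hsgnmem : ∀ π : Equiv.Perm (Fin n), sgnU π ∈ Eh := by
    intro π
    refine (hEh _).2 ⟨0, ?_⟩
    rw [hsgnval]
    rcases Int.units_eq_one_or (Equiv.Perm.sign π) with h | h <;> rw [h]
    · simpa using SetLike.one_mem_graded 𝒜
    · simpa using (𝒜 0).neg_mem (SetLike.one_mem_graded 𝒜)
  let sgnE : Equiv.Perm (Fin n) → ↥Eh := fun π => ⟨sgnU π, hsgnmem π⟩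
  have sgnE_mul : ∀ π σ : Equiv.Perm (Fin n), sgnE (π * σ) = sgnE π * sgnE σ := by
    intro π σ
    refine Subtype.ext ?_
    show sgnU (π * σ) = sgnU π * sgnU σ
    simp only [sgnU, map_mul]
  -- value of products in E
  let c : ↥Eh →* E := (Units.coeHom E).comp Eh.subtype
  have hcU : ∀ (M : ↥Mh) (i : Fin n), c (UF M i) = uF M i := fun M i => (huF M i).unit_spec
  -- the w element
  let wF : ↥Mh → ↥Eh := fun M => sgnE (πF M) * (List.ofFn (UF M)).prod
  have hwval : ∀ M : ↥Mh,
      (wF M).val.val = ((Equiv.Perm.sign (πF M) : ℤ) : E) * (List.ofFn (uF M)).prod := by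
    intro M
    show c (sgnE (πF M) * (List.ofFn (UF M)).prod) = _
    rw [map_mul, map_list_prod, List.map_ofFn]
    congr 1
  -- uniqueness of decompositions
  have huniq : ∀ (M : ↥Mh) (u : Fin n → E) (π : Equiv.Perm (Fin n)), (∀ i, IsUnit (u i)) →
      M.1.val = Matrix.diagonal u * π.permMatrix E →
      π = πF M ∧ u = uF M :=
    fun M u π hu h => mono_unique hu (h.symm.trans (hMF M))
  -- the map
  let Δ0 : ↥Mh → Abelianization ↥Eh := fun M => Abelianization.of (wF M)
  have hof : ∀ K : ↥Mh, Δ0 K =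
      Abelianization.of (sgnE (πF K)) * ∏ i, Abelianization.of (UF K i) := by
    intro K
    show Abelianization.of (sgnE (πF K) * (List.ofFn (UF K)).prod) = _
    rw [map_mul, map_list_prod, List.map_ofFn, List.prod_ofFn]
    rfl
  have hmul : ∀ M N : ↥Mh, Δ0 (M * N) = Δ0 M * Δ0 N := by
    intro M N
    have hprodval : (M * N : ↥Mh).1.val
        = Matrix.diagonal (fun i => uF M i * uF N (πF M i)) * (πF N * πF M).permMatrix E := by
      show (M.1 * N.1).val = _
      rw [Units.val_mul, hMF M, hMF N, mono_mul]
    obtain ⟨hπ, hu⟩ := huniq (M * N) _ _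
      (fun i => (huF M i).mul (huF N (πF M i))) hprodval
    have hUF : ∀ i, UF (M * N) i = UF M i * UF N (πF M i) := by
      intro i
      refine Subtype.ext (Units.ext ?_)
      show c (UF (M * N) i) = c (UF M i * UF N (πF M i))
      rw [hcU, map_mul, hcU, hcU, ← hu]
    rw [hof, hof, hof, ← hπ, sgnE_mul]
    rw [Finset.prod_congr rfl (fun i _ => by rw [hUF i, map_mul]), Finset.prod_mul_distrib]
    rw [Equiv.prod_comp (πF M) (fun i => Abelianization.of (UF N i))]
    rw [map_mul, mul_comm (Abelianization.of (sgnE (πF N))) (Abelianization.of (sgnE (πF M))),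
      mul_mul_mul_comm]
  refine ⟨MonoidHom.mk' Δ0 hmul, ?_⟩
  intro M u π hu hM w hw
  obtain ⟨hπ, hu'⟩ := huniq M u π hu hM
  have hww : w = wF M := by
    refine Subtype.ext (Units.ext ?_)
    rw [hw, hwval, hπ, hu']
  show Δ0 M = Abelianization.of w
  rw [hww]
end

section
/- Let Γ be an abelian group, E a Γ-graded division ring with E₀ not equal to the field 𝔽₂ of two elements, δ̄ ∈ Γⁿ, and S = Mₙ(E)(δ̄). Then every homogeneous unit A ∈ S_h* can be written as A = C·M, where C belongs to the commutator subgroup [S₀*,S₀*] of the unit group of the degree-0 component S₀, and M is a homogeneous monomial matrix. -/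
set_option maxHeartbeats 1000000

section Aux
open DirectSum Matrix

variable {Γ E : Type*} [AddCommGroup Γ] [DecidableEq Γ] [Ring E]
  (𝒜 : Γ → AddSubgroup E) [GradedRing 𝒜]

lemma MatrixGrade.mul {n : ℕ} {δ : Fin n → Γ} {μ ν : Γ} {X Y : Matrix (Fin n) (Fin n) E}
    (hX : X ∈ MatrixGrade 𝒜 δ μ) (hY : Y ∈ MatrixGrade 𝒜 δ ν) :
    X * Y ∈ MatrixGrade 𝒜 δ (μ + ν) := by
  intro i j
  rw [Matrix.mul_apply]
  apply AddSubgroup.sum_mem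
  intro k _
  have h := SetLike.mul_mem_graded (hX i k) (hY k j)
  have e : (μ + δ k - δ i) + (ν + δ j - δ k) = μ + ν + δ j - δ i := by abel
  rwa [e] at h

lemma MatrixGrade.zero_mul {n : ℕ} {δ : Fin n → Γ} {ν : Γ} {X Y : Matrix (Fin n) (Fin n) E}
    (hX : X ∈ MatrixGrade 𝒜 δ 0) (hY : Y ∈ MatrixGrade 𝒜 δ ν) :
    X * Y ∈ MatrixGrade 𝒜 δ ν := by
  have := MatrixGrade.mul 𝒜 hX hY
  rwa [zero_add] at this

lemma MatrixGrade.one_mem {n : ℕ} {δ : Fin n → Γ} :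
    (1 : Matrix (Fin n) (Fin n) E) ∈ MatrixGrade 𝒜 δ 0 := by
  intro i j
  by_cases h : i = j
  · subst h
    rw [Matrix.one_apply_eq]
    have e : (0 : Γ) + δ i - δ i = 0 := by abel
    rw [e]
    exact SetLike.one_mem_graded 𝒜
  · rw [Matrix.one_apply_ne h]
    exact zero_mem _

/-- The `1 + (column at i) · eᵢᵀ` matrix as a unit, when the `i`-th entry vanishes. -/
def colUnit {n : ℕ} (i : Fin n) (a : Fin n → E) (ha : a i = 0) :
    (Matrix (Fin n) (Fin n) E)ˣ where
  val := 1 + Matrix.of (fun k l => if l = i then a k else 0)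
  inv := 1 - Matrix.of (fun k l => if l = i then a k else 0)
  val_inv := by
    have hNN : (Matrix.of (fun k l => if l = i then a k else 0) :
        Matrix (Fin n) (Fin n) E) * Matrix.of (fun k l => if l = i then a k else 0) = 0 := by
      ext k l
      simp only [Matrix.mul_apply, Matrix.of_apply, ite_mul, zero_mul, Matrix.zero_apply]
      rw [Finset.sum_ite_eq' Finset.univ i]
      simp [ha]
    rw [mul_sub, mul_one, add_mul, one_mul, hNN]
    abel
  inv_val := by
    have hNN : (Matrix.of (fun k l => if l = i then a k else 0) :
        Matrix (Fin n) (Fin n) E) * Matrix.of (fun k l => if l = i then a k else 0) = 0 := by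
      ext k l
      simp only [Matrix.mul_apply, Matrix.of_apply, ite_mul, zero_mul, Matrix.zero_apply]
      rw [Finset.sum_ite_eq' Finset.univ i]
      simp [ha]
    rw [sub_mul, one_mul, mul_add, mul_one, hNN]
    abel

lemma colUnit_val {n : ℕ} (i : Fin n) (a : Fin n → E) (ha : a i = 0) :
    (colUnit i a ha).val = 1 + Matrix.of (fun k l => if l = i then a k else 0) := rfl

lemma colUnit_inv_val {n : ℕ} (i : Fin n) (a : Fin n → E) (ha : a i = 0) :
    ((colUnit i a ha)⁻¹).val = 1 - Matrix.of (fun k l => if l = i then a k else 0) := rfl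

lemma colUnit_mem_S0u {n : ℕ} (δ : Fin n → Γ)
    (S0u : Subgroup (Matrix (Fin n) (Fin n) E)ˣ)
    (hS0u : ∀ A : (Matrix (Fin n) (Fin n) E)ˣ, A ∈ S0u ↔
      (A.val ∈ MatrixGrade 𝒜 δ 0 ∧ A⁻¹.val ∈ MatrixGrade 𝒜 δ 0))
    (i : Fin n) (a : Fin n → E) (ha : a i = 0) (hag : ∀ k, a k ∈ 𝒜 (δ i - δ k)) :
    colUnit i a ha ∈ S0u := by
  have hN : (Matrix.of (fun k l => if l = i then a k else 0) : Matrix (Fin n) (Fin n) E) ∈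
      MatrixGrade 𝒜 δ 0 := by
    intro k l
    simp only [Matrix.of_apply]
    by_cases hl : l = i
    · rw [if_pos hl, hl]
      have e : (0 : Γ) + δ i - δ k = δ i - δ k := by abel
      rw [e]
      exact hag k
    · rw [if_neg hl]
      exact zero_mem _
  rw [hS0u]
  constructor
  · rw [colUnit_val]
    exact fun k l => AddSubgroup.add_mem _ (MatrixGrade.one_mem 𝒜 k l) (hN k l)
  · rw [colUnit_inv_val]
    exact fun k l => AddSubgroup.sub_mem _ (MatrixGrade.one_mem 𝒜 k l) (hN k l)

lemma grade_inv_mem {γ : Γ} {x : E} (hx : x ∈ 𝒜 γ) (u : Eˣ) (hu : (u : E) = x) :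
    (↑u⁻¹ : E) ∈ 𝒜 (-γ) := by
  classical
  set y : E := ↑u⁻¹ with hy
  set z : E := (decompose 𝒜 y (-γ) : E) with hz
  have hzmem : z ∈ 𝒜 (-γ) := SetLike.coe_mem _
  have key : x * z = 1 := by
    have h1 : x * y = 1 := by rw [← hu]; exact u.mul_inv
    have hterm : ∀ μ : Γ,
        (decompose 𝒜 (x * (decompose 𝒜 y μ : E)) 0 : E) = if μ = -γ then x * z else 0 := by
      intro μ
      by_cases hμ : μ = -γ
      · subst hμ
        rw [if_pos rfl]
        have hmem : x * z ∈ 𝒜 (0 : Γ) := by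
          have := SetLike.mul_mem_graded hx hzmem
          rwa [add_neg_cancel] at this
        exact decompose_of_mem_same 𝒜 hmem
      · rw [if_neg hμ]
        have hmem : x * (decompose 𝒜 y μ : E) ∈ 𝒜 (γ + μ) :=
          SetLike.mul_mem_graded hx (SetLike.coe_mem _)
        have hne : γ + μ ≠ 0 := by
          intro h
          exact hμ (eq_neg_of_add_eq_zero_right h)
        exact decompose_of_mem_ne 𝒜 hmem hne
    have hsum : ∀ (t : Finset Γ),
        (decompose 𝒜 (x * ∑ μ ∈ t, (decompose 𝒜 y μ : E)) 0 : E)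
          = ∑ μ ∈ t, (decompose 𝒜 (x * (decompose 𝒜 y μ : E)) 0 : E) := by
      intro t
      induction t using Finset.induction_on with
      | empty => simp
      | insert _ _ hnot ih =>
          rw [Finset.sum_insert hnot, mul_add, decompose_add, DirectSum.add_apply,
            AddSubgroup.coe_add, ih, Finset.sum_insert hnot]
    have hy_eq : y = ∑ μ ∈ (decompose 𝒜 y).support, (decompose 𝒜 y μ : E) :=
      (DirectSum.sum_support_decompose 𝒜 y).symm
    have h2 : (decompose 𝒜 (x * y) 0 : E) = 1 := by
      rw [h1]
      exact decompose_of_mem_same 𝒜 (SetLike.one_mem_graded 𝒜)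
    rw [hy_eq] at h2
    rw [hsum] at h2
    simp_rw [hterm] at h2
    rw [Finset.sum_ite_eq' ((decompose 𝒜 y).support) (-γ) (fun _ => x * z)] at h2
    by_cases hmem : -γ ∈ (decompose 𝒜 y).support
    · rwa [if_pos hmem] at h2
    · rw [if_neg hmem] at h2
      have : Subsingleton E := subsingleton_of_zero_eq_one h2
      exact Subsingleton.elim _ _
  have hyx : y * x = 1 := by rw [← hu]; exact u.inv_mul
  have : y = z := by
    calc y = y * (x * z) := by rw [key, mul_one]
    _ = y * x * z := by rw [mul_assoc]
    _ = z := by rw [hyx, one_mul]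
  rw [this]
  exact hzmem


open scoped commutatorElement in
lemma colUnit_mem_commutator {n : ℕ}
    (hdiv : ∀ (γ : Γ) (x : E), x ∈ 𝒜 γ → x ≠ 0 → IsUnit x)
    (hE0 : ∃ x : E, x ∈ 𝒜 (0 : Γ) ∧ x ≠ 0 ∧ x ≠ 1)
    (δ : Fin n → Γ)
    (S0u : Subgroup (Matrix (Fin n) (Fin n) E)ˣ)
    (hS0u : ∀ A : (Matrix (Fin n) (Fin n) E)ˣ, A ∈ S0u ↔
      (A.val ∈ MatrixGrade 𝒜 δ 0 ∧ A⁻¹.val ∈ MatrixGrade 𝒜 δ 0))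
    (i : Fin n) (a : Fin n → E) (ha : a i = 0) (hag : ∀ k, a k ∈ 𝒜 (δ i - δ k)) :
    colUnit i a ha ∈ ⁅S0u, S0u⁆ := by
  classical
  obtain ⟨x, hx0, hxne, hx1⟩ := hE0
  obtain ⟨ux, hux_spec⟩ := hdiv 0 x hx0 hxne
  have hxinv_mem : (↑ux⁻¹ : E) ∈ 𝒜 (0 : Γ) := by
    have := grade_inv_mem 𝒜 hx0 ux hux_spec
    rwa [neg_zero] at this
  have hy_mem : (↑ux⁻¹ : E) - 1 ∈ 𝒜 (0 : Γ) :=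
    AddSubgroup.sub_mem _ hxinv_mem (SetLike.one_mem_graded 𝒜)
  have hy_ne : (↑ux⁻¹ : E) - 1 ≠ 0 := by
    intro h
    rw [sub_eq_zero] at h
    have h2 : ux⁻¹ = 1 := Units.ext h
    rw [inv_eq_one] at h2
    exact hx1 (by rw [← hux_spec, h2, Units.val_one])
  obtain ⟨uy, huy_spec⟩ := hdiv 0 _ hy_mem hy_ne
  have hv_mem : (↑uy⁻¹ : E) ∈ 𝒜 (0 : Γ) := by
    have := grade_inv_mem 𝒜 hy_mem uy huy_spec
    rwa [neg_zero] at this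
  have hvy : (↑uy⁻¹ : E) * ((↑ux⁻¹ : E) - 1) = 1 := by
    rw [← huy_spec]; exact uy.inv_mul
  set w : Fin n → E := fun k => a k * (↑uy⁻¹ : E) with hw_def
  have hw_i : w i = 0 := by rw [hw_def]; simp only [ha, zero_mul]
  have hw_mem : ∀ k, w k ∈ 𝒜 (δ i - δ k) := by
    intro k
    have := SetLike.mul_mem_graded (hag k) hv_mem
    rwa [add_zero] at this
  set d1 : Fin n → E := fun k => if k = i then x else 1 with hd1
  set d2 : Fin n → E := fun k => if k = i then (↑ux⁻¹ : E) else 1 with hd2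
  have hdd' : ∀ k, d1 k * d2 k = 1 := by
    intro k
    simp only [hd1, hd2]
    by_cases hk : k = i
    · rw [if_pos hk, if_pos hk, ← hux_spec]; exact ux.mul_inv
    · rw [if_neg hk, if_neg hk, one_mul]
  have hd'd : ∀ k, d2 k * d1 k = 1 := by
    intro k
    simp only [hd1, hd2]
    by_cases hk : k = i
    · rw [if_pos hk, if_pos hk, ← hux_spec]; exact ux.inv_mul
    · rw [if_neg hk, if_neg hk, one_mul]
  set D : (Matrix (Fin n) (Fin n) E)ˣ := {
    val := Matrix.diagonal d1
    inv := Matrix.diagonal d2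
    val_inv := by rw [Matrix.diagonal_mul_diagonal]; simp_rw [hdd']; exact Matrix.diagonal_one
    inv_val := by rw [Matrix.diagonal_mul_diagonal]; simp_rw [hd'd]; exact Matrix.diagonal_one
  } with hD_def
  have hDval : D.val = Matrix.diagonal d1 := rfl
  have hDinvval : (D⁻¹ : (Matrix (Fin n) (Fin n) E)ˣ).val = Matrix.diagonal d2 := rfl
  have hd1mem : ∀ k, d1 k ∈ 𝒜 (0 : Γ) := by
    intro k
    simp only [hd1]
    by_cases hk : k = i
    · rw [if_pos hk]; exact hx0
    · rw [if_neg hk]; exact SetLike.one_mem_graded 𝒜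
  have hd2mem : ∀ k, d2 k ∈ 𝒜 (0 : Γ) := by
    intro k
    simp only [hd2]
    by_cases hk : k = i
    · rw [if_pos hk]; exact hxinv_mem
    · rw [if_neg hk]; exact SetLike.one_mem_graded 𝒜
  have hdiagmem : ∀ (f : Fin n → E), (∀ k, f k ∈ 𝒜 (0 : Γ)) →
      Matrix.diagonal f ∈ MatrixGrade 𝒜 δ 0 := by
    intro f hf k l
    by_cases hkl : k = l
    · subst hkl
      rw [Matrix.diagonal_apply_eq]
      have e : (0 : Γ) + δ k - δ k = 0 := by abel
      rw [e]
      exact hf k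
    · rw [Matrix.diagonal_apply_ne _ hkl]
      exact zero_mem _
  have hD_mem : D ∈ S0u := by
    rw [hS0u]
    exact ⟨hDval ▸ hdiagmem d1 hd1mem, hDinvval ▸ hdiagmem d2 hd2mem⟩
  set Q := colUnit i w hw_i with hQ_def
  have hQ_mem : Q ∈ S0u := colUnit_mem_S0u 𝒜 δ S0u hS0u i w hw_i hw_mem
  have hcomm : ⁅D, Q⁆ = colUnit i a ha := by
    apply Units.ext
    rw [commutatorElement_def, Units.val_mul, Units.val_mul, Units.val_mul]
    set N : Matrix (Fin n) (Fin n) E := Matrix.of (fun k l => if l = i then w k else 0)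
      with hN_def
    set N' : Matrix (Fin n) (Fin n) E :=
      Matrix.of (fun k l => if l = i then w k * (↑ux⁻¹ : E) else 0) with hN'_def
    have hQval : Q.val = 1 + N := rfl
    have hQinv : (Q⁻¹ : (Matrix (Fin n) (Fin n) E)ˣ).val = 1 - N := rfl
    have hDQ : D.val * Q.val = Matrix.diagonal d1 + N := by
      rw [hQval, hDval, mul_add, mul_one]
      congr 1
      ext k l
      rw [Matrix.diagonal_mul]
      simp only [hN_def, Matrix.of_apply]
      by_cases hl : l = i
      · rw [if_pos hl]
        by_cases hk : k = i
        · rw [hk, hw_i, mul_zero]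
        · simp only [hd1]
          rw [if_neg hk, one_mul]
      · rw [if_neg hl, mul_zero]
    have hDQD : (Matrix.diagonal d1 + N) * (D⁻¹ : (Matrix (Fin n) (Fin n) E)ˣ).val
        = 1 + N' := by
      rw [hDinvval, add_mul, Matrix.diagonal_mul_diagonal]
      congr 1
      · simp_rw [hdd']; exact Matrix.diagonal_one
      · ext k l
        rw [Matrix.mul_diagonal]
        simp only [hN_def, hN'_def, Matrix.of_apply]
        by_cases hl : l = i
        · simp only [hd2, if_pos hl]
        · simp only [if_neg hl, zero_mul]
    have hN'N : N' * N = 0 := by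
      ext k l
      simp only [hN'_def, hN_def, Matrix.mul_apply, Matrix.of_apply, ite_mul, zero_mul,
        Matrix.zero_apply]
      rw [Finset.sum_ite_eq' Finset.univ i]
      simp [hw_i]
    have hsub : N' - N = Matrix.of (fun k l => if l = i then a k else 0) := by
      ext k l
      simp only [hN'_def, hN_def, Matrix.sub_apply, Matrix.of_apply]
      by_cases hl : l = i
      · rw [if_pos hl, if_pos hl, if_pos hl]
        simp only [hw_def]
        rw [mul_assoc, ← mul_sub]
        have h3 : (↑uy⁻¹ : E) * (↑ux⁻¹ : E) - (↑uy⁻¹ : E)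
            = (↑uy⁻¹ : E) * ((↑ux⁻¹ : E) - 1) := by rw [mul_sub, mul_one]
        rw [h3, hvy, mul_one]
      · rw [if_neg hl, if_neg hl, if_neg hl, sub_zero]
    have hfinal : (1 + N') * (1 - N) = 1 + Matrix.of (fun k l => if l = i then a k else 0) := by
      rw [mul_sub, mul_one, add_mul, one_mul, hN'N, add_sub_assoc]
      rw [show N' - (N + 0) = N' - N by rw [add_zero], hsub]
    rw [hDQ, hDQD, hQinv, hfinal, colUnit_val]
  rw [← hcomm]
  exact Subgroup.commutator_mem_commutator hD_mem hQ_mem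

lemma reduce_aux {n : ℕ} [Nontrivial E]
    (hdiv : ∀ (γ : Γ) (x : E), x ∈ 𝒜 γ → x ≠ 0 → IsUnit x)
    (hE0 : ∃ x : E, x ∈ 𝒜 (0 : Γ) ∧ x ≠ 0 ∧ x ≠ 1)
    (δ : Fin n → Γ)
    (S0u : Subgroup (Matrix (Fin n) (Fin n) E)ˣ)
    (hS0u : ∀ A : (Matrix (Fin n) (Fin n) E)ˣ, A ∈ S0u ↔
      (A.val ∈ MatrixGrade 𝒜 δ 0 ∧ A⁻¹.val ∈ MatrixGrade 𝒜 δ 0))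
    (lam : Γ) :
    ∀ (k : ℕ) (s : Finset (Fin n)) (B : (Matrix (Fin n) (Fin n) E)ˣ) (ρ : Fin n → Fin n),
      sᶜ.card = k → B.val ∈ MatrixGrade 𝒜 δ lam → Set.InjOn ρ ↑s →
      (∀ j ∈ s, B.val (ρ j) j ≠ 0 ∧ ∀ m, m ≠ ρ j → B.val m j = 0) →
      ∃ T : (Matrix (Fin n) (Fin n) E)ˣ, T ∈ ⁅S0u, S0u⁆ ∧ T ∈ S0u ∧
        ∃ ρ' : Fin n → Fin n, Function.Injective ρ' ∧
          (∀ j, (T * B).val (ρ' j) j ≠ 0 ∧ ∀ m, m ≠ ρ' j → (T * B).val m j = 0) := by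
  classical
  intro k
  induction k with
  | zero =>
      intro s B ρ hs hB hinj hcol
      have hsu : s = Finset.univ := by
        have : sᶜ = ∅ := Finset.card_eq_zero.mp hs
        rwa [Finset.compl_eq_empty_iff] at this
      subst hsu
      refine ⟨1, one_mem _, one_mem _, ρ, ?_, ?_⟩
      · rw [← Set.injOn_univ]
        simpa using hinj
      · intro j
        rw [one_mul]
        exact hcol j (Finset.mem_univ j)
  | succ k ih =>
      intro s B ρ hs hB hinj hcol
      -- pick an unprocessed column j
      have hcompl : sᶜ.Nonempty := Finset.card_pos.mp (hs ▸ k.succ_pos)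
      obtain ⟨j, hj⟩ := hcompl
      have hjs : j ∉ s := Finset.mem_compl.mp hj
      -- find a pivot row i outside the used pivot rows
      have hpiv : ∃ i, (∀ j' ∈ s, ρ j' ≠ i) ∧ B.val i j ≠ 0 := by
        by_contra hno
        push_neg at hno
        have hBinvrow : ∀ j' ∈ s, (B⁻¹ : (Matrix (Fin n) (Fin n) E)ˣ).val j (ρ j') = 0 := by
          intro j' hj'
          have h0 : ((B⁻¹ : (Matrix (Fin n) (Fin n) E)ˣ).val * B.val) j j' = 0 := by
            rw [B.inv_mul, Matrix.one_apply_ne]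
            intro h
            exact hjs (h ▸ hj')
          rw [Matrix.mul_apply] at h0
          rw [Finset.sum_eq_single (ρ j')] at h0
          · have hu : IsUnit (B.val (ρ j') j') := hdiv _ _ (hB _ _) (hcol j' hj').1
            rwa [IsUnit.mul_left_eq_zero hu] at h0
          · intro m _ hm
            rw [(hcol j' hj').2 m hm, mul_zero]
          · intro h
            exact absurd (Finset.mem_univ _) h
        have h1 : ((B⁻¹ : (Matrix (Fin n) (Fin n) E)ˣ).val * B.val) j j = 1 := by
          rw [B.inv_mul, Matrix.one_apply_eq]
        rw [Matrix.mul_apply] at h1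
        rw [Finset.sum_eq_zero] at h1
        · exact one_ne_zero h1.symm
        · intro m _
          by_cases hm : ∃ j' ∈ s, ρ j' = m
          · obtain ⟨j', hj', rfl⟩ := hm
            rw [hBinvrow j' hj', zero_mul]
          · push_neg at hm
            have : ∀ j' ∈ s, ρ j' ≠ m := hm
            rw [hno m this, mul_zero]
      obtain ⟨i, hiρ, hBij⟩ := hpiv
      obtain ⟨u, hu_spec⟩ := hdiv _ _ (hB i j) hBij
      -- the clearing column vector c
      set c : Fin n → E := fun m => if m = i then 0 else -(B.val m j * (↑u⁻¹ : E)) with hc_def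
      have hc_i : c i = 0 := by rw [hc_def]; simp
      have hc_mem : ∀ m, c m ∈ 𝒜 (δ i - δ m) := by
        intro m
        simp only [hc_def]
        by_cases hm : m = i
        · rw [if_pos hm]; exact zero_mem _
        · rw [if_neg hm]
          apply neg_mem
          have h2 := grade_inv_mem 𝒜 (hB i j) u hu_spec
          have h3 := SetLike.mul_mem_graded (hB m j) h2
          have e : (lam + δ j - δ m) + -(lam + δ j - δ i) = δ i - δ m := by abel
          rwa [e] at h3
      set U := colUnit i c hc_i with hU_def
      have hU_comm : U ∈ ⁅S0u, S0u⁆ :=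
        colUnit_mem_commutator 𝒜 hdiv hE0 δ S0u hS0u i c hc_i hc_mem
      have hU_S0 : U ∈ S0u := colUnit_mem_S0u 𝒜 δ S0u hS0u i c hc_i hc_mem
      -- entries of the new matrix U * B
      have hUB : ∀ m l, (U * B).val m l = B.val m l + c m * B.val i l := by
        intro m l
        rw [Units.val_mul, hU_def, colUnit_val, add_mul, one_mul, Matrix.add_apply]
        congr 1
        rw [Matrix.mul_apply]
        simp only [Matrix.of_apply, ite_mul, zero_mul]
        rw [Finset.sum_ite_eq' Finset.univ i]
        simp
      have hUB_grade : (U * B).val ∈ MatrixGrade 𝒜 δ lam := by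
        rw [Units.val_mul]
        exact MatrixGrade.zero_mul 𝒜 ((hS0u U).mp hU_S0).1 hB
      -- new column j is monomial with pivot i
      have hnew_pivot : (U * B).val i j ≠ 0 := by
        rw [hUB, hc_i, zero_mul, add_zero]
        exact hBij
      have hnew_clear : ∀ m, m ≠ i → (U * B).val m j = 0 := by
        intro m hm
        rw [hUB]
        simp only [hc_def, if_neg hm]
        rw [← hu_spec, neg_mul, mul_assoc, u.inv_mul, mul_one, add_neg_cancel]
      -- old columns are unchanged
      have hold : ∀ j' ∈ s, ∀ m, (U * B).val m j' = B.val m j' := by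
        intro j' hj' m
        rw [hUB, (hcol j' hj').2 i (fun h => hiρ j' hj' h.symm), mul_zero, add_zero]
      -- apply the induction hypothesis
      have hs' : (insert j s)ᶜ.card = k := by
        rw [Finset.compl_insert, Finset.card_erase_of_mem hj, hs]
        rfl
      have hinj' : Set.InjOn (Function.update ρ j i) ↑(insert j s) := by
        intro p hp q hq hpq
        rw [Finset.coe_insert, Set.mem_insert_iff] at hp hq
        rcases hp with hp | hp <;> rcases hq with hq | hq
        · rw [hp, hq]
        · exfalso
          rw [hp, Function.update_self] at hpq
          rw [Function.update_of_ne (fun h : q = j => hjs (h ▸ hq)) _ _] at hpq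
          exact hiρ q hq hpq.symm
        · exfalso
          rw [hq, Function.update_self] at hpq
          rw [Function.update_of_ne (fun h : p = j => hjs (h ▸ hp)) _ _] at hpq
          exact hiρ p hp hpq
        · rw [Function.update_of_ne (fun h : p = j => hjs (h ▸ hp)) _ _,
            Function.update_of_ne (fun h : q = j => hjs (h ▸ hq)) _ _] at hpq
          exact hinj hp hq hpq
      have hcol' : ∀ j' ∈ insert j s, (U * B).val (Function.update ρ j i j') j' ≠ 0 ∧
          ∀ m, m ≠ Function.update ρ j i j' → (U * B).val m j' = 0 := by
        intro j' hj'
        rcases Finset.mem_insert.mp hj' with hj' | hj'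
        · subst hj'
          rw [Function.update_self]
          exact ⟨hnew_pivot, hnew_clear⟩
        · rw [Function.update_of_ne (fun h : j' = j => hjs (h ▸ hj')) _ _]
          refine ⟨?_, ?_⟩
          · rw [hold j' hj']
            exact (hcol j' hj').1
          · intro m hm
            rw [hold j' hj']
            exact (hcol j' hj').2 m hm
      obtain ⟨T', hT'c, hT'S0, ρ'', hρ'', hcols''⟩ :=
        ih (insert j s) (U * B) (Function.update ρ j i) hs' hUB_grade hinj' hcol'
      refine ⟨T' * U, mul_mem hT'c hU_comm, mul_mem hT'S0 hU_S0, ρ'', hρ'', ?_⟩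
      intro l
      rw [mul_assoc]
      exact hcols'' l

theorem homogeneous_unit_factorization' {n : ℕ} [Nontrivial E]
    (hdiv : ∀ (γ : Γ) (x : E), x ∈ 𝒜 γ → x ≠ 0 → IsUnit x)
    (hE0 : ∃ x : E, x ∈ 𝒜 (0 : Γ) ∧ x ≠ 0 ∧ x ≠ 1)
    (δ : Fin n → Γ)
    (S0u : Subgroup (Matrix (Fin n) (Fin n) E)ˣ)
    (hS0u : ∀ A : (Matrix (Fin n) (Fin n) E)ˣ, A ∈ S0u ↔
      (A.val ∈ MatrixGrade 𝒜 δ 0 ∧ A⁻¹.val ∈ MatrixGrade 𝒜 δ 0))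
    (A : (Matrix (Fin n) (Fin n) E)ˣ)
    (hA : ∃ lam, A.val ∈ MatrixGrade 𝒜 δ lam) :
    ∃ C M : (Matrix (Fin n) (Fin n) E)ˣ,
      C ∈ ⁅S0u, S0u⁆ ∧
      (∃ (u : Fin n → E) (π : Equiv.Perm (Fin n)), (∀ i, IsUnit (u i)) ∧
        M.val = Matrix.diagonal u * π.permMatrix E) ∧
      (∃ lam, M.val ∈ MatrixGrade 𝒜 δ lam) ∧
      A = C * M := by
  classical
  obtain ⟨lam, hA⟩ := hA
  obtain ⟨T, hTc, hTS0, ρ', hρ', hcols⟩ :=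
    reduce_aux 𝒜 hdiv hE0 δ S0u hS0u lam ((∅ : Finset (Fin n))ᶜ.card) ∅ A id rfl hA
      (by simp) (by simp)
  have hhom : (T * A).val ∈ MatrixGrade 𝒜 δ lam := by
    rw [Units.val_mul]
    exact MatrixGrade.zero_mul 𝒜 ((hS0u T).mp hTS0).1 hA
  have hbij : Function.Bijective ρ' := Finite.injective_iff_bijective.mp hρ'
  set σ := Equiv.ofBijective ρ' hbij with hσ
  set π := σ.symm with hπ
  have hσ_apply : ∀ l, σ l = ρ' l := fun l => rfl
  have hρ'π : ∀ i, ρ' (π i) = i := by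
    intro i
    rw [← hσ_apply, hπ]
    exact σ.apply_symm_apply i
  have hπρ' : ∀ l, π (ρ' l) = l := by
    intro l
    rw [← hσ_apply, hπ]
    exact σ.symm_apply_apply l
  refine ⟨T⁻¹, T * A, Subgroup.inv_mem _ hTc,
    ⟨fun i => (T * A).val i (π i), π, ?_, ?_⟩, ⟨lam, hhom⟩, (inv_mul_cancel_left T A).symm⟩
  · intro i
    apply hdiv _ _ (hhom i (π i))
    have := (hcols (π i)).1
    rwa [hρ'π i] at this
  · ext m l
    rw [Matrix.diagonal_mul]
    rw [Equiv.Perm.permMatrix, PEquiv.toMatrix_apply, Equiv.toPEquiv_apply]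
    by_cases hl : l = π m
    · rw [hl]
      simp
    · rw [if_neg (by simpa [eq_comm] using hl), mul_zero]
      apply (hcols l).2 m
      intro h
      exact hl (by rw [h, hπρ' l])

end Aux

/-- if `E` is a `Γ`-graded division ring with `E₀ ≠ 𝔽₂` and
`S = Mₙ(E)(δ̄)`, then every homogeneous unit `A ∈ S_h*` can be written `A = C * M`
with `C ∈ [S₀*, S₀*]` (the commutator subgroup of the unit group of the degree-zero
component `S₀`) and `M` a homogeneous monomial matrix. -/
theorem homogeneous_unit_factorization {Γ E : Type*} [AddCommGroup Γ] [DecidableEq Γ]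
    [Ring E] [Nontrivial E] (𝒜 : Γ → AddSubgroup E) [GradedRing 𝒜]
    (hdiv : ∀ (γ : Γ) (x : E), x ∈ 𝒜 γ → x ≠ 0 → IsUnit x)
    -- `E₀` is not the field with two elements
    (hE0 : ∃ x : E, x ∈ 𝒜 (0 : Γ) ∧ x ≠ 0 ∧ x ≠ 1)
    {n : ℕ} (δ : Fin n → Γ)
    -- the group of units of the degree-zero component `S₀`
    (S0u : Subgroup (Matrix (Fin n) (Fin n) E)ˣ)
    (hS0u : ∀ A : (Matrix (Fin n) (Fin n) E)ˣ, A ∈ S0u ↔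
      (A.val ∈ MatrixGrade 𝒜 δ 0 ∧ A⁻¹.val ∈ MatrixGrade 𝒜 δ 0))
    (A : (Matrix (Fin n) (Fin n) E)ˣ)
    -- `A` is a homogeneous unit
    (hA : ∃ lam, A.val ∈ MatrixGrade 𝒜 δ lam) :
    ∃ C M : (Matrix (Fin n) (Fin n) E)ˣ,
      C ∈ ⁅S0u, S0u⁆ ∧
      (∃ (u : Fin n → E) (π : Equiv.Perm (Fin n)), (∀ i, IsUnit (u i)) ∧
        M.val = Matrix.diagonal u * π.permMatrix E) ∧
      (∃ lam, M.val ∈ MatrixGrade 𝒜 δ lam) ∧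
      A = C * M :=
  homogeneous_unit_factorization' 𝒜 hdiv hE0 δ S0u hS0u A hA
end

section
/- Let Γ be an abelian group, E a Γ-graded division ring, and δ₁,…,δₙ ∈ Γ. Let ε₁+Γ_E,…,ε_k+Γ_E be the distinct cosets among δ₁+Γ_E,…,δₙ+Γ_E and let r_ℓ be the number of indices i with δᵢ+Γ_E = ε_ℓ+Γ_E. Then the degree-0 component of Mₙ(E)(δ₁,…,δₙ) is isomorphic as a ring to M_{r₁}(E₀) × … × M_{r_k}(E₀). In particular Mₙ(E)(δ̄)₀ is a semisimple ring when E₀ is a division ring, and it is simple if and only if k = 1. -/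
set_option maxHeartbeats 1000000
set_option synthInstance.maxHeartbeats 400000
set_option linter.unnecessarySimpa false

open DirectSum in
lemma aux_inv_mem {Γ E : Type*} [AddCommGroup Γ] [DecidableEq Γ] [Ring E]
    (𝒜 : Γ → AddSubgroup E) [GradedRing 𝒜] {γ : Γ} {x y : E}
    (hx : x ∈ 𝒜 γ) (hxy : x * y = 1) (hyx : y * x = 1) : y ∈ 𝒜 (-γ) := by
  have hone : (DirectSum.decompose 𝒜 (1 : E) (0 : Γ) : E) = 1 :=
    DirectSum.decompose_of_mem_same 𝒜 SetLike.GradedOne.one_mem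
  have h1 : x * (DirectSum.decompose 𝒜 y (-γ) : E) = 1 := by
    have h := DirectSum.coe_decompose_mul_add_of_left_mem (𝒜 := 𝒜) (i := γ) (j := -γ) (b := y) hx
    rw [hxy, add_neg_cancel, hone] at h
    exact h.symm
  have h2 : (DirectSum.decompose 𝒜 y (-γ) : E) * x = 1 := by
    have h := DirectSum.coe_decompose_mul_add_of_right_mem (𝒜 := 𝒜) (i := -γ) (j := γ) (a := y) hx
    rw [hyx, neg_add_cancel, hone] at h
    exact h.symm
  have : y = (DirectSum.decompose 𝒜 y (-γ) : E) := by
    calc y = 1 * y := (one_mul y).symm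
    _ = ((DirectSum.decompose 𝒜 y (-γ) : E) * x) * y := by rw [h2]
    _ = (DirectSum.decompose 𝒜 y (-γ) : E) * (x * y) := by rw [mul_assoc]
    _ = (DirectSum.decompose 𝒜 y (-γ) : E) := by rw [hxy, mul_one]
  rw [this]
  exact SetLike.coe_mem _

lemma aux_simple_transfer {R S : Type*} [Ring R] [Ring S] (e : R ≃+* S)
    (h : IsSimpleRing R) : IsSimpleRing S := by
  haveI : Nontrivial R := by have := h; exact inferInstance
  haveI : Nontrivial S := e.symm.toEquiv.nontrivial
  apply IsSimpleRing.of_eq_bot_or_eq_top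
  intro I
  rcases h.simple.eq_bot_or_eq_top (TwoSidedIdeal.comap e I) with hbot | htop
  · left
    refine SetLike.ext fun x => ?_
    simp only [TwoSidedIdeal.mem_bot]
    constructor
    · intro hx
      have : e.symm x ∈ TwoSidedIdeal.comap e I := by
        rw [TwoSidedIdeal.mem_comap]
        simpa using hx
      rw [hbot, TwoSidedIdeal.mem_bot] at this
      have := congrArg e this
      simpa using this
    · rintro rfl; exact TwoSidedIdeal.zero_mem I
  · right
    refine SetLike.ext fun x => ?_
    simp only [TwoSidedIdeal.mem_top, iff_true]
    have : e.symm x ∈ TwoSidedIdeal.comap e I := htop ▸ TwoSidedIdeal.mem_top _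
    rw [TwoSidedIdeal.mem_comap] at this
    simpa using this


lemma aux_matrix_semisimple (m : ℕ) (D : Type*) [DivisionRing D] :
    IsSemisimpleRing (Matrix (Fin m) (Fin m) D) := by
  classical
  set R := Matrix (Fin m) (Fin m) D with hR
  -- the j-th column, as a left ideal
  let C : Fin m → Submodule R R := fun j =>
    { carrier := {A | ∀ p l, l ≠ j → A p l = 0}
      add_mem' := fun {A B} hA hB p l hl => by
        show A p l + B p l = 0
        rw [hA p l hl, hB p l hl, add_zero]
      zero_mem' := fun p l _ => rfl
      smul_mem' := fun B A hA p l hl => by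
        show (B * A) p l = 0
        rw [Matrix.mul_apply]
        exact Finset.sum_eq_zero fun q _ => by rw [hA q l hl, mul_zero] }
  have hmemC : ∀ (j : Fin m) (A : R), A ∈ C j ↔ ∀ p l, l ≠ j → A p l = 0 := fun _ _ => Iff.rfl
  have hsimple : ∀ j, IsSimpleModule R ↥(C j) := by
    intro j
    -- a nonzero element of C j
    let std : R := fun p l => if p = j ∧ l = j then 1 else 0
    have hstd : std ∈ C j := fun p l hl => if_neg (fun h => hl h.2)
    have hstdne : (⟨std, hstd⟩ : ↥(C j)) ≠ 0 := by
      intro h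
      have := congrFun (congrFun (congrArg Subtype.val h) j) j
      simp [std] at this
      exact one_ne_zero this
    haveI : Nontrivial ↥(C j) := ⟨⟨std, hstd⟩, 0, hstdne⟩
    have main : ∀ N : Submodule R ↥(C j), N ≠ ⊥ → N = ⊤ := by
      intro N hN
      obtain ⟨x, hxN, hx0⟩ := Submodule.exists_mem_ne_zero_of_ne_bot hN
      have : ∃ i, (x : R) i j ≠ 0 := by
        by_contra h
        push_neg at h
        apply hx0
        refine Subtype.ext (funext fun p => funext fun l => ?_)
        by_cases hl : l = j
        · subst hl; exact h p
        · exact x.2 p l hl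
      obtain ⟨i, hij⟩ := this
      rw [eq_top_iff]
      rintro ⟨y, hy⟩ -
      let B : R := fun p q => if q = i then y p j * ((x : R) i j)⁻¹ else 0
      have hBx : (⟨y, hy⟩ : ↥(C j)) = B • x := by
        refine Subtype.ext ?_
        have : (B • x : ↥(C j)).val = B * (x : R) := rfl
        rw [this]
        funext p l
        rw [Matrix.mul_apply]
        have hsum : ∀ q : Fin m, B p q * (x : R) q l =
            if q = i then y p j * ((x : R) i j)⁻¹ * (x : R) q l else 0 := by
          intro q
          by_cases hq : q = i <;> simp [B, hq]
        rw [Finset.sum_congr rfl fun q _ => hsum q, Finset.sum_ite_eq' Finset.univ i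
          (fun q => y p j * ((x : R) i j)⁻¹ * (x : R) q l), if_pos (Finset.mem_univ i)]
        by_cases hl : l = j
        · subst hl
          rw [mul_assoc, inv_mul_cancel₀ hij, mul_one]
        · rw [x.2 i l hl, mul_zero]
          exact hy p l hl
      rw [hBx]
      exact N.smul_mem B hxN
    haveI : Nontrivial (Submodule R ↥(C j)) := ⟨⊥, ⊤, bot_ne_top⟩
    haveI : IsSimpleOrder (Submodule R ↥(C j)) := ⟨fun N => or_iff_not_imp_left.mpr (main N)⟩
    exact IsSimpleModule.mk
  have hsup : (⨆ j, C j) = ⊤ := by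
    rw [eq_top_iff]
    intro A _
    have hA : A = ∑ j, (fun p l => if l = j then A p l else 0 : R) := by
      funext p l
      rw [Finset.sum_apply, Finset.sum_apply]
      simp [Finset.sum_ite_eq]
    rw [hA]
    refine Submodule.sum_mem _ fun j _ => Submodule.mem_iSup_of_mem j ?_
    intro p l hl
    exact if_neg hl
  have : IsSemisimpleModule R R := by
    apply IsSemisimpleModule.of_sSup_simples_eq_top
    rw [eq_top_iff, ← hsup]
    exact iSup_le fun j => le_sSup (hsimple j)
  exact this


/-- let `E` be a `Γ`-graded division ring and `δ₁, …, δₙ ∈ Γ`.  Let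
`ε₁ + Γ_E, …, ε_k + Γ_E` be the distinct cosets among the `δᵢ + Γ_E` (the coset of
`δ i` being `ε (b i) + Γ_E`) and `r ℓ` the number of `i` with `δᵢ + Γ_E = ε_ℓ + Γ_E`.
Then `Mₙ(E)(δ̄)₀ ≅ M_{r₁}(E₀) × … × M_{r_k}(E₀)` as rings; in particular it is a
semisimple ring, and it is simple if and only if `k = 1`. -/
theorem matrix_grade_zero_component {Γ E : Type*} [AddCommGroup Γ] [DecidableEq Γ]
    [Ring E] [Nontrivial E] (𝒜 : Γ → AddSubgroup E) [GradedRing 𝒜]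
    (hdiv : ∀ (γ : Γ) (x : E), x ∈ 𝒜 γ → x ≠ 0 → IsUnit x)
    {n k : ℕ} (δ : Fin n → Γ) (ε : Fin k → Γ) (b : Fin n → Fin k)
    -- `δ i + Γ_E = ε (b i) + Γ_E` for each `i`
    (hb : ∀ i, ∃ x : E, x ≠ 0 ∧ x ∈ 𝒜 (δ i - ε (b i)))
    (hbsurj : Function.Surjective b)
    -- the cosets `ε ℓ + Γ_E` are pairwise distinct
    (hdistinct : ∀ ℓ ℓ' : Fin k, (∃ x : E, x ≠ 0 ∧ x ∈ 𝒜 (ε ℓ - ε ℓ')) → ℓ = ℓ')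
    -- `r ℓ` is the number of `i` with `δ i + Γ_E = ε ℓ + Γ_E`
    (r : Fin k → ℕ)
    (hrdef : ∀ ℓ, r ℓ = (Finset.univ.filter fun i => b i = ℓ).card)
    -- `E₀`, the degree-zero component of `E`, as a subring
    (E0 : Subring E) (hE0 : ∀ x : E, x ∈ E0 ↔ x ∈ 𝒜 (0 : Γ))
    -- `S₀ = Mₙ(E)(δ̄)₀`, the degree-zero component of `S`, as a subring
    (S0 : Subring (Matrix (Fin n) (Fin n) E))
    (hS0 : ∀ A : Matrix (Fin n) (Fin n) E, A ∈ S0 ↔ A ∈ MatrixGrade 𝒜 δ 0) :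
    Nonempty (↥S0 ≃+* ((ℓ : Fin k) → Matrix (Fin (r ℓ)) (Fin (r ℓ)) ↥E0)) ∧
    IsSemisimpleRing ↥S0 ∧
    (IsSimpleRing ↥S0 ↔ k = 1) := by
  classical
  -- choose homogeneous units realizing the coset identifications
  have hexists : ∀ i : Fin n, ∃ x y : E, x ∈ 𝒜 (δ i - ε (b i)) ∧ y ∈ 𝒜 (ε (b i) - δ i)
      ∧ x * y = 1 ∧ y * x = 1 := by
    intro i
    obtain ⟨x, hx0, hxmem⟩ := hb i
    obtain ⟨xu, hxu⟩ := hdiv _ x hxmem hx0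
    have hxy : x * (↑xu⁻¹ : E) = 1 := by rw [← hxu]; exact xu.mul_inv
    have hyx : (↑xu⁻¹ : E) * x = 1 := by rw [← hxu]; exact xu.inv_mul
    have hy : (↑xu⁻¹ : E) ∈ 𝒜 (ε (b i) - δ i) := by
      have := aux_inv_mem 𝒜 hxmem hxy hyx
      rwa [neg_sub] at this
    exact ⟨x, ↑xu⁻¹, hxmem, hy, hxy, hyx⟩
  choose u v hu hv huv hvu using hexists
  -- degree computation for conjugated entries
  have key0 : ∀ (A : Matrix (Fin n) (Fin n) E), A ∈ MatrixGrade 𝒜 δ 0 →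
      ∀ i j, u i * A i j * v j ∈ 𝒜 (ε (b j) - ε (b i)) := by
    intro A hA i j
    have h1 := SetLike.mul_mem_graded (SetLike.mul_mem_graded (hu i) (hA i j)) (hv j)
    have heq : δ i - ε (b i) + (0 + δ j - δ i) + (ε (b j) - δ j) = ε (b j) - ε (b i) := by abel
    rwa [heq] at h1
  have recover : ∀ (i j : Fin n) (x : E), v i * (u i * x * v j) * u j = x := by
    intro i j x
    have h : v i * (u i * x * v j) * u j = (v i * u i) * x * (v j * u j) := by noncomm_ring
    rw [h, hvu i, hvu j, one_mul, mul_one]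
  -- block structure: entries outside the diagonal blocks vanish
  have key : ∀ A ∈ MatrixGrade 𝒜 δ 0, ∀ i j, b i ≠ b j → A i j = 0 := by
    intro A hA i j hne
    by_contra h0
    refine hne (hdistinct (b j) (b i) ⟨u i * A i j * v j, ?_, key0 A hA i j⟩).symm
    intro hzero
    apply h0
    rw [← recover i j (A i j), hzero, mul_zero, zero_mul]
  -- index the fibers of b
  have hcard : ∀ ℓ, Fintype.card {i : Fin n // b i = ℓ} = r ℓ := fun ℓ => by
    rw [Fintype.card_subtype, hrdef]
  let e : ∀ ℓ, Fin (r ℓ) ≃ {i : Fin n // b i = ℓ} := fun ℓ =>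
    (Fintype.equivFinOfCardEq (hcard ℓ)).symm
  have entry_mem : ∀ (A : ↥S0) (ℓ : Fin k) (p q : Fin (r ℓ)),
      u ((e ℓ p : {i : Fin n // b i = ℓ}) : Fin n) *
        (A : Matrix (Fin n) (Fin n) E) (e ℓ p) (e ℓ q) * v ((e ℓ q : {i : Fin n // b i = ℓ}) : Fin n) ∈ E0 := by
    intro A ℓ p q
    apply (hE0 _).2
    have h1 := key0 _ ((hS0 _).1 A.2) ((e ℓ p : {i : Fin n // b i = ℓ}) : Fin n)
      ((e ℓ q : {i : Fin n // b i = ℓ}) : Fin n)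
    have h2 : ε (b ((e ℓ q : {i : Fin n // b i = ℓ}) : Fin n)) -
        ε (b ((e ℓ p : {i : Fin n // b i = ℓ}) : Fin n)) = 0 := by
      rw [(e ℓ p).2, (e ℓ q).2, sub_self]
    rwa [h2] at h1
  let φfun : ↥S0 → ((ℓ : Fin k) → Matrix (Fin (r ℓ)) (Fin (r ℓ)) ↥E0) :=
    fun A ℓ p q => ⟨_, entry_mem A ℓ p q⟩
  have hφval : ∀ (A : ↥S0) ℓ (p q : Fin (r ℓ)), (φfun A ℓ p q : E) =
      u ((e ℓ p : {i : Fin n // b i = ℓ}) : Fin n) *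
        (A : Matrix (Fin n) (Fin n) E) (e ℓ p) (e ℓ q) *
        v ((e ℓ q : {i : Fin n // b i = ℓ}) : Fin n) := fun _ _ _ _ => rfl
  -- reindexing sums over a fiber of b
  have reindex : ∀ (ℓ : Fin k) (f : Fin n → E), (∀ j', b j' ≠ ℓ → f j' = 0) →
      ∑ j', f j' = ∑ m : Fin (r ℓ), f ((e ℓ m : {i : Fin n // b i = ℓ}) : Fin n) := by
    intro ℓ f hf
    rw [← Finset.sum_filter_of_ne (p := fun j' => b j' = ℓ)
      (fun x _ hx => by by_contra h; exact hx (hf x h))]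
    rw [Finset.sum_subtype (p := fun j' => b j' = ℓ) (Finset.univ.filter fun j' => b j' = ℓ)
      (fun x => by simp) (fun x => f x)]
    exact (Equiv.sum_comp (e ℓ) (fun a : {i : Fin n // b i = ℓ} => f a)).symm
  have hone : φfun 1 = 1 := by
    funext ℓ p q
    apply Subtype.ext
    rw [hφval]
    have hpi : (1 : (ℓ : Fin k) → Matrix (Fin (r ℓ)) (Fin (r ℓ)) ↥E0) ℓ p q =
        (1 : Matrix (Fin (r ℓ)) (Fin (r ℓ)) ↥E0) p q := rfl
    rw [hpi]
    by_cases hpq : p = q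
    · subst hpq
      have h1 : ((1 : ↥S0) : Matrix (Fin n) (Fin n) E) (e ℓ p) (e ℓ p) = 1 :=
        Matrix.one_apply_eq _
      rw [h1, mul_one, huv, Matrix.one_apply_eq, OneMemClass.coe_one]
    · have hne : ((e ℓ p : {i : Fin n // b i = ℓ}) : Fin n) ≠
          ((e ℓ q : {i : Fin n // b i = ℓ}) : Fin n) :=
        fun h => hpq ((e ℓ).injective (Subtype.ext h))
      have h1 : ((1 : ↥S0) : Matrix (Fin n) (Fin n) E) (e ℓ p) (e ℓ q) = 0 :=
        Matrix.one_apply_ne hne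
      rw [h1, Matrix.one_apply_ne hpq, mul_zero, zero_mul, ZeroMemClass.coe_zero]
  have hmul : ∀ A B : ↥S0, φfun (A * B) = φfun A * φfun B := by
    intro A B
    funext ℓ p q
    apply Subtype.ext
    rw [hφval]
    have hcoe : ((A * B : ↥S0) : Matrix (Fin n) (Fin n) E) =
        (A : Matrix (Fin n) (Fin n) E) * (B : Matrix (Fin n) (Fin n) E) := rfl
    rw [hcoe, Matrix.mul_apply]
    set i := ((e ℓ p : {i : Fin n // b i = ℓ}) : Fin n) with hi
    set j := ((e ℓ q : {i : Fin n // b i = ℓ}) : Fin n) with hj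
    rw [Finset.mul_sum, Finset.sum_mul]
    have hvan : ∀ j', b j' ≠ ℓ →
        u i * ((A : Matrix (Fin n) (Fin n) E) i j' * (B : Matrix (Fin n) (Fin n) E) j' j) * v j = 0 := by
      intro j' hj'
      have hbi : b i = ℓ := (e ℓ p).2
      have hz : (A : Matrix (Fin n) (Fin n) E) i j' = 0 :=
        key _ ((hS0 _).1 A.2) i j' (by rw [hbi]; exact fun h => hj' h.symm)
      rw [hz, zero_mul, mul_zero, zero_mul]
    rw [reindex ℓ _ hvan]
    have hpi : ((φfun A * φfun B) ℓ p q : E) = (((φfun A ℓ) * (φfun B ℓ)) p q : E) := rfl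
    rw [hpi]
    have hrhs : ((((φfun A ℓ) * (φfun B ℓ)) p q : ↥E0) : E) =
        ∑ m : Fin (r ℓ), ((φfun A ℓ p m : ↥E0) : E) * ((φfun B ℓ m q : ↥E0) : E) := by
      rw [Matrix.mul_apply]
      exact map_sum E0.subtype _ _
    rw [hrhs]
    refine Finset.sum_congr rfl fun m _ => ?_
    rw [hφval, hφval]
    set w := ((e ℓ m : {i : Fin n // b i = ℓ}) : Fin n) with hw
    have hstep : (u i * (A : Matrix (Fin n) (Fin n) E) i w * v w) *
        (u w * (B : Matrix (Fin n) (Fin n) E) w j * v j) =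
        u i * (A : Matrix (Fin n) (Fin n) E) i w * (v w * u w) *
          ((B : Matrix (Fin n) (Fin n) E) w j * v j) := by noncomm_ring
    rw [hstep, hvu w, mul_one]
    noncomm_ring
  have hzero : φfun 0 = 0 := by
    funext ℓ p q
    apply Subtype.ext
    rw [hφval]
    have h1 : ((0 : ↥S0) : Matrix (Fin n) (Fin n) E) (e ℓ p) (e ℓ q) = 0 := rfl
    rw [h1, mul_zero, zero_mul]
    rfl
  have hadd : ∀ A B : ↥S0, φfun (A + B) = φfun A + φfun B := by
    intro A B
    funext ℓ p q
    apply Subtype.ext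
    rw [hφval]
    have hcoe : ((A + B : ↥S0) : Matrix (Fin n) (Fin n) E) (e ℓ p) (e ℓ q) =
        (A : Matrix (Fin n) (Fin n) E) (e ℓ p) (e ℓ q) +
        (B : Matrix (Fin n) (Fin n) E) (e ℓ p) (e ℓ q) := rfl
    have hcoe2 : (((φfun A + φfun B) ℓ p q : ↥E0) : E) =
        ((φfun A ℓ p q : ↥E0) : E) + ((φfun B ℓ p q : ↥E0) : E) := rfl
    rw [hcoe, hcoe2, hφval, hφval, mul_add, add_mul]
  let φ : ↥S0 →+* ((ℓ : Fin k) → Matrix (Fin (r ℓ)) (Fin (r ℓ)) ↥E0) :=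
    { toFun := φfun
      map_one' := hone
      map_mul' := hmul
      map_zero' := hzero
      map_add' := hadd }
  -- injectivity
  have hinj : Function.Injective φ := by
    rw [injective_iff_map_eq_zero]
    intro A hA
    apply Subtype.ext
    funext i j
    show (A : Matrix (Fin n) (Fin n) E) i j = 0
    by_cases hbij : b i = b j
    · set ℓ := b j with hℓ
      have hp : b i = ℓ := hbij
      let p : Fin (r ℓ) := (e ℓ).symm ⟨i, hp⟩
      let q : Fin (r ℓ) := (e ℓ).symm ⟨j, rfl⟩
      have h1 : (φfun A ℓ p q : E) = 0 := by
        rw [show φfun A ℓ p q = 0 from congrFun (congrFun (congrFun hA ℓ) p) q]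
        rfl
      rw [hφval] at h1
      have hep : (e ℓ p : {i' : Fin n // b i' = ℓ}) = ⟨i, hp⟩ := (e ℓ).apply_symm_apply _
      have heq : (e ℓ q : {i' : Fin n // b i' = ℓ}) = ⟨j, rfl⟩ := (e ℓ).apply_symm_apply _
      rw [hep, heq] at h1
      have := recover i j ((A : Matrix (Fin n) (Fin n) E) i j)
      rw [h1, mul_zero, zero_mul] at this
      exact this.symm
    · exact key _ ((hS0 _).1 A.2) i j hbij
  -- surjectivity
  have hsurj : Function.Surjective φ := by
    intro M
    let Aent : Fin n → Fin n → E := fun i j =>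
      if h : b i = b j then
        v i * (M (b i) ((e (b i)).symm ⟨i, rfl⟩) ((e (b i)).symm ⟨j, h.symm⟩) : E) * u j
      else 0
    have hAmem : (Aent : Matrix (Fin n) (Fin n) E) ∈ S0 := by
      refine (hS0 _).2 ?_
      intro i j
      by_cases h : b i = b j
      · have h1 : Aent i j =
            v i * (M (b i) ((e (b i)).symm ⟨i, rfl⟩) ((e (b i)).symm ⟨j, h.symm⟩) : E) * u j :=
          dif_pos h
        rw [h1]
        have hm : (M (b i) ((e (b i)).symm ⟨i, rfl⟩) ((e (b i)).symm ⟨j, h.symm⟩) : E) ∈ 𝒜 (0 : Γ) :=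
          (hE0 _).1 (SetLike.coe_mem _)
        have h2 := SetLike.mul_mem_graded (SetLike.mul_mem_graded (hv i) hm) (hu j)
        have heq : ε (b i) - δ i + 0 + (δ j - ε (b j)) = 0 + δ j - δ i := by
          rw [h]; abel
        rwa [heq] at h2
      · have h1 : Aent i j = 0 := dif_neg h
        rw [h1]
        exact zero_mem _
    refine ⟨⟨(Aent : Matrix (Fin n) (Fin n) E), hAmem⟩, ?_⟩
    funext ℓ p q
    apply Subtype.ext
    show (φfun _ ℓ p q : E) = (M ℓ p q : E)
    rw [hφval]
    have gen : ∀ (i j : Fin n) (hi : b i = ℓ) (hj : b j = ℓ),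
        (e ℓ).symm ⟨i, hi⟩ = p → (e ℓ).symm ⟨j, hj⟩ = q →
        u i * Aent i j * v j = (M ℓ p q : E) := by
      intro i j hi hj hp hq
      subst hi
      subst hp
      subst hq
      have hbij : b i = b j := hj.symm
      have h1 : Aent i j =
          v i * (M (b i) ((e (b i)).symm ⟨i, rfl⟩) ((e (b i)).symm ⟨j, hbij.symm⟩) : E) * u j :=
        dif_pos hbij
      rw [h1]
      have hstep : ∀ x : E, u i * (v i * x * u j) * v j = (u i * v i) * x * (u j * v j) := by
        intro x; noncomm_ring
      rw [hstep, huv i, huv j, one_mul, mul_one]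
    have hp2 := (e ℓ p).2
    have hq2 := (e ℓ q).2
    refine gen _ _ hp2 hq2 ?_ ?_
    · have : (⟨((e ℓ p : {i : Fin n // b i = ℓ}) : Fin n), hp2⟩ : {i : Fin n // b i = ℓ}) = e ℓ p :=
        Subtype.ext rfl
      rw [this]
      exact (e ℓ).symm_apply_apply p
    · have : (⟨((e ℓ q : {i : Fin n // b i = ℓ}) : Fin n), hq2⟩ : {i : Fin n // b i = ℓ}) = e ℓ q :=
        Subtype.ext rfl
      rw [this]
      exact (e ℓ).symm_apply_apply q
  let iso : ↥S0 ≃+* ((ℓ : Fin k) → Matrix (Fin (r ℓ)) (Fin (r ℓ)) ↥E0) :=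
    RingEquiv.ofBijective φ ⟨hinj, hsurj⟩
  -- E0 is a division ring
  haveI : Nontrivial ↥E0 := ⟨1, 0, fun h => one_ne_zero (α := E)
    (by simpa using congrArg Subtype.val h)⟩
  letI : DivisionRing ↥E0 := DivisionRing.ofIsUnitOrEqZero (fun a => by
    by_cases ha : a = 0
    · exact Or.inr ha
    · left
      have haE : (a : E) ≠ 0 := fun h => ha (Subtype.ext h)
      obtain ⟨au, hau⟩ := hdiv 0 a ((hE0 a).1 a.2) haE
      have hauz : (au : E) ∈ 𝒜 (0 : Γ) := hau ▸ (hE0 a).1 a.2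
      have hinv : (↑au⁻¹ : E) ∈ 𝒜 (0 : Γ) := by
        have := aux_inv_mem 𝒜 hauz au.mul_inv au.inv_mul
        rwa [neg_zero] at this
      refine ⟨⟨a, ⟨(↑au⁻¹ : E), (hE0 _).2 hinv⟩, Subtype.ext ?_, Subtype.ext ?_⟩, rfl⟩
      · show (a : E) * (↑au⁻¹ : E) = 1
        rw [← hau]; exact au.mul_inv
      · show (↑au⁻¹ : E) * (a : E) = 1
        rw [← hau]; exact au.inv_mul)
  have hrpos : ∀ ℓ, 0 < r ℓ := by
    intro ℓ
    obtain ⟨i, hi⟩ := hbsurj ℓ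
    rw [hrdef]
    exact Finset.card_pos.mpr ⟨i, by simp [hi]⟩
  haveI : ∀ ℓ, Nonempty (Fin (r ℓ)) := fun ℓ => ⟨⟨0, hrpos ℓ⟩⟩
  -- semisimplicity
  haveI hssℓ : ∀ ℓ, IsSemisimpleRing (Matrix (Fin (r ℓ)) (Fin (r ℓ)) ↥E0) := fun ℓ =>
    aux_matrix_semisimple (r ℓ) ↥E0
  haveI hssPi : IsSemisimpleRing ((ℓ : Fin k) → Matrix (Fin (r ℓ)) (Fin (r ℓ)) ↥E0) :=
    inferInstance
  refine ⟨⟨iso⟩, iso.symm.isSemisimpleRing, ?_, ?_⟩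
  · -- simple → k = 1
    intro hsimple
    have hsimple' : IsSimpleRing ((ℓ : Fin k) → Matrix (Fin (r ℓ)) (Fin (r ℓ)) ↥E0) :=
      aux_simple_transfer iso hsimple
    by_contra hk1
    rcases Nat.lt_or_ge k 1 with hk | hk
    · -- k = 0 : the product ring is trivial
      haveI : IsEmpty (Fin k) := by
        rw [Nat.lt_one_iff] at hk
        subst hk
        exact Fin.isEmpty
      haveI := hsimple'
      have hnt : Nontrivial ((ℓ : Fin k) → Matrix (Fin (r ℓ)) (Fin (r ℓ)) ↥E0) := inferInstance
      obtain ⟨a, b', hab⟩ := hnt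
      exact hab (Subsingleton.elim a b')
    · -- k ≥ 2
      have hk2 : 2 ≤ k := by omega
      let ℓ0 : Fin k := ⟨0, by omega⟩
      let ℓ1 : Fin k := ⟨1, by omega⟩
      have hne : ℓ1 ≠ ℓ0 := by
        intro h
        have := congrArg Fin.val h
        simp [ℓ0, ℓ1] at this
      haveI := hsimple'
      have hinj0 : Function.Injective
          (Pi.evalRingHom (fun ℓ => Matrix (Fin (r ℓ)) (Fin (r ℓ)) ↥E0) ℓ0) :=
        RingHom.injective _
      have hev : (Pi.evalRingHom (fun ℓ => Matrix (Fin (r ℓ)) (Fin (r ℓ)) ↥E0) ℓ0)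
          (Pi.single ℓ1 1) = (Pi.evalRingHom (fun ℓ => Matrix (Fin (r ℓ)) (Fin (r ℓ)) ↥E0) ℓ0) 0 := by
        show (Pi.single (M := fun ℓ => Matrix (Fin (r ℓ)) (Fin (r ℓ)) ↥E0) ℓ1 (1 : Matrix (Fin (r ℓ1)) (Fin (r ℓ1)) ↥E0)) ℓ0 = (0 : _)
        rw [Pi.single_eq_of_ne hne.symm]
      have := hinj0 hev
      have h1 := congrFun this ℓ1
      rw [Pi.single_eq_same, Pi.zero_apply] at h1
      exact one_ne_zero h1
  · -- k = 1 → simple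
    intro hk
    subst hk
    exact aux_simple_transfer
      (iso.trans ⟨Equiv.piUnique (fun ℓ : Fin 1 => Matrix (Fin (r ℓ)) (Fin (r ℓ)) ↥E0),
        fun _ _ => rfl, fun _ _ => rfl⟩).symm
      (IsSimpleRing.matrix _ _)
end

section
/- Let Γ be an abelian group, E a commutative Γ-graded ring, δ̄ = (δ₁,…,δₙ) ∈ Γⁿ, and λ ∈ Γ. If a ∈ Mₙ(E)(δ̄)_λ, i.e. the (i,j)-entry of a lies in E_{λ+δⱼ−δᵢ} for all i,j, then det(a) ∈ E_{nλ}. -/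
set_option maxHeartbeats 1000000

/-- let `E` be a commutative `Γ`-graded ring and `δ̄ ∈ Γⁿ`.  If
`a ∈ Mₙ(E)(δ̄)_λ`, i.e. the `(i,j)`-entry of `a` lies in `E_{λ + δⱼ - δᵢ}` for all
`i, j`, then `det a ∈ E_{nλ}`. -/
theorem det_of_homogeneous_matrix {Γ E : Type*} [AddCommGroup Γ] [DecidableEq Γ]
    [CommRing E] (𝒜 : Γ → AddSubgroup E) [GradedRing 𝒜]
    {n : ℕ} (δ : Fin n → Γ) (lam : Γ)
    (a : Matrix (Fin n) (Fin n) E)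
    (ha : ∀ i j, a i j ∈ 𝒜 (lam + δ j - δ i)) :
    a.det ∈ 𝒜 (n • lam) := by
  rw [Matrix.det_apply]
  refine sum_mem ?_
  intro σ _
  refine zsmul_mem ?_ _
  have h : (∑ i, (lam + δ i - δ (σ i))) = n • lam := by
    rw [Finset.sum_sub_distrib, Finset.sum_add_distrib,
      Equiv.sum_comp σ δ]
    simp [Finset.sum_const]
  rw [← h]
  exact SetLike.prod_mem_graded 𝒜 _ _ (fun i _ => ha (σ i) i)
end

section
/- Let Γ be a torsion-free abelian group and E a Γ-graded division ring. Then every unit of E is homogeneous, i.e. E* = E_h*, and E has no zero divisors. -/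
set_option maxHeartbeats 1000000

open DirectSum

/-- An ordering function on a finitely generated piece of a torsion-free abelian group:
an injective "additive" map into the lex-ordered group `Lex (ℕ →₀ ℤ)`. -/
lemma exists_ordfun {Γ : Type*} [AddCommGroup Γ]
    (htf : ∀ (γ : Γ) (m : ℕ), m ≠ 0 → m • γ = 0 → γ = 0) (s : Finset Γ) :
    ∃ f : Γ → Lex (ℕ →₀ ℤ),
      (∀ a ∈ Submodule.span ℤ (↑s : Set Γ), ∀ b ∈ Submodule.span ℤ (↑s : Set Γ),
        f (a + b) = f a + f b) ∧
      (∀ a ∈ Submodule.span ℤ (↑s : Set Γ), ∀ b ∈ Submodule.span ℤ (↑s : Set Γ),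
        f a = f b → a = b) := by
  classical
  haveI : NoZeroSMulDivisors ℤ Γ := by
    refine ⟨fun {c x} h => ?_⟩
    rcases eq_or_ne c 0 with hc | hc
    · exact Or.inl hc
    · refine Or.inr (htf x c.natAbs (Int.natAbs_ne_zero.mpr hc) ?_)
      have : (c.natAbs : ℤ) • x = 0 := by
        rcases Int.natAbs_eq c with h' | h'
        · rw [← h', h]
        · rw [← neg_neg (c.natAbs : ℤ), ← h', neg_smul, h, neg_zero]
      simpa [natCast_zsmul] using this
  set G := Submodule.span ℤ (↑s : Set Γ) with hG
  haveI : Module.Finite ℤ G := Module.Finite.span_of_finite ℤ s.finite_toSet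
  haveI : Module.Free ℤ G := Module.free_of_finite_type_torsion_free'
  let b := Module.Free.chooseBasis ℤ G
  let e : Module.Free.ChooseBasisIndex ℤ G ↪ ℕ :=
    (Fintype.equivFin _).toEmbedding.trans (Fin.valEmbedding)
  refine ⟨fun γ => if h : γ ∈ G then toLex (Finsupp.embDomain e (b.repr ⟨γ, h⟩)) else 0,
    ?_, ?_⟩
  · intro a ha b' hb
    dsimp only
    rw [dif_pos (add_mem ha hb), dif_pos ha, dif_pos hb]
    have : (⟨a + b', add_mem ha hb⟩ : G) = ⟨a, ha⟩ + ⟨b', hb⟩ := rfl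
    rw [this, map_add, Finsupp.embDomain_add]
    rfl
  · intro a ha b' hb h
    dsimp only at h
    rw [dif_pos ha, dif_pos hb] at h
    have h1 : Finsupp.embDomain e (b.repr ⟨a, ha⟩) = Finsupp.embDomain e (b.repr ⟨b', hb⟩) :=
      toLex.injective h
    have h2 := Finsupp.embDomain_injective e h1
    have h3 : (⟨a, ha⟩ : G) = ⟨b', hb⟩ := b.repr.injective h2
    exact congrArg Subtype.val h3

/-- The component of a product at the sum of extremal degrees. -/
lemma aux_mul_comp {Γ E : Type*} [AddCommGroup Γ] [DecidableEq Γ] [Ring E]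
    (𝒜 : Γ → AddSubgroup E) [GradedRing 𝒜]
    [∀ (i : Γ) (x : 𝒜 i), Decidable (x ≠ 0)]
    (x y : E) (f : Γ → Lex (ℕ →₀ ℤ))
    (hf : ∀ a ∈ (decompose 𝒜 x).support, ∀ a' ∈ (decompose 𝒜 x).support,
       ∀ b ∈ (decompose 𝒜 y).support, ∀ b' ∈ (decompose 𝒜 y).support,
       a + b = a' + b' → f a + f b = f a' + f b')
    (hinj : ∀ a ∈ (decompose 𝒜 x).support, ∀ a' ∈ (decompose 𝒜 x).support, f a = f a' → a = a')
    (γ₀ : Γ) (hγ₀ : γ₀ ∈ (decompose 𝒜 x).support)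
    (δ₀ : Γ) (hδ₀ : δ₀ ∈ (decompose 𝒜 y).support)
    (hmax₁ : ∀ γ ∈ (decompose 𝒜 x).support, f γ ≤ f γ₀)
    (hmax₂ : ∀ δ ∈ (decompose 𝒜 y).support, f δ ≤ f δ₀) :
    (decompose 𝒜 (x * y) (γ₀ + δ₀) : E)
      = (decompose 𝒜 x γ₀ : E) * (decompose 𝒜 y δ₀ : E) := by
  rw [DirectSum.decompose_mul, DirectSum.coe_mul_apply]
  have hset : (((decompose 𝒜 x).support ×ˢ (decompose 𝒜 y).support).filter
      (fun ij : Γ × Γ => ij.1 + ij.2 = γ₀ + δ₀)) = {(γ₀, δ₀)} := by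
    ext ⟨a, c⟩
    simp only [Finset.mem_filter, Finset.mem_product, Finset.mem_singleton, Prod.mk.injEq]
    constructor
    · rintro ⟨⟨ha, hc⟩, hac⟩
      have hsum : f a + f c = f γ₀ + f δ₀ := hf a ha γ₀ hγ₀ c hc δ₀ hδ₀ hac
      have h1 : f γ₀ ≤ f a := by
        have : f γ₀ + f δ₀ ≤ f a + f δ₀ := by
          calc f γ₀ + f δ₀ = f a + f c := hsum.symm
          _ ≤ f a + f δ₀ := add_le_add le_rfl (hmax₂ c hc)
        exact le_of_add_le_add_right this
      have ha' : a = γ₀ := hinj a ha γ₀ hγ₀ (le_antisymm (hmax₁ a ha) h1)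
      subst ha'
      exact ⟨rfl, add_left_cancel hac⟩
    · rintro ⟨rfl, rfl⟩
      exact ⟨⟨hγ₀, hδ₀⟩, rfl⟩
  rw [hset, Finset.sum_singleton]

/-- let `Γ` be a torsion-free abelian group and `E` a `Γ`-graded
division ring.  Then every unit of `E` is homogeneous (`E* = E_h*`), and `E` has no
zero divisors. -/
theorem units_homogeneous_of_torsionFree {Γ E : Type*} [AddCommGroup Γ] [DecidableEq Γ]
    [Ring E] [Nontrivial E] (𝒜 : Γ → AddSubgroup E) [GradedRing 𝒜]
    (hdiv : ∀ (γ : Γ) (x : E), x ∈ 𝒜 γ → x ≠ 0 → IsUnit x)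
    -- `Γ` is torsion-free
    (htf : ∀ (γ : Γ) (m : ℕ), m ≠ 0 → m • γ = 0 → γ = 0) :
    (∀ u : Eˣ, ∃ γ : Γ, u.val ∈ 𝒜 γ) ∧
    (∀ x y : E, x * y = 0 → x = 0 ∨ y = 0) := by
  classical
  -- a helper: a unit times a nonzero element is nonzero, etc.
  have hmulne : ∀ (γ δ : Γ) (a b : E), a ∈ 𝒜 γ → a ≠ 0 → b ≠ 0 → a * b ≠ 0 := by
    intro γ δ a b ha ha0 hb0 hab
    obtain ⟨u, rfl⟩ := hdiv γ a ha ha0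
    have : b = ↑u⁻¹ * (↑u * b) := by rw [← mul_assoc, Units.inv_mul, one_mul]
    rw [hab, mul_zero] at this
    exact hb0 this
  -- the general extremal-component fact for two nonzero elements
  have main : ∀ x y : E, x ≠ 0 → y ≠ 0 →
      ∃ (f : Γ → Lex (ℕ →₀ ℤ)) (γmax γmin δmax δmin : Γ),
        γmax ∈ (decompose 𝒜 x).support ∧ γmin ∈ (decompose 𝒜 x).support ∧
        δmax ∈ (decompose 𝒜 y).support ∧ δmin ∈ (decompose 𝒜 y).support ∧
        (∀ γ ∈ (decompose 𝒜 x).support, f γ ≤ f γmax) ∧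
        (∀ γ ∈ (decompose 𝒜 x).support, f γmin ≤ f γ) ∧
        (∀ δ ∈ (decompose 𝒜 y).support, f δ ≤ f δmax) ∧
        (∀ δ ∈ (decompose 𝒜 y).support, f δmin ≤ f δ) ∧
        (∀ a ∈ (decompose 𝒜 x).support, ∀ a' ∈ (decompose 𝒜 x).support, f a = f a' → a = a') ∧
        (decompose 𝒜 (x * y) (γmax + δmax) : E) ≠ 0 ∧
        (decompose 𝒜 (x * y) (γmin + δmin) : E) ≠ 0 ∧
        (∀ a ∈ (decompose 𝒜 x).support, ∀ b ∈ (decompose 𝒜 y).support,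
          ∀ a' ∈ (decompose 𝒜 x).support, ∀ b' ∈ (decompose 𝒜 y).support,
          a + b = a' + b' → f a + f b = f a' + f b') := by
    intro x y hx hy
    set Sx := (decompose 𝒜 x).support with hSx
    set Sy := (decompose 𝒜 y).support with hSy
    obtain ⟨f, hfadd, hfinj⟩ := exists_ordfun htf (Sx ∪ Sy)
    have hmem : ∀ γ ∈ Sx ∪ Sy, γ ∈ Submodule.span ℤ ((↑(Sx ∪ Sy)) : Set Γ) :=
      fun γ hγ => Submodule.subset_span hγ
    have hSxne : Sx.Nonempty := by
      rw [Finset.nonempty_iff_ne_empty]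
      intro h
      apply hx
      have := DirectSum.sum_support_decompose 𝒜 x
      rw [← hSx, h, Finset.sum_empty] at this
      exact this.symm
    have hSyne : Sy.Nonempty := by
      rw [Finset.nonempty_iff_ne_empty]
      intro h
      apply hy
      have := DirectSum.sum_support_decompose 𝒜 y
      rw [← hSy, h, Finset.sum_empty] at this
      exact this.symm
    obtain ⟨γmax, hγmax, hγmaxs⟩ := Sx.exists_max_image f hSxne
    obtain ⟨γmin, hγmin, hγmins⟩ := Sx.exists_min_image f hSxne
    obtain ⟨δmax, hδmax, hδmaxs⟩ := Sy.exists_max_image f hSyne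
    obtain ⟨δmin, hδmin, hδmins⟩ := Sy.exists_min_image f hSyne
    have hf : ∀ a ∈ Sx, ∀ b ∈ Sy, ∀ a' ∈ Sx, ∀ b' ∈ Sy,
        a + b = a' + b' → f a + f b = f a' + f b' := by
      intro a ha b hb a' ha' b' hb' h
      have h1 := hfadd a (hmem a (Finset.mem_union_left _ ha))
        b (hmem b (Finset.mem_union_right _ hb))
      have h2 := hfadd a' (hmem a' (Finset.mem_union_left _ ha'))
        b' (hmem b' (Finset.mem_union_right _ hb'))
      rw [← h1, ← h2, h]
    have hinj : ∀ a ∈ Sx, ∀ a' ∈ Sx, f a = f a' → a = a' := by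
      intro a ha a' ha' h
      exact hfinj a (hmem a (Finset.mem_union_left _ ha))
        a' (hmem a' (Finset.mem_union_left _ ha')) h
    have hfneg : ∀ a ∈ Sx, ∀ a' ∈ Sx, ∀ b ∈ Sy, ∀ b' ∈ Sy,
        a + b = a' + b' → (-f a) + (-f b) = (-f a') + (-f b') := by
      intro a ha a' ha' b hb b' hb' h
      have := hf a ha b hb a' ha' b' hb' h
      rw [← neg_add, ← neg_add, this]
    have hcmax : (decompose 𝒜 (x * y) (γmax + δmax) : E)
        = (decompose 𝒜 x γmax : E) * (decompose 𝒜 y δmax : E) :=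
      aux_mul_comp 𝒜 x y f (fun a ha a' ha' b hb b' hb' h => hf a ha b hb a' ha' b' hb' h)
        hinj γmax hγmax δmax hδmax hγmaxs hδmaxs
    have hcmin : (decompose 𝒜 (x * y) (γmin + δmin) : E)
        = (decompose 𝒜 x γmin : E) * (decompose 𝒜 y δmin : E) :=
      aux_mul_comp 𝒜 x y (fun γ => -f γ) hfneg
        (fun a ha a' ha' h => hinj a ha a' ha' (by simpa using neg_injective h))
        γmin hγmin δmin hδmin
        (fun γ hγ => neg_le_neg (hγmins γ hγ))
        (fun δ hδ => neg_le_neg (hδmins δ hδ))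
    have hxne : (decompose 𝒜 x γmax : E) ≠ 0 := by
      simpa using (DFinsupp.mem_support_iff.mp hγmax)
    have hxne' : (decompose 𝒜 x γmin : E) ≠ 0 := by
      simpa using (DFinsupp.mem_support_iff.mp hγmin)
    have hyne : (decompose 𝒜 y δmax : E) ≠ 0 := by
      simpa using (DFinsupp.mem_support_iff.mp hδmax)
    have hyne' : (decompose 𝒜 y δmin : E) ≠ 0 := by
      simpa using (DFinsupp.mem_support_iff.mp hδmin)
    refine ⟨f, γmax, γmin, δmax, δmin, hγmax, hγmin, hδmax, hδmin, hγmaxs, hγmins,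
      hδmaxs, hδmins, hinj, ?_, ?_, hf⟩
    · rw [hcmax]
      exact hmulne γmax δmax _ _ (decompose 𝒜 x γmax).2 hxne hyne
    · rw [hcmin]
      exact hmulne γmin δmin _ _ (decompose 𝒜 x γmin).2 hxne' hyne'
  constructor
  · -- units are homogeneous
    intro u
    have hu : u.val ≠ 0 := by
      intro h
      have : (1 : E) = 0 := by rw [← u.mul_inv, h, zero_mul]
      exact one_ne_zero this
    have hv : (↑u⁻¹ : E) ≠ 0 := by
      intro h
      have : (1 : E) = 0 := by rw [← u.inv_mul, h, zero_mul]
      exact one_ne_zero this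
    obtain ⟨f, γmax, γmin, δmax, δmin, hγmax, hγmin, hδmax, hδmin, hγmaxs, hγmins,
      hδmaxs, hδmins, hinj, hne1, hne2, hf⟩ := main u.val (↑u⁻¹ : E) hu hv
    have huv : u.val * (↑u⁻¹ : E) = 1 := u.mul_inv
    rw [huv] at hne1 hne2
    have hone : (1 : E) ∈ 𝒜 0 := SetLike.one_mem_graded 𝒜
    have hzmax : γmax + δmax = 0 := by
      by_contra h
      exact hne1 (by rw [DirectSum.decompose_of_mem_ne 𝒜 hone (Ne.symm h)])
    have hzmin : γmin + δmin = 0 := by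
      by_contra h
      exact hne2 (by rw [DirectSum.decompose_of_mem_ne 𝒜 hone (Ne.symm h)])
    -- f γmax = f γmin
    have hsum : f γmax + f δmax = f γmin + f δmin :=
      hf γmax hγmax δmax hδmax γmin hγmin δmin hδmin (by rw [hzmax, hzmin])
    have hle1 : f γmin ≤ f γmax := hγmins γmax hγmax
    have hle2 : f δmin ≤ f δmax := hδmins δmax hδmax
    have heq : f γmax = f γmin := by
      have h1 : f γmax + f δmax ≤ f γmax + f δmax := le_refl _
      have : f γmin + f δmin ≤ f γmin + f δmax := add_le_add le_rfl hle2
      rw [← hsum] at this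
      have h2 : f γmax ≤ f γmin := le_of_add_le_add_right this
      exact le_antisymm h2 hle1
    -- hence the support of u is a singleton
    have hsing : ∀ γ ∈ (decompose 𝒜 u.val).support, γ = γmax := by
      intro γ hγ
      apply hinj γ hγ γmax hγmax
      exact le_antisymm (hγmaxs γ hγ) (heq ▸ hγmins γ hγ)
    refine ⟨γmax, ?_⟩
    have hx := DirectSum.sum_support_decompose 𝒜 u.val
    have hsub : (decompose 𝒜 u.val).support ⊆ {γmax} := fun γ hγ =>
      Finset.mem_singleton.mpr (hsing γ hγ)
    have : u.val = ∑ γ ∈ (decompose 𝒜 u.val).support, (decompose 𝒜 u.val γ : E) := hx.symm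
    rw [this]
    apply AddSubgroup.sum_mem
    intro γ hγ
    rw [hsing γ hγ]
    exact (decompose 𝒜 u.val γmax).2
  · -- no zero divisors
    intro x y hxy
    by_contra h
    push_neg at h
    obtain ⟨hx, hy⟩ := h
    obtain ⟨f, γmax, γmin, δmax, δmin, hγmax, hγmin, hδmax, hδmin, _, _, _, _, _,
      hne1, _, _⟩ := main x y hx hy
    rw [hxy] at hne1
    exact hne1 (by rw [DirectSum.decompose_zero]; rfl)
end
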